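/- arXiv:2310.08978 — 6 statements merged into one kernel-verified Lean document; each statement's English description precedes it below -/
import Mathlib

section
/- The number of partitions of n in which every part appears with multiplicity at least 2 equals the number of partitions of n into parts that are even or congruent to 3 modulo 6. -/
open PowerSeries
namespace MacMahonAux

noncomputable section

variable {α : Type*}

open Finset

open scoped Classical

/-- The partial product for the generating function for odd partitions.
TODO: As `m` tends to infinity, this converges (in the `X`-adic topology).

If `m` is sufficiently large, the `i`th coefficient gives the number of odd partitions of the
natural number `i`: proved in `oddGF_prop`.
It is stated for an arbitrary field `α`, though it usually suffices to use `ℚ` or `ℝ`.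
-/
def partialOddGF (m : ℕ) [Field α] :=
  ∏ i ∈ range m, (1 - (X : PowerSeries α) ^ (2 * i + 1))⁻¹

/-- The partial product for the generating function for distinct partitions.
TODO: As `m` tends to infinity, this converges (in the `X`-adic topology).

If `m` is sufficiently large, the `i`th coefficient gives the number of distinct partitions of the
natural number `i`: proved in `distinctGF_prop`.
It is stated for an arbitrary commutative semiring `α`, though it usually suffices to use `ℕ`, `ℚ`
or `ℝ`.
-/
def partialDistinctGF (m : ℕ) [CommSemiring α] :=
  ∏ i ∈ range m, (1 + (X : PowerSeries α) ^ (i + 1))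

open Finset.HasAntidiagonal

universe u
variable {ι : Type u}

/-- A convenience constructor for the power series whose coefficients indicate a subset. -/
def indicatorSeries (α : Type*) [Semiring α] (s : Set ℕ) : PowerSeries α :=
  PowerSeries.mk fun n => if n ∈ s then 1 else 0

theorem coeff_indicator (s : Set ℕ) [Semiring α] (n : ℕ) :
    coeff n (indicatorSeries α s) = if n ∈ s then 1 else 0 :=
  coeff_mk _ _

theorem coeff_indicator_pos (s : Set ℕ) [Semiring α] (n : ℕ) (h : n ∈ s) :
    coeff n (indicatorSeries α s) = 1 := by rw [coeff_indicator, if_pos h]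

theorem coeff_indicator_neg (s : Set ℕ) [Semiring α] (n : ℕ) (h : n ∉ s) :
    coeff n (indicatorSeries α s) = 0 := by rw [coeff_indicator, if_neg h]

theorem constantCoeff_indicator (s : Set ℕ) [Semiring α] :
    constantCoeff (indicatorSeries α s) = if 0 ∈ s then 1 else 0 :=
  rfl

theorem two_series (i : ℕ) [Semiring α] :
    1 + (X : PowerSeries α) ^ i.succ = indicatorSeries α {0, i.succ} := by
  ext n
  simp only [coeff_indicator, coeff_one, coeff_X_pow, Set.mem_insert_iff, Set.mem_singleton_iff,
    map_add]
  cases' n with d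
  · simp [(Nat.succ_ne_zero i).symm]
  · simp [Nat.succ_ne_zero d]

theorem num_series' [Field α] (i : ℕ) :
    (1 - (X : PowerSeries α) ^ (i + 1))⁻¹ = indicatorSeries α {k | i + 1 ∣ k} := by
  rw [PowerSeries.inv_eq_iff_mul_eq_one]
  · ext n
    cases n with
    | zero => simp [mul_sub, zero_pow, constantCoeff_indicator]
    | succ n =>
      simp only [coeff_one, if_false, mul_sub, mul_one, coeff_indicator,
        LinearMap.map_sub, reduceCtorEq]
      simp_rw [coeff_mul, coeff_X_pow, coeff_indicator, @boole_mul _ _ _ _]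
      simp only [Set.mem_setOf_eq]; rw [sum_ite, sum_ite]
      simp_rw [@filter_filter _ _ _ _ _, sum_const_zero, add_zero, sum_const, nsmul_eq_mul, mul_one,
        sub_eq_iff_eq_add, zero_add]
      symm
      split_ifs with h
      · suffices #{a ∈ antidiagonal (n + 1) | i + 1 ∣ a.fst ∧ a.snd = i + 1} = 1 by
          convert congr_arg ((↑) : ℕ → α) this; norm_cast
        rw [card_eq_one]
        cases' h with p hp
        refine ⟨((i + 1) * (p - 1), i + 1), ?_⟩
        ext ⟨a₁, a₂⟩
        simp only [mem_filter, Prod.mk.injEq, Finset.HasAntidiagonal.mem_antidiagonal, mem_singleton]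
        constructor
        · rintro ⟨a_left, ⟨a, rfl⟩, rfl⟩
          refine ⟨?_, rfl⟩
          rw [Nat.mul_sub_left_distrib, ← hp, ← a_left, mul_one, Nat.add_sub_cancel]
        · rintro ⟨rfl, rfl⟩
          match p with
          | 0 => rw [mul_zero] at hp; cases hp
          | p + 1 => rw [hp]; simp [mul_add]
      · suffices #{a ∈ antidiagonal (n + 1) | i + 1 ∣ a.fst ∧ a.snd = i + 1} = 0 by
          convert congr_arg ((↑) : ℕ → α) this; norm_cast
        rw [card_eq_zero]
        apply eq_empty_of_forall_notMem
        simp only [Prod.forall, mem_filter, not_and, Finset.HasAntidiagonal.mem_antidiagonal]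
        rintro _ h₁ h₂ ⟨a, rfl⟩ rfl
        apply h
        simp [← h₂]
  · simp [zero_pow]

def mkOdd : ℕ ↪ ℕ :=
  ⟨fun i => 2 * i + 1, fun x y h => by linarith⟩

-- The main workhorse of the partition theorem proof.
theorem partialGF_prop (α : Type*) [CommSemiring α] (n : ℕ) (s : Finset ℕ) (hs : ∀ i ∈ s, 0 < i)
    (c : ℕ → Set ℕ) (hc : ∀ i, i ∉ s → 0 ∈ c i) :
    #{p : n.Partition | (∀ j, p.parts.count j ∈ c j) ∧ ∀ j ∈ p.parts, j ∈ s} =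
      coeff n (∏ i ∈ s, indicatorSeries α ((· * i) '' c i)) := by
  simp_rw [coeff_prod, coeff_indicator, prod_boole, sum_boole]
  apply congr_arg
  simp only [mem_univ, forall_true_left, not_and, not_forall, exists_prop,
    Set.mem_image, not_exists]
  set φ : (a : Nat.Partition n) →
    a ∈ filter (fun p ↦ (∀ (j : ℕ), Multiset.count j p.parts ∈ c j) ∧ ∀ j ∈ p.parts, j ∈ s) univ →
    ℕ →₀ ℕ := fun p _ => {
      toFun := fun i => Multiset.count i p.parts • i
      support := Finset.filter (fun i => i ≠ 0) p.parts.toFinset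
      mem_support_toFun := fun a => by
        simp only [smul_eq_mul, ne_eq, mul_eq_zero, Multiset.count_eq_zero]
        rw [not_or, not_not]
        simp only [Multiset.mem_toFinset, not_not, mem_filter] }
  refine Finset.card_bij φ ?_ ?_ ?_
  · intro a ha
    simp only [φ, not_forall, not_exists, not_and, exists_prop, mem_filter]
    rw [mem_finsuppAntidiag]
    dsimp only [ne_eq, smul_eq_mul, id_eq, eq_mpr_eq_cast, le_eq_subset, Finsupp.coe_mk]
    simp only [mem_univ, forall_true_left, not_and, not_forall, exists_prop,
      mem_filter, true_and] at ha
    refine ⟨⟨?_, fun i ↦ ?_⟩, fun i _ ↦ ⟨a.parts.count i, ha.1 i, rfl⟩⟩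
    · conv_rhs => simp [← a.parts_sum]
      rw [sum_multiset_count_of_subset _ s]
      · simp only [smul_eq_mul]
      · intro i
        simp only [Multiset.mem_toFinset, not_not, mem_filter]
        apply ha.2
    · simp only [ne_eq, Multiset.mem_toFinset, not_not, mem_filter, and_imp]
      exact fun hi _ ↦ ha.2 i hi
  · intro p₁ hp₁ p₂ hp₂ h
    apply Nat.Partition.ext
    simp only [true_and, mem_univ, mem_filter] at hp₁ hp₂
    ext i
    simp only [φ, ne_eq, Multiset.mem_toFinset, not_not, smul_eq_mul, Finsupp.mk.injEq] at h
    by_cases hi : i = 0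
    · rw [hi]
      rw [Multiset.count_eq_zero_of_notMem]
      · rw [Multiset.count_eq_zero_of_notMem]
        intro a; exact Nat.lt_irrefl 0 (hs 0 (hp₂.2 0 a))
      intro a; exact Nat.lt_irrefl 0 (hs 0 (hp₁.2 0 a))
    · rw [← mul_left_inj' hi]
      rw [funext_iff] at h
      exact h.2 i
  · simp only [φ, mem_filter, mem_finsuppAntidiag, mem_univ, exists_prop, true_and, and_assoc]
    rintro f ⟨hf, hf₃, hf₄⟩
    have hf' : f ∈ finsuppAntidiag s n := mem_finsuppAntidiag.mpr ⟨hf, hf₃⟩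
    simp only [mem_finsuppAntidiag] at hf'
    refine ⟨⟨∑ i ∈ s, Multiset.replicate (f i / i) i, ?_, ?_⟩, ?_, ?_, ?_⟩
    · intro i hi
      simp only [exists_prop, Multiset.mem_sum, mem_map, Function.Embedding.coeFn_mk] at hi
      rcases hi with ⟨t, ht, z⟩
      apply hs
      rwa [Multiset.eq_of_mem_replicate z]
    · simp_rw [Multiset.sum_sum, Multiset.sum_replicate, Nat.nsmul_eq_mul]
      rw [← hf'.1]
      refine sum_congr rfl fun i hi => Nat.div_mul_cancel ?_
      rcases hf₄ i hi with ⟨w, _, hw₂⟩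
      rw [← hw₂]
      exact dvd_mul_left _ _
    · intro i
      simp_rw [Multiset.count_sum', Multiset.count_replicate, sum_ite_eq']
      split_ifs with h
      · rcases hf₄ i h with ⟨w, hw₁, hw₂⟩
        rwa [← hw₂, Nat.mul_div_cancel _ (hs i h)]
      · exact hc _ h
    · intro i hi
      rw [Multiset.mem_sum] at hi
      rcases hi with ⟨j, hj₁, hj₂⟩
      rwa [Multiset.eq_of_mem_replicate hj₂]
    · ext i
      simp_rw [Multiset.count_sum', Multiset.count_replicate, sum_ite_eq']
      simp only [ne_eq, Multiset.mem_toFinset, not_not, smul_eq_mul, ite_mul,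
        zero_mul, Finsupp.coe_mk]
      split_ifs with h
      · apply Nat.div_mul_cancel
        rcases hf₄ i h with ⟨w, _, hw₂⟩
        apply Dvd.intro_left _ hw₂
      · apply symm
        rw [← Finsupp.notMem_support_iff]
        exact fun hh => h (hf'.2 hh)


theorem same_gf' [Field α] (Y : PowerSeries α) (hY : constantCoeff Y = 0) (m : ℕ) :
    ((∏ i ∈ range m, (1 - Y ^ (2 * i + 1))⁻¹) * ∏ i ∈ range m, (1 - Y ^ (m + i + 1))) =
      ∏ i ∈ range m, (1 + Y ^ (i + 1)) := by
  induction' m with m ih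
  · simp
  set! π₀ : PowerSeries α := ∏ i ∈ range m, (1 - Y ^ (m + 1 + i + 1)) with hπ₀
  set! π₁ : PowerSeries α := ∏ i ∈ range m, (1 - Y ^ (2 * i + 1))⁻¹ with hπ₁
  set! π₂ : PowerSeries α := ∏ i ∈ range m, (1 - Y ^ (m + i + 1)) with hπ₂
  set! π₃ : PowerSeries α := ∏ i ∈ range m, (1 + Y ^ (i + 1)) with hπ₃
  rw [← hπ₃] at ih
  have h : constantCoeff (1 - Y ^ (2 * m + 1)) ≠ 0 := by
    rw [RingHom.map_sub, RingHom.map_pow, constantCoeff_one, hY,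
      zero_pow (2 * m).succ_ne_zero, sub_zero]
    exact one_ne_zero
  calc
    (∏ i ∈ range (m + 1), (1 - Y ^ (2 * i + 1))⁻¹) *
          ∏ i ∈ range (m + 1), (1 - Y ^ (m + 1 + i + 1)) =
        π₁ * (1 - Y ^ (2 * m + 1))⁻¹ * (π₀ * (1 - Y ^ (m + 1 + m + 1))) := by
      rw [prod_range_succ _ m, ← hπ₁, prod_range_succ _ m, ← hπ₀]
    _ = π₁ * (1 - Y ^ (2 * m + 1))⁻¹ * (π₀ * ((1 + Y ^ (m + 1)) * (1 - Y ^ (m + 1)))) := by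
      rw [← sq_sub_sq, one_pow, add_assoc _ m 1, ← two_mul (m + 1), pow_mul']
    _ = π₀ * (1 - Y ^ (m + 1)) * (1 - Y ^ (2 * m + 1))⁻¹ * (π₁ * (1 + Y ^ (m + 1))) := by ring
    _ =
        (∏ i ∈ range (m + 1), (1 - Y ^ (m + 1 + i))) * (1 - Y ^ (2 * m + 1))⁻¹ *
          (π₁ * (1 + Y ^ (m + 1))) := by
      rw [prod_range_succ', add_zero, hπ₀]; simp_rw [← add_assoc]
    _ = π₂ * (1 - Y ^ (m + 1 + m)) * (1 - Y ^ (2 * m + 1))⁻¹ * (π₁ * (1 + Y ^ (m + 1))) := by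
      rw [add_right_comm, hπ₂, ← prod_range_succ]; simp_rw [add_right_comm]
    _ = π₂ * (1 - Y ^ (2 * m + 1)) * (1 - Y ^ (2 * m + 1))⁻¹ * (π₁ * (1 + Y ^ (m + 1))) := by
      rw [two_mul, add_right_comm _ m 1]
    _ = (1 - Y ^ (2 * m + 1)) * (1 - Y ^ (2 * m + 1))⁻¹ * π₂ * (π₁ * (1 + Y ^ (m + 1))) := by
      ring
    _ = π₂ * (π₁ * (1 + Y ^ (m + 1))) := by rw [PowerSeries.mul_inv_cancel _ h, one_mul]
    _ = π₁ * π₂ * (1 + Y ^ (m + 1)) := by ring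
    _ = π₃ * (1 + Y ^ (m + 1)) := by rw [ih]
    _ = _ := by rw [prod_range_succ]

theorem num_series'' [Field α] (e : ℕ) (he : e ≠ 0) :
    (1 - (X : PowerSeries α) ^ e)⁻¹ = indicatorSeries α {k | e ∣ k} := by
  obtain ⟨i, rfl⟩ := Nat.exists_eq_succ_of_ne_zero he
  exact num_series' i

theorem factorP [Field α] (j : ℕ) (hj : j ≠ 0) :
    indicatorSeries α ((· * j) '' {t | t ≠ 1}) =
      (1 + (X : PowerSeries α) ^ (3 * j)) * (1 - X ^ (2 * j))⁻¹ := by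
  have h2 : 2 * j ≠ 0 := by positivity
  rw [num_series'' (2 * j) h2]
  ext n
  rw [add_mul, one_mul, map_add, coeff_indicator, coeff_X_pow_mul', coeff_indicator,
    coeff_indicator]
  have key2 : ¬(2 * j ∣ n ∧ (3 * j ≤ n ∧ 2 * j ∣ n - 3 * j)) := by
    rintro ⟨hd2, hle, hd4⟩
    have h4 : 2 * j ∣ 3 * j := by
      have := Nat.dvd_sub hd2 hd4
      rwa [Nat.sub_sub_self hle] at this
    have h5 : 2 * j ∣ j := by
      have := Nat.dvd_sub h4 (dvd_refl (2 * j))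
      rwa [show 3 * j - 2 * j = j by omega] at this
    have := Nat.le_of_dvd (Nat.pos_of_ne_zero hj) h5
    omega
  have key1 : (∃ x, ¬x = 1 ∧ x * j = n) ↔ (2 * j ∣ n ∨ (3 * j ≤ n ∧ 2 * j ∣ n - 3 * j)) := by
    constructor
    · rintro ⟨t, ht, rfl⟩
      rcases Nat.even_or_odd t with ⟨a, rfl⟩ | ⟨a, rfl⟩
      · exact Or.inl ⟨a, by ring⟩
      · have ha : 1 ≤ a := by omega
        obtain ⟨a', rfl⟩ : ∃ a', a = a' + 1 := ⟨a - 1, by omega⟩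
        refine Or.inr ⟨by nlinarith, ⟨a', ?_⟩⟩
        have : (2 * (a' + 1) + 1) * j = 2 * j * a' + 3 * j := by ring
        rw [this, Nat.add_sub_cancel]
    · rintro (⟨a, rfl⟩ | ⟨h3, a, ha⟩)
      · exact ⟨2 * a, by omega, by ring⟩
      · refine ⟨2 * a + 3, by omega, ?_⟩
        set K := 2 * j * a with hK
        have hn : n = K + 3 * j := by omega
        rw [hn, hK]; ring
  simp only [Set.mem_image, Set.mem_setOf_eq]
  by_cases hB : 2 * j ∣ n
  · have hA : ∃ x, ¬x = 1 ∧ x * j = n := key1.mpr (Or.inl hB)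
    by_cases hC : 3 * j ≤ n
    · have hD : ¬2 * j ∣ n - 3 * j := fun hd => key2 ⟨hB, hC, hd⟩
      simp [hA, hB, hC, hD]
    · simp [hA, hB, hC]
  · by_cases hC : 3 * j ≤ n
    · by_cases hD : 2 * j ∣ n - 3 * j
      · have hA : ∃ x, ¬x = 1 ∧ x * j = n := key1.mpr (Or.inr ⟨hC, hD⟩)
        simp [hA, hB, hC, hD]
      · have hA : ¬∃ x, ¬x = 1 ∧ x * j = n := fun h => by
          rcases key1.mp h with h' | ⟨hh1, hh2⟩ <;> tauto
        simp [hA, hB, hC, hD]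
    · have hA : ¬∃ x, ¬x = 1 ∧ x * j = n := fun h => by
        rcases key1.mp h with h' | ⟨hh1, hh2⟩ <;> tauto
      simp [hA, hB, hC]

theorem factorQ [Field α] (b : ℕ) (hb : b ≠ 0) :
    indicatorSeries α ((· * b) '' Set.univ) = (1 - (X : PowerSeries α) ^ b)⁻¹ := by
  have hset : ((· * b) '' Set.univ) = {k | b ∣ k} := by
    ext k
    constructor
    · rintro ⟨t, -, rfl⟩
      exact Dvd.intro_left t rfl
    · rintro ⟨c, rfl⟩
      exact ⟨c, trivial, (mul_comm c b : c * b = b * c)⟩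
  rw [hset, num_series'' b hb]

theorem parts_le {n : ℕ} (p : Nat.Partition n) {j : ℕ} (hj : j ∈ p.parts) : j ≤ n := by
  simpa [p.parts_sum] using Multiset.single_le_sum (fun _ _ => Nat.zero_le _) _ hj

theorem partialGF_prop' (α : Type*) [CommSemiring α] (n : ℕ) (s : Finset ℕ)
    (hs : ∀ i ∈ s, 0 < i) (c : ℕ → Set ℕ) (hc : ∀ i, i ∉ s → 0 ∈ c i) :
    ((Finset.univ.filter fun p : Nat.Partition n =>
        (∀ j, p.parts.count j ∈ c j) ∧ ∀ j ∈ p.parts, j ∈ s).card : α) =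
      coeff n (∏ i ∈ s, indicatorSeries α ((· * i) '' c i)) := by
  rw [← partialGF_prop α n s hs c hc]

end
end MacMahonAux

open scoped Classical

/-- Number of partitions of `n` whose part multiplicities all lie in `A`. -/
noncomputable def partP (A : Set ℕ) (n : ℕ) : ℕ :=
  (Finset.univ.filter (fun p : Nat.Partition n =>
    ∀ i ∈ p.parts, Multiset.count i p.parts ∈ A)).card

/-- Number of partitions of `n` whose parts all lie in `B`. -/
noncomputable def partQ (B : Set ℕ) (n : ℕ) : ℕ :=
  (Finset.univ.filter (fun p : Nat.Partition n => ∀ i ∈ p.parts, i ∈ B)).card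

set_option maxHeartbeats 1000000 in
open Finset PowerSeries MacMahonAux in
/-- MacMahon: every part repeated at least twice vs parts even or ≡ 3 mod 6. -/
theorem macmahon (n : ℕ) :
    partP {t | 2 ≤ t} n = partQ {b | 2 ∣ b ∨ b % 6 = 3} n := by
  suffices h : (partP {t | 2 ≤ t} n : ℚ) = (partQ {b | 2 ∣ b ∨ b % 6 = 3} n : ℚ) by
    exact_mod_cast h
  set m := n + 1 with hm
  set s₁ : Finset ℕ := (range m).map ⟨Nat.succ, Nat.succ_injective⟩ with hs₁
  set sE : Finset ℕ :=
    (range m).map ⟨fun i => 2 * (i + 1), show Function.Injective _ from fun a b h => by omega⟩ with hsE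
  set sO : Finset ℕ :=
    (range m).map ⟨fun i => 3 * (2 * i + 1), show Function.Injective _ from fun a b h => by omega⟩ with hsO
  have hdisj : Disjoint sE sO := by
    rw [Finset.disjoint_left]
    rintro x hx1 hx2
    rw [hsE] at hx1; rw [hsO] at hx2
    simp only [mem_map, mem_range, Function.Embedding.coeFn_mk] at hx1 hx2
    obtain ⟨a, -, ha⟩ := hx1
    obtain ⟨b, -, hb⟩ := hx2
    omega
  have hs₁pos : ∀ i ∈ s₁, 0 < i := by
    rintro i hi
    rw [hs₁] at hi
    simp only [mem_map, mem_range, Function.Embedding.coeFn_mk] at hi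
    obtain ⟨a, -, rfl⟩ := hi
    exact Nat.succ_pos a
  have hs₂pos : ∀ i ∈ sE ∪ sO, 0 < i := by
    rintro i hi
    rcases mem_union.mp hi with h | h
    · rw [hsE] at h
      simp only [mem_map, mem_range, Function.Embedding.coeFn_mk] at h
      obtain ⟨a, -, rfl⟩ := h; omega
    · rw [hsO] at h
      simp only [mem_map, mem_range, Function.Embedding.coeFn_mk] at h
      obtain ⟨a, -, rfl⟩ := h; omega
  have hP := partialGF_prop' ℚ n s₁ hs₁pos (fun _ => {t | t ≠ 1}) (fun i _ => by simp)
  have hQ := partialGF_prop' ℚ n (sE ∪ sO) hs₂pos (fun _ => Set.univ) (fun i _ => trivial)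
  have hP' : (partP {t | 2 ≤ t} n : ℚ)
      = coeff n (∏ i ∈ s₁, indicatorSeries ℚ ((· * i) '' {t | t ≠ 1})) := by
    rw [← hP]
    norm_cast
    unfold partP
    refine congrArg Finset.card ?_
    ext p
    simp only [Finset.mem_filter, Finset.mem_univ, true_and, Set.mem_setOf_eq]
    constructor
    · intro h
      refine ⟨fun j => ?_, fun j hj => ?_⟩
      · by_cases hjp : j ∈ p.parts
        · have := h j hjp; omega
        · rw [Multiset.count_eq_zero_of_notMem hjp]; omega
      · have h1 : j ≠ 0 := (p.parts_pos hj).ne'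
        have h2 : j ≤ n := parts_le p hj
        rw [hs₁]
        simp only [mem_map, mem_range, Function.Embedding.coeFn_mk]
        exact ⟨j - 1, by omega, by omega⟩
    · rintro ⟨h1, h2⟩ i hi
      have := h1 i
      have hpos : 0 < Multiset.count i p.parts := Multiset.count_pos.mpr hi
      omega
  have hQ' : (partQ {b | 2 ∣ b ∨ b % 6 = 3} n : ℚ)
      = coeff n (∏ i ∈ sE ∪ sO, indicatorSeries ℚ ((· * i) '' Set.univ)) := by
    rw [← hQ]
    norm_cast
    unfold partQ
    refine congrArg Finset.card ?_
    ext p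
    simp only [Finset.mem_filter, Finset.mem_univ, true_and, Set.mem_setOf_eq]
    constructor
    · intro h
      refine ⟨fun j => Set.mem_univ _, fun j hj => ?_⟩
      have h0 : j ≠ 0 := (p.parts_pos hj).ne'
      have hn : j ≤ n := parts_le p hj
      rcases h j hj with ⟨a, rfl⟩ | h3
      · apply mem_union_left
        rw [hsE]
        simp only [mem_map, mem_range, Function.Embedding.coeFn_mk]
        exact ⟨a - 1, by omega, by omega⟩
      · apply mem_union_right
        rw [hsO]
        simp only [mem_map, mem_range, Function.Embedding.coeFn_mk]
        exact ⟨j / 6, by omega, by omega⟩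
    · rintro ⟨-, h2⟩ i hi
      rcases mem_union.mp (h2 i hi) with hE | hO
      · rw [hsE] at hE
        simp only [mem_map, mem_range, Function.Embedding.coeFn_mk] at hE
        obtain ⟨a, -, rfl⟩ := hE
        exact Or.inl ⟨a + 1, rfl⟩
      · rw [hsO] at hO
        simp only [mem_map, mem_range, Function.Embedding.coeFn_mk] at hO
        obtain ⟨a, -, rfl⟩ := hO
        exact Or.inr (by omega)
  have eP : ∏ i ∈ s₁, indicatorSeries ℚ ((· * i) '' {t | t ≠ 1})
      = (∏ i ∈ range m, (1 + X ^ (3 * (i + 1)))) *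
        ∏ i ∈ range m, (1 - (X : PowerSeries ℚ) ^ (2 * (i + 1)))⁻¹ := by
    rw [hs₁, Finset.prod_map, ← Finset.prod_mul_distrib]
    refine Finset.prod_congr rfl fun i _ => ?_
    simpa [Nat.succ_eq_add_one] using factorP (α := ℚ) (i + 1) i.succ_ne_zero
  have eQ : ∏ i ∈ sE ∪ sO, indicatorSeries ℚ ((· * i) '' Set.univ)
      = (∏ i ∈ range m, (1 - (X : PowerSeries ℚ) ^ (2 * (i + 1)))⁻¹) *
        ∏ i ∈ range m, (1 - X ^ (3 * (2 * i + 1)))⁻¹ := by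
    rw [Finset.prod_union hdisj, hsE, hsO, Finset.prod_map, Finset.prod_map]
    congr 1
    · exact Finset.prod_congr rfl fun i _ => by
        simpa using factorQ (α := ℚ) (2 * (i + 1)) (by omega)
    · exact Finset.prod_congr rfl fun i _ => by
        simpa using factorQ (α := ℚ) (3 * (2 * i + 1)) (by omega)
  have hsame := same_gf' (X ^ 3 : PowerSeries ℚ) (by simp) m
  simp only [← pow_mul] at hsame
  rw [hP', hQ', eP, eQ, ← hsame]
  rw [show ((∏ i ∈ range m, (1 - (X : PowerSeries ℚ) ^ (3 * (2 * i + 1)))⁻¹) *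
        ∏ i ∈ range m, (1 - X ^ (3 * (m + i + 1)))) *
        ∏ i ∈ range m, (1 - X ^ (2 * (i + 1)))⁻¹
      = ((∏ i ∈ range m, (1 - X ^ (2 * (i + 1)))⁻¹) *
        ∏ i ∈ range m, (1 - X ^ (3 * (2 * i + 1)))⁻¹) *
        ∏ i ∈ range m, (1 - X ^ (3 * (m + i + 1))) from by ring]
  rw [coeff_mul_prod_one_sub_of_lt_order n (range m) _ (fun i => X ^ (3 * (m + i + 1)))
    (fun i _ => by
      rw [order_X_pow]
      exact_mod_cast (by omega : n < 3 * (m + i + 1)))]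
end

section
/- For any positive integer r, the number of partitions of n in which no part has multiplicity in {1, 3, 5, ..., 2r−1} equals the number of partitions of n into parts that are even or are odd multiples of 2r+1 (i.e., divisible by 2r+1 but not by 4r+2). -/
open scoped Classical

namespace AndrewsAux

open PowerSeries Finset

noncomputable section

variable {α : Type*}

/-- A convenience constructor for the power series whose coefficients indicate a subset. -/
def indicatorSeries (α : Type*) [Semiring α] (s : Set ℕ) : PowerSeries α :=
  PowerSeries.mk fun n => if n ∈ s then 1 else 0

theorem coeff_indicator (s : Set ℕ) [Semiring α] (n : ℕ) :
    coeff (R := α) n (indicatorSeries _ s) = if n ∈ s then 1 else 0 :=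
  coeff_mk _ _

theorem coeff_indicator_pos (s : Set ℕ) [Semiring α] (n : ℕ) (h : n ∈ s) :
    coeff (R := α) n (indicatorSeries _ s) = 1 := by rw [coeff_indicator, if_pos h]

theorem coeff_indicator_neg (s : Set ℕ) [Semiring α] (n : ℕ) (h : n ∉ s) :
    coeff (R := α) n (indicatorSeries _ s) = 0 := by rw [coeff_indicator, if_neg h]

theorem constantCoeff_indicator (s : Set ℕ) [Semiring α] :
    constantCoeff (R := α) (indicatorSeries _ s) = if 0 ∈ s then 1 else 0 :=
  rfl

theorem num_series' [Field α] (i : ℕ) :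
    (1 - (X : PowerSeries α) ^ (i + 1))⁻¹ = indicatorSeries α {k | i + 1 ∣ k} := by
  rw [PowerSeries.inv_eq_iff_mul_eq_one]
  · ext n
    cases n with
    | zero => simp [mul_sub, zero_pow, constantCoeff_indicator]
    | succ n =>
      simp only [coeff_one, if_false, mul_sub, mul_one, coeff_indicator,
        LinearMap.map_sub, reduceCtorEq]
      simp_rw [coeff_mul, coeff_X_pow, coeff_indicator, @boole_mul _ _ _ _]
      rw [@sum_ite _ _ _ _ _ (fun x => Classical.propDecidable _), sum_ite]
      simp_rw [@filter_filter _ _ _ _ _, sum_const_zero, add_zero, sum_const, nsmul_eq_mul, mul_one,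
        sub_eq_iff_eq_add, zero_add]
      symm
      split_ifs with h
      · suffices #{a ∈ antidiagonal (n + 1) | i + 1 ∣ a.fst ∧ a.snd = i + 1} = 1 by
          simp only [Set.mem_setOf_eq]; convert congr_arg ((↑) : ℕ → α) this; norm_cast
        rw [card_eq_one]
        cases' h with p hp
        refine ⟨((i + 1) * (p - 1), i + 1), ?_⟩
        ext ⟨a₁, a₂⟩
        simp only [mem_filter, Prod.mk_inj, HasAntidiagonal.mem_antidiagonal, mem_singleton]
        constructor
        · rintro ⟨a_left, ⟨a, rfl⟩, rfl⟩
          refine ⟨?_, rfl⟩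
          rw [Nat.mul_sub_left_distrib, ← hp, ← a_left, mul_one, Nat.add_sub_cancel]
        · rintro ⟨rfl, rfl⟩
          match p with
          | 0 => rw [mul_zero] at hp; cases hp
          | p + 1 => rw [hp]; simp [mul_add]
      · suffices #{a ∈ antidiagonal (n + 1) | i + 1 ∣ a.fst ∧ a.snd = i + 1} = 0 by
          simp only [Set.mem_setOf_eq]; convert congr_arg ((↑) : ℕ → α) this; norm_cast
        rw [card_eq_zero]
        apply eq_empty_of_forall_notMem
        simp only [Prod.forall, mem_filter, not_and, HasAntidiagonal.mem_antidiagonal]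
        rintro _ h₁ h₂ ⟨a, rfl⟩ rfl
        apply h
        simp [← h₂]
  · simp [zero_pow]

-- The main workhorse of the partition theorem proof.
theorem partialGF_prop (α : Type*) [CommSemiring α] (n : ℕ) (s : Finset ℕ) (hs : ∀ i ∈ s, 0 < i)
    (c : ℕ → Set ℕ) (hc : ∀ i, i ∉ s → 0 ∈ c i) :
    #{p : n.Partition | (∀ j, p.parts.count j ∈ c j) ∧ ∀ j ∈ p.parts, j ∈ s} =
      coeff (R := α) n (∏ i ∈ s, indicatorSeries α ((· * i) '' c i)) := by
  simp_rw [coeff_prod, coeff_indicator, prod_boole, sum_boole]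
  apply congr_arg
  simp only [mem_univ, forall_true_left, not_and, not_forall, exists_prop,
    Set.mem_image, not_exists]
  set φ : (a : Nat.Partition n) →
    a ∈ filter (fun p ↦ (∀ (j : ℕ), Multiset.count j p.parts ∈ c j) ∧ ∀ j ∈ p.parts, j ∈ s) univ →
    ℕ →₀ ℕ := fun p _ => {
      toFun := fun i => Multiset.count i p.parts • i
      support := Finset.filter (fun i => i ≠ 0) p.parts.toFinset
      mem_support_toFun := fun a => by
        simp only [smul_eq_mul, ne_eq, mul_eq_zero, Multiset.count_eq_zero]
        rw [not_or, not_not]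
        simp only [Multiset.mem_toFinset, not_not, mem_filter] }
  refine Finset.card_bij φ ?_ ?_ ?_
  · intro a ha
    simp only [φ, not_forall, not_exists, not_and, exists_prop, mem_filter]
    rw [mem_finsuppAntidiag]
    dsimp only [ne_eq, smul_eq_mul, id_eq, eq_mpr_eq_cast, le_eq_subset, Finsupp.coe_mk]
    simp only [mem_univ, forall_true_left, not_and, not_forall, exists_prop,
      mem_filter, true_and] at ha
    refine ⟨⟨?_, fun i ↦ ?_⟩, fun i _ ↦ ⟨a.parts.count i, ha.1 i, rfl⟩⟩
    · conv_rhs => simp [← a.parts_sum]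
      rw [sum_multiset_count_of_subset _ s]
      · simp only [smul_eq_mul]
      · intro i
        simp only [Multiset.mem_toFinset, not_not, mem_filter]
        apply ha.2
    · simp only [ne_eq, Multiset.mem_toFinset, not_not, mem_filter, and_imp]
      exact fun hi _ ↦ ha.2 i hi
  · intro p₁ hp₁ p₂ hp₂ h
    apply Nat.Partition.ext
    simp only [true_and, mem_univ, mem_filter] at hp₁ hp₂
    ext i
    simp only [φ, ne_eq, Multiset.mem_toFinset, not_not, smul_eq_mul, Finsupp.mk.injEq] at h
    by_cases hi : i = 0
    · rw [hi]
      rw [Multiset.count_eq_zero_of_notMem]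
      · rw [Multiset.count_eq_zero_of_notMem]
        intro a; exact Nat.lt_irrefl 0 (hs 0 (hp₂.2 0 a))
      intro a; exact Nat.lt_irrefl 0 (hs 0 (hp₁.2 0 a))
    · rw [← mul_left_inj' hi]
      rw [funext_iff] at h
      exact h.2 i
  · simp only [φ, mem_filter, mem_finsuppAntidiag, mem_univ, exists_prop, true_and, and_assoc]
    rintro f ⟨hf, hf₃, hf₄⟩
    have hf' : f ∈ finsuppAntidiag s n := mem_finsuppAntidiag.mpr ⟨hf, hf₃⟩
    simp only [mem_finsuppAntidiag] at hf'
    refine ⟨⟨∑ i ∈ s, Multiset.replicate (f i / i) i, ?_, ?_⟩, ?_, ?_, ?_⟩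
    · intro i hi
      simp only [exists_prop, Multiset.mem_sum, mem_map, Function.Embedding.coeFn_mk] at hi
      rcases hi with ⟨t, ht, z⟩
      apply hs
      rwa [Multiset.eq_of_mem_replicate z]
    · simp_rw [Multiset.sum_sum, Multiset.sum_replicate, Nat.nsmul_eq_mul]
      rw [← hf'.1]
      refine sum_congr rfl fun i hi => Nat.div_mul_cancel ?_
      rcases hf₄ i hi with ⟨w, _, hw₂⟩
      rw [← hw₂]
      exact dvd_mul_left _ _
    · intro i
      simp_rw [Multiset.count_sum', Multiset.count_replicate, sum_ite_eq']
      split_ifs with h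
      · rcases hf₄ i h with ⟨w, hw₁, hw₂⟩
        rwa [← hw₂, Nat.mul_div_cancel _ (hs i h)]
      · exact hc _ h
    · intro i hi
      rw [Multiset.mem_sum] at hi
      rcases hi with ⟨j, hj₁, hj₂⟩
      rwa [Multiset.eq_of_mem_replicate hj₂]
    · ext i
      simp_rw [Multiset.count_sum', Multiset.count_replicate, sum_ite_eq']
      simp only [ne_eq, Multiset.mem_toFinset, not_not, smul_eq_mul, ite_mul,
        zero_mul, Finsupp.coe_mk]
      split_ifs with h
      · apply Nat.div_mul_cancel
        rcases hf₄ i h with ⟨w, _, hw₂⟩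
        apply Dvd.intro_left _ hw₂
      · apply symm
        rw [← Finsupp.notMem_support_iff]
        exact notMem_mono hf'.2 h



theorem same_gf_q {α : Type*} [Field α] (q : ℕ) (hq : 0 < q) (m : ℕ) :
    (∏ i ∈ range m, (1 - (X : PowerSeries α) ^ (q * (2 * i + 1)))⁻¹) *
        (∏ i ∈ range m, (1 - (X : PowerSeries α) ^ (q * (m + i + 1)))) =
      ∏ i ∈ range m, (1 + (X : PowerSeries α) ^ (q * (i + 1))) := by
  induction' m with m ih
  · simp
  set! π₀ : PowerSeries α := ∏ i ∈ range m, (1 - X ^ (q * (m + 1 + i + 1))) with hπ₀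
  set! π₁ : PowerSeries α := ∏ i ∈ range m, (1 - X ^ (q * (2 * i + 1)))⁻¹ with hπ₁
  set! π₂ : PowerSeries α := ∏ i ∈ range m, (1 - X ^ (q * (m + i + 1))) with hπ₂
  set! π₃ : PowerSeries α := ∏ i ∈ range m, (1 + X ^ (q * (i + 1))) with hπ₃
  rw [← hπ₃] at ih
  have h : constantCoeff (R := α) (1 - X ^ (q * (2 * m + 1))) ≠ 0 := by
    rw [RingHom.map_sub, RingHom.map_pow, constantCoeff_one, constantCoeff_X,
      zero_pow (by positivity), sub_zero]
    exact one_ne_zero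
  calc
    (∏ i ∈ range (m + 1), (1 - X ^ (q * (2 * i + 1)))⁻¹) *
          ∏ i ∈ range (m + 1), (1 - X ^ (q * (m + 1 + i + 1))) =
        π₁ * (1 - X ^ (q * (2 * m + 1)))⁻¹ * (π₀ * (1 - X ^ (q * (m + 1 + m + 1)))) := by
      rw [prod_range_succ _ m, ← hπ₁, prod_range_succ _ m, ← hπ₀]
    _ = π₁ * (1 - X ^ (q * (2 * m + 1)))⁻¹ *
          (π₀ * ((1 + X ^ (q * (m + 1))) * (1 - X ^ (q * (m + 1))))) := by
      congr 2
      rw [← sq_sub_sq, one_pow, ← pow_mul]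
      congr 2
      ring
    _ = π₀ * (1 - X ^ (q * (m + 1))) * (1 - X ^ (q * (2 * m + 1)))⁻¹ *
          (π₁ * (1 + X ^ (q * (m + 1)))) := by ring
    _ = (∏ i ∈ range (m + 1), (1 - X ^ (q * (m + 1 + i)))) * (1 - X ^ (q * (2 * m + 1)))⁻¹ *
          (π₁ * (1 + X ^ (q * (m + 1)))) := by
      rw [prod_range_succ', add_zero, hπ₀]; simp_rw [← add_assoc]
    _ = π₂ * (1 - X ^ (q * (m + 1 + m))) * (1 - X ^ (q * (2 * m + 1)))⁻¹ *
          (π₁ * (1 + X ^ (q * (m + 1)))) := by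
      rw [add_right_comm, hπ₂, ← prod_range_succ]; simp_rw [add_right_comm]
    _ = π₂ * (1 - X ^ (q * (2 * m + 1))) * (1 - X ^ (q * (2 * m + 1)))⁻¹ *
          (π₁ * (1 + X ^ (q * (m + 1)))) := by
      rw [two_mul, add_right_comm _ m 1]
    _ = (1 - X ^ (q * (2 * m + 1))) * (1 - X ^ (q * (2 * m + 1)))⁻¹ * π₂ *
          (π₁ * (1 + X ^ (q * (m + 1)))) := by ring
    _ = π₂ * (π₁ * (1 + X ^ (q * (m + 1)))) := by
      rw [PowerSeries.mul_inv_cancel _ h, one_mul]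
    _ = π₁ * π₂ * (1 + X ^ (q * (m + 1))) := by ring
    _ = π₃ * (1 + X ^ (q * (m + 1))) := by rw [ih]
    _ = _ := by rw [prod_range_succ]


theorem num_series'' {α : Type*} [Field α] (j : ℕ) (hj : 0 < j) :
    (1 - (X : PowerSeries α) ^ j)⁻¹ = indicatorSeries α {k | j ∣ k} := by
  obtain ⟨i, rfl⟩ := Nat.exists_eq_add_of_lt hj
  rw [zero_add]
  exact num_series' i

theorem ind_P (q i : ℕ) (hq : Odd q) (hi : 0 < i) :
    indicatorSeries ℚ ((· * i) '' {t | ∃ a, t = 2 * a ∨ t = 2 * a + q}) =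
      (1 - (X : PowerSeries ℚ) ^ (2 * i))⁻¹ * (1 + X ^ (q * i)) := by
  rw [num_series'' (2 * i) (by omega)]
  ext n
  have key : (n ∈ (· * i) '' {t | ∃ a, t = 2 * a ∨ t = 2 * a + q}) ↔
      (2 * i ∣ n) ∨ (q * i ≤ n ∧ 2 * i ∣ n - q * i) := by
    constructor
    · rintro ⟨t, ⟨a, rfl | rfl⟩, rfl⟩ <;> dsimp only
      · exact Or.inl ⟨a, by ring⟩
      · have h : (2 * a + q) * i = 2 * i * a + q * i := by ring
        exact Or.inr ⟨by omega, ⟨a, by omega⟩⟩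
    · rintro (⟨a, rfl⟩ | ⟨hle, a, ha⟩)
      · exact ⟨2 * a, ⟨a, Or.inl rfl⟩, by ring⟩
      · refine ⟨2 * a + q, ⟨a, Or.inr rfl⟩, ?_⟩
        show (2 * a + q) * i = n
        have h : (2 * a + q) * i = 2 * i * a + q * i := by ring
        omega
  have disj : ¬((2 * i ∣ n) ∧ (q * i ≤ n ∧ 2 * i ∣ n - q * i)) := by
    rintro ⟨h1, hle, h2⟩
    have hd : 2 * i ∣ n - (n - q * i) := Nat.dvd_sub h1 h2
    have he : n - (n - q * i) = q * i := by omega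
    rw [he] at hd
    obtain ⟨k, hk⟩ := hd
    have : q = 2 * k := Nat.eq_of_mul_eq_mul_right hi (by linarith [hk])
    obtain ⟨c, hc⟩ := hq
    omega
  rw [mul_add, mul_one, map_add, PowerSeries.coeff_mul_X_pow', coeff_indicator,
    coeff_indicator, coeff_indicator]
  by_cases h1 : 2 * i ∣ n
  · have h2 : ¬(q * i ≤ n ∧ 2 * i ∣ n - q * i) := fun h => disj ⟨h1, h⟩
    by_cases h3 : q * i ≤ n
    · have h4 : ¬ 2 * i ∣ n - q * i := fun h => h2 ⟨h3, h⟩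
      simp [key, h1, h3, h4]
    · simp [key, h1, h3]
  · by_cases h3 : q * i ≤ n
    · by_cases h4 : 2 * i ∣ n - q * i
      · simp [key, h1, h3, h4]
      · simp [key, h1, h3, h4]
    · simp [key, h1, h3]

theorem ind_univ (b : ℕ) (hb : 0 < b) :
    indicatorSeries ℚ ((· * b) '' (Set.univ : Set ℕ)) = (1 - (X : PowerSeries ℚ) ^ b)⁻¹ := by
  rw [num_series'' b hb]
  have hset : ((· * b) '' (Set.univ : Set ℕ)) = {k | b ∣ k} := by
    ext k
    simp only [Set.image_univ, Set.mem_range, Set.mem_setOf_eq]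
    constructor
    · rintro ⟨a, rfl⟩; exact Dvd.intro_left a rfl
    · rintro ⟨a, rfl⟩; exact ⟨a, mul_comm a b⟩
  rw [hset]


end
end AndrewsAux

open AndrewsAux PowerSeries Finset

/-- Andrews: multiplicities avoiding {1,3,...,2r-1} vs parts even or odd multiples of 2r+1. -/
theorem andrews (r n : ℕ) (hr : 1 ≤ r) :
    partP {t | ¬ (Odd t ∧ t ≤ 2 * r - 1)} n
      = partQ {b | 2 ∣ b ∨ ((2 * r + 1) ∣ b ∧ ¬ (4 * r + 2) ∣ b)} n := by
  set q := 2 * r + 1 with hq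
  have hqodd : Odd q := ⟨r, by omega⟩
  have hqpos : 0 < q := by omega
  set m := n + 1 with hm
  -- the multiplicity set, rewritten
  have hA : {t : ℕ | ¬ (Odd t ∧ t ≤ 2 * r - 1)} = {t : ℕ | ∃ a, t = 2 * a ∨ t = 2 * a + q} := by
    ext t
    simp only [Set.mem_setOf_eq, Nat.odd_iff]
    constructor
    · intro h
      by_cases h2 : t % 2 = 0
      · exact ⟨t / 2, Or.inl (by omega)⟩
      · exact ⟨(t - q) / 2, Or.inr (by omega)⟩
    · rintro ⟨a, rfl | rfl⟩ <;> omega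
  -- index sets
  set s₁ : Finset ℕ := (range m).map ⟨Nat.succ, Nat.succ_injective⟩ with hs₁def
  have hs₁pos : ∀ i ∈ s₁, 0 < i := by
    intro i hi
    simp only [hs₁def, mem_map, mem_range, Function.Embedding.coeFn_mk] at hi
    obtain ⟨a, -, rfl⟩ := hi
    exact Nat.succ_pos a
  set s₂ : Finset ℕ :=
    ((range m).image fun i => 2 * (i + 1)) ∪ ((range m).image fun j => q * (2 * j + 1))
    with hs₂def
  have hs₂pos : ∀ i ∈ s₂, 0 < i := by
    intro i hi
    simp only [hs₂def, mem_union, mem_image, mem_range] at hi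
    rcases hi with ⟨a, -, rfl⟩ | ⟨a, -, rfl⟩
    · omega
    · exact Nat.mul_pos hqpos (by omega)
  -- card equalities
  have hP1 : partP {t | ¬ (Odd t ∧ t ≤ 2 * r - 1)} n =
      #{p : n.Partition | (∀ j, p.parts.count j ∈ {t : ℕ | ∃ a, t = 2 * a ∨ t = 2 * a + q}) ∧
        ∀ j ∈ p.parts, j ∈ s₁} := by
    simp only [partP, hA]
    congr 1
    ext p
    simp only [Finset.mem_filter, Finset.mem_univ, true_and]
    have hle : ∀ j ∈ p.parts, j ≤ n := fun j hj => by
      simpa [p.parts_sum] using Multiset.single_le_sum (fun _ _ => Nat.zero_le _) _ hj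
    constructor
    · intro h
      refine ⟨fun j => ?_, fun j hj => ?_⟩
      · by_cases hj : j ∈ p.parts
        · exact h j hj
        · rw [Multiset.count_eq_zero_of_notMem hj]; exact ⟨0, Or.inl rfl⟩
      · have h1 : 0 < j := p.parts_pos hj
        have h2 : j ≤ n := hle j hj
        simp only [hs₁def, mem_map, mem_range, Function.Embedding.coeFn_mk]
        exact ⟨j - 1, by omega, by omega⟩
    · intro h i _
      exact h.1 i
  have hQ1 : partQ {b | 2 ∣ b ∨ (q ∣ b ∧ ¬ (4 * r + 2) ∣ b)} n =
      #{p : n.Partition | (∀ j, p.parts.count j ∈ (Set.univ : Set ℕ)) ∧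
        ∀ j ∈ p.parts, j ∈ s₂} := by
    simp only [partQ]
    congr 1
    ext p
    simp only [Finset.mem_filter, Finset.mem_univ, true_and]
    have hle : ∀ j ∈ p.parts, j ≤ n := fun j hj => by
      simpa [p.parts_sum] using Multiset.single_le_sum (fun _ _ => Nat.zero_le _) _ hj
    constructor
    · intro h
      refine ⟨fun _ => trivial, fun j hj => ?_⟩
      have h1 : 0 < j := p.parts_pos hj
      have h2 : j ≤ n := hle j hj
      rcases h j hj with h2d | ⟨⟨c, rfl⟩, hnd⟩
      · apply mem_union_left
        simp only [mem_image, mem_range]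
        exact ⟨j / 2 - 1, by omega, by omega⟩
      · apply mem_union_right
        simp only [mem_image, mem_range]
        have hcodd : c % 2 = 1 := by
          by_contra hce
        -- c even would make q*c divisible by 4r+2
          have hc2 : c % 2 = 0 := by omega
          obtain ⟨d, rfl⟩ : ∃ d, c = 2 * d := ⟨c / 2, by omega⟩
          exact hnd ⟨d, by rw [hq]; ring⟩
        have hcc : c ≤ q * c := Nat.le_mul_of_pos_left c hqpos
        have h2c : 2 * ((c - 1) / 2) + 1 = c := by omega
        exact ⟨(c - 1) / 2, by omega, by rw [h2c]⟩
    · intro h j hj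
      have hj2 := h.2 j hj
      simp only [hs₂def, mem_union, mem_image, mem_range] at hj2
      rcases hj2 with ⟨a, -, rfl⟩ | ⟨a, -, rfl⟩
      · exact Or.inl ⟨a + 1, by ring⟩
      · refine Or.inr ⟨⟨2 * a + 1, rfl⟩, ?_⟩
        rintro ⟨d, hd⟩
        have h2q : 4 * r + 2 = 2 * q := by omega
        rw [h2q] at hd
        have hd' : q * (2 * a + 1) = q * (2 * d) := by rw [hd]; ring
        have := Nat.eq_of_mul_eq_mul_left hqpos hd'
        omega
  -- generating function identifications
  have hP2 := partialGF_prop ℚ n s₁ hs₁pos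
    (fun _ => {t : ℕ | ∃ a, t = 2 * a ∨ t = 2 * a + q}) (fun i _ => ⟨0, Or.inl rfl⟩)
  have hQ2 := partialGF_prop ℚ n s₂ hs₂pos (fun _ => (Set.univ : Set ℕ)) (fun _ _ => trivial)
  have hGF1 : (∏ i ∈ s₁, indicatorSeries ℚ ((· * i) '' {t : ℕ | ∃ a, t = 2 * a ∨ t = 2 * a + q}))
      = (∏ i ∈ range m, (1 - (X : PowerSeries ℚ) ^ (2 * (i + 1)))⁻¹) *
        ∏ i ∈ range m, (1 + (X : PowerSeries ℚ) ^ (q * (i + 1))) := by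
    rw [hs₁def, Finset.prod_map, ← Finset.prod_mul_distrib]
    refine Finset.prod_congr rfl fun i _ => ?_
    simpa using ind_P q (i + 1) hqodd (Nat.succ_pos i)
  have hdisj : Disjoint ((range m).image fun i => 2 * (i + 1))
      ((range m).image fun j => q * (2 * j + 1)) := by
    rw [Finset.disjoint_left]
    rintro x hx1 hx2
    simp only [mem_image, mem_range] at hx1 hx2
    obtain ⟨a, -, rfl⟩ := hx1
    obtain ⟨b, -, hb⟩ := hx2
    have hmod : (q * (2 * b + 1)) % 2 = 1 := by
      have h1 : q % 2 = 1 := by omega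
      rw [Nat.mul_mod, h1]
      omega
    omega
  have hGF2 : (∏ i ∈ s₂, indicatorSeries ℚ ((· * i) '' (Set.univ : Set ℕ)))
      = (∏ i ∈ range m, (1 - (X : PowerSeries ℚ) ^ (2 * (i + 1)))⁻¹) *
        ∏ j ∈ range m, (1 - (X : PowerSeries ℚ) ^ (q * (2 * j + 1)))⁻¹ := by
    rw [hs₂def, Finset.prod_union hdisj,
      Finset.prod_image (fun a _ b _ hab => by omega),
      Finset.prod_image (fun a _ b _ hab => by
        have := Nat.eq_of_mul_eq_mul_left hqpos hab
        omega)]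
    congr 1
    · exact Finset.prod_congr rfl fun i _ => ind_univ _ (by omega)
    · exact Finset.prod_congr rfl fun j _ => ind_univ _ (Nat.mul_pos hqpos (by omega))
  -- conclude via the generalized Euler identity
  have hkey : coeff (R := ℚ) n ((∏ i ∈ range m, (1 - (X : PowerSeries ℚ) ^ (2 * (i + 1)))⁻¹) *
        ∏ i ∈ range m, (1 + (X : PowerSeries ℚ) ^ (q * (i + 1)))) =
      coeff (R := ℚ) n ((∏ i ∈ range m, (1 - (X : PowerSeries ℚ) ^ (2 * (i + 1)))⁻¹) *
        ∏ j ∈ range m, (1 - (X : PowerSeries ℚ) ^ (q * (2 * j + 1)))⁻¹) := by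
    rw [← same_gf_q q hqpos m, ← mul_assoc]
    exact coeff_mul_prod_one_sub_of_lt_order n (range m) _ (fun i => X ^ (q * (m + i + 1)))
      (fun i _ => by
        rw [order_X_pow]
        have h1 : m + i + 1 ≤ q * (m + i + 1) := Nat.le_mul_of_pos_left _ hqpos
        exact_mod_cast (show n < q * (m + i + 1) by omega))
  have : (partP {t | ¬ (Odd t ∧ t ≤ 2 * r - 1)} n : ℚ) =
      (partQ {b | 2 ∣ b ∨ (q ∣ b ∧ ¬ (4 * r + 2) ∣ b)} n : ℚ) := by
    rw [hP1, hQ1, hP2, hQ2, hGF1, hGF2, hkey]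
  exact_mod_cast this
end

section
/- Let l > 1 and r ≥ 0 be integers. The number of partitions of n in which every part multiplicity lies in the set {2i + j(2r+1) : 0 ≤ i ≤ l−1, j ∈ {0,1}} equals the number of partitions of n into parts that are either even but not divisible by 2l, or divisible by 2r+1 but not by 4r+2. -/
open scoped Classical

namespace SubbaraoAux
open PowerSeries Finset
noncomputable section
variable {α : Type*}

/-- A convenience constructor for the power series whose coefficients indicate a subset. -/
def indicatorSeries (α : Type*) [Semiring α] (s : Set ℕ) : PowerSeries α :=
  PowerSeries.mk fun n => if n ∈ s then 1 else 0

theorem coeff_indicator (s : Set ℕ) [Semiring α] (n : ℕ) :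
    coeff (R := α) n (indicatorSeries _ s) = if n ∈ s then 1 else 0 :=
  coeff_mk _ _

theorem coeff_indicator_pos (s : Set ℕ) [Semiring α] (n : ℕ) (h : n ∈ s) :
    coeff (R := α) n (indicatorSeries _ s) = 1 := by rw [coeff_indicator, if_pos h]

theorem coeff_indicator_neg (s : Set ℕ) [Semiring α] (n : ℕ) (h : n ∉ s) :
    coeff (R := α) n (indicatorSeries _ s) = 0 := by rw [coeff_indicator, if_neg h]

theorem constantCoeff_indicator (s : Set ℕ) [Semiring α] :
    constantCoeff (R := α) (indicatorSeries _ s) = if 0 ∈ s then 1 else 0 :=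
  rfl

theorem two_series (i : ℕ) [Semiring α] :
    1 + (X : PowerSeries α) ^ i.succ = indicatorSeries α {0, i.succ} := by
  ext n
  simp only [coeff_indicator, coeff_one, coeff_X_pow, Set.mem_insert_iff, Set.mem_singleton_iff,
    map_add]
  cases' n with d
  · simp [(Nat.succ_ne_zero i).symm]
  · simp [Nat.succ_ne_zero d]

theorem num_series' [Field α] (i : ℕ) :
    (1 - (X : PowerSeries α) ^ (i + 1))⁻¹ = indicatorSeries α {k | i + 1 ∣ k} := by
  rw [PowerSeries.inv_eq_iff_mul_eq_one]
  · ext n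
    cases n with
    | zero => simp [mul_sub, zero_pow, constantCoeff_indicator]
    | succ n =>
      simp only [coeff_one, if_false, mul_sub, mul_one, coeff_indicator,
        LinearMap.map_sub, reduceCtorEq]
      simp_rw [coeff_mul, coeff_X_pow, coeff_indicator, @boole_mul _ _ _ _]
      simp only [Set.mem_setOf_eq]; rw [sum_ite, sum_ite]
      simp_rw [@filter_filter _ _ _ _ _, sum_const_zero, add_zero, sum_const, nsmul_eq_mul, mul_one,
        sub_eq_iff_eq_add, zero_add]
      symm
      split_ifs with h
      · suffices #{a ∈ antidiagonal (n + 1) | i + 1 ∣ a.fst ∧ a.snd = i + 1} = 1 by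
          convert congr_arg ((↑) : ℕ → α) this; norm_cast
        rw [card_eq_one]
        cases' h with p hp
        refine ⟨((i + 1) * (p - 1), i + 1), ?_⟩
        ext ⟨a₁, a₂⟩
        simp only [mem_filter, Prod.mk_inj, HasAntidiagonal.mem_antidiagonal, mem_singleton]
        constructor
        · rintro ⟨a_left, ⟨a, rfl⟩, rfl⟩
          refine ⟨?_, rfl⟩
          rw [Nat.mul_sub_left_distrib, ← hp, ← a_left, mul_one, Nat.add_sub_cancel]
        · rintro ⟨rfl, rfl⟩
          match p with
          | 0 => rw [mul_zero] at hp; cases hp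
          | p + 1 => rw [hp]; simp [mul_add]
      · suffices #{a ∈ antidiagonal (n + 1) | i + 1 ∣ a.fst ∧ a.snd = i + 1} = 0 by
          convert congr_arg ((↑) : ℕ → α) this; norm_cast
        rw [card_eq_zero]
        apply eq_empty_of_forall_notMem
        simp only [Prod.forall, mem_filter, not_and, HasAntidiagonal.mem_antidiagonal]
        rintro _ h₁ h₂ ⟨a, rfl⟩ rfl
        apply h
        simp [← h₂]
  · simp [zero_pow]

def mkOdd : ℕ ↪ ℕ :=
  ⟨fun i => 2 * i + 1, fun x y h => by linarith⟩

-- The main workhorse of the partition theorem proof.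
theorem partialGF_prop (α : Type*) [CommSemiring α] (n : ℕ) (s : Finset ℕ) (hs : ∀ i ∈ s, 0 < i)
    (c : ℕ → Set ℕ) (hc : ∀ i, i ∉ s → 0 ∈ c i) :
    #{p : n.Partition | (∀ j, p.parts.count j ∈ c j) ∧ ∀ j ∈ p.parts, j ∈ s} =
      coeff (R := α) n (∏ i ∈ s, indicatorSeries α ((· * i) '' c i)) := by
  simp_rw [coeff_prod, coeff_indicator, prod_boole, sum_boole]
  apply congr_arg
  simp only [mem_univ, forall_true_left, not_and, not_forall, exists_prop,
    Set.mem_image, not_exists]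
  set φ : (a : Nat.Partition n) →
    a ∈ filter (fun p ↦ (∀ (j : ℕ), Multiset.count j p.parts ∈ c j) ∧ ∀ j ∈ p.parts, j ∈ s) univ →
    ℕ →₀ ℕ := fun p _ => {
      toFun := fun i => Multiset.count i p.parts • i
      support := Finset.filter (fun i => i ≠ 0) p.parts.toFinset
      mem_support_toFun := fun a => by
        simp only [smul_eq_mul, ne_eq, mul_eq_zero, Multiset.count_eq_zero]
        rw [not_or, not_not]
        simp only [Multiset.mem_toFinset, not_not, mem_filter] }
  refine Finset.card_bij φ ?_ ?_ ?_
  · intro a ha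
    simp only [φ, not_forall, not_exists, not_and, exists_prop, mem_filter]
    rw [mem_finsuppAntidiag]
    dsimp only [ne_eq, smul_eq_mul, id_eq, eq_mpr_eq_cast, le_eq_subset, Finsupp.coe_mk]
    simp only [mem_univ, forall_true_left, not_and, not_forall, exists_prop,
      mem_filter, true_and] at ha
    refine ⟨⟨?_, fun i ↦ ?_⟩, fun i _ ↦ ⟨a.parts.count i, ha.1 i, rfl⟩⟩
    · conv_rhs => simp [← a.parts_sum]
      rw [sum_multiset_count_of_subset _ s]
      · simp only [smul_eq_mul]
      · intro i
        simp only [Multiset.mem_toFinset, not_not, mem_filter]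
        apply ha.2
    · simp only [ne_eq, Multiset.mem_toFinset, not_not, mem_filter, and_imp]
      exact fun hi _ ↦ ha.2 i hi
  · intro p₁ hp₁ p₂ hp₂ h
    apply Nat.Partition.ext
    simp only [true_and, mem_univ, mem_filter] at hp₁ hp₂
    ext i
    simp only [φ, ne_eq, Multiset.mem_toFinset, not_not, smul_eq_mul, Finsupp.mk.injEq] at h
    by_cases hi : i = 0
    · rw [hi]
      rw [Multiset.count_eq_zero_of_notMem]
      · rw [Multiset.count_eq_zero_of_notMem]
        intro a; exact Nat.lt_irrefl 0 (hs 0 (hp₂.2 0 a))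
      intro a; exact Nat.lt_irrefl 0 (hs 0 (hp₁.2 0 a))
    · rw [← mul_left_inj' hi]
      rw [funext_iff] at h
      exact h.2 i
  · simp only [φ, mem_filter, mem_finsuppAntidiag, mem_univ, exists_prop, true_and, and_assoc]
    rintro f ⟨hf, hf₃, hf₄⟩
    have hf' : f ∈ finsuppAntidiag s n := mem_finsuppAntidiag.mpr ⟨hf, hf₃⟩
    simp only [mem_finsuppAntidiag] at hf'
    refine ⟨⟨∑ i ∈ s, Multiset.replicate (f i / i) i, ?_, ?_⟩, ?_, ?_, ?_⟩
    · intro i hi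
      simp only [exists_prop, Multiset.mem_sum, mem_map, Function.Embedding.coeFn_mk] at hi
      rcases hi with ⟨t, ht, z⟩
      apply hs
      rwa [Multiset.eq_of_mem_replicate z]
    · simp_rw [Multiset.sum_sum, Multiset.sum_replicate, Nat.nsmul_eq_mul]
      rw [← hf'.1]
      refine sum_congr rfl fun i hi => Nat.div_mul_cancel ?_
      rcases hf₄ i hi with ⟨w, _, hw₂⟩
      rw [← hw₂]
      exact dvd_mul_left _ _
    · intro i
      simp_rw [Multiset.count_sum', Multiset.count_replicate, sum_ite_eq']
      split_ifs with h
      · rcases hf₄ i h with ⟨w, hw₁, hw₂⟩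
        rwa [← hw₂, Nat.mul_div_cancel _ (hs i h)]
      · exact hc _ h
    · intro i hi
      rw [Multiset.mem_sum] at hi
      rcases hi with ⟨j, hj₁, hj₂⟩
      rwa [Multiset.eq_of_mem_replicate hj₂]
    · ext i
      simp_rw [Multiset.count_sum', Multiset.count_replicate, sum_ite_eq']
      simp only [ne_eq, Multiset.mem_toFinset, not_not, smul_eq_mul, ite_mul,
        zero_mul, Finsupp.coe_mk]
      split_ifs with h
      · apply Nat.div_mul_cancel
        rcases hf₄ i h with ⟨w, _, hw₂⟩
        apply Dvd.intro_left _ hw₂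
      · apply symm
        rw [← Finsupp.notMem_support_iff]
        exact notMem_mono hf'.2 h


theorem num_series (i : ℕ) (hi : 0 < i) :
    (1 - (X : PowerSeries ℚ) ^ i) * indicatorSeries ℚ {k | i ∣ k} = 1 := by
  obtain ⟨j, rfl⟩ : ∃ j, i = j + 1 := ⟨i - 1, (Nat.succ_pred_eq_of_pos hi).symm⟩
  rw [← num_series' j]
  apply PowerSeries.mul_inv_cancel
  simp [zero_pow]

theorem sum_indicator_eq {s : Finset ℕ} (P : ℕ → Prop) [DecidablePred P]
    (h : ∀ a ∈ s, ∀ b ∈ s, P a → P b → a = b) :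
    (∑ k ∈ s, if P k then (1 : ℚ) else 0) = if ∃ k ∈ s, P k then 1 else 0 := by
  classical
  rw [Finset.sum_boole]
  rcases em (∃ k ∈ s, P k) with ⟨k, hk, hPk⟩ | hn
  · rw [if_pos ⟨k, hk, hPk⟩]
    norm_cast
    rw [Finset.card_eq_one]
    exact ⟨k, Finset.eq_singleton_iff_unique_mem.2 ⟨Finset.mem_filter.2 ⟨hk, hPk⟩,
      fun b hb => h b (Finset.mem_filter.1 hb).1 k hk (Finset.mem_filter.1 hb).2 hPk⟩⟩
  · rw [if_neg hn]
    norm_cast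
    rw [Finset.card_eq_zero, Finset.filter_eq_empty_iff]
    exact fun {x} hx hPx => hn ⟨x, hx, hPx⟩

theorem indicator_A (l r : ℕ) (i : ℕ) (hi : 0 < i) :
    indicatorSeries ℚ ((· * i) '' {x | ∃ a < l, ∃ j < 2, x = 2 * a + j * (2 * r + 1)})
      = (∑ k ∈ range l, (X : PowerSeries ℚ) ^ (2 * k * i)) * (1 + X ^ ((2 * r + 1) * i)) := by
  have cancel : ∀ a b : ℕ, a * i = b * i → a = b := fun a b h =>
    Nat.eq_of_mul_eq_mul_right hi h
  ext m
  rw [coeff_indicator, mul_add, mul_one, map_add, Finset.sum_mul]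
  simp_rw [← pow_add]
  rw [map_sum, map_sum]
  simp_rw [coeff_X_pow]
  rw [sum_indicator_eq (fun k => m = 2 * k * i)
      (fun a _ b _ ha hb => by have := cancel (2*a) (2*b) (by omega); omega),
    sum_indicator_eq (fun k => m = 2 * k * i + (2 * r + 1) * i)
      (fun a _ b _ ha hb => by
        have h2 : (2 * a) * i = (2 * b) * i := by omega
        have := cancel _ _ h2; omega)]
  have himg : m ∈ (· * i) '' {x | ∃ a < l, ∃ j < 2, x = 2 * a + j * (2 * r + 1)} ↔
      ((∃ k ∈ range l, m = 2 * k * i) ∨ (∃ k ∈ range l, m = 2 * k * i + (2 * r + 1) * i)) := by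
    constructor
    · rintro ⟨x, ⟨a, hal, j, hj2, rfl⟩, rfl⟩
      interval_cases j
      · exact Or.inl ⟨a, mem_range.2 hal, by ring⟩
      · exact Or.inr ⟨a, mem_range.2 hal, by ring⟩
    · rintro (⟨k, hk, rfl⟩ | ⟨k, hk, rfl⟩)
      · exact ⟨2 * k, ⟨k, mem_range.1 hk, 0, by omega, by ring⟩, by ring⟩
      · exact ⟨2 * k + (2 * r + 1), ⟨k, mem_range.1 hk, 1, by omega, by ring⟩, by ring⟩
  have hexcl : ¬((∃ k ∈ range l, m = 2 * k * i) ∧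
      (∃ k ∈ range l, m = 2 * k * i + (2 * r + 1) * i)) := by
    rintro ⟨⟨a, _, ha⟩, ⟨b, _, hb⟩⟩
    have hadd : (2 * b + (2 * r + 1)) * i = 2 * b * i + (2 * r + 1) * i := add_mul _ _ _
    have h3 : (2 * a) * i = (2 * b + (2 * r + 1)) * i := by rw [hadd]; omega
    have := cancel _ _ h3
    omega
  by_cases hP : ∃ k ∈ range l, m = 2 * k * i
  · have hQ : ¬∃ k ∈ range l, m = 2 * k * i + (2 * r + 1) * i := fun hQ => hexcl ⟨hP, hQ⟩
    rw [if_pos (himg.2 (Or.inl hP)), if_pos hP, if_neg hQ, add_zero]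
  · by_cases hQ : ∃ k ∈ range l, m = 2 * k * i + (2 * r + 1) * i
    · rw [if_pos (himg.2 (Or.inr hQ)), if_neg hP, if_pos hQ, zero_add]
    · rw [if_neg (fun hm => (himg.1 hm).elim hP hQ), if_neg hP, if_neg hQ, add_zero]

theorem indA_mul (l r i : ℕ) (hi : 0 < i) :
    indicatorSeries ℚ ((· * i) '' {x | ∃ a < l, ∃ j < 2, x = 2 * a + j * (2 * r + 1)})
        * ((1 - (X : PowerSeries ℚ) ^ (2 * i)) * (1 - X ^ ((2 * r + 1) * i)))
      = (1 - X ^ (2 * l * i)) * (1 - X ^ ((4 * r + 2) * i)) := by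
  rw [indicator_A l r i hi, mul_mul_mul_comm]
  have h1 : (∑ k ∈ range l, (X : PowerSeries ℚ) ^ (2 * k * i)) * (1 - X ^ (2 * i))
      = 1 - X ^ (2 * l * i) := by
    have hh : ∀ k : ℕ, (X : PowerSeries ℚ) ^ (2 * k * i) = (X ^ (2 * i)) ^ k := fun k => by
      rw [← pow_mul]; congr 1; ring
    simp_rw [hh]
    have h := geom_sum_mul (X ^ (2 * i) : PowerSeries ℚ) l
    rw [← (hh l)]
    linear_combination -h
  have h2 : (1 + (X : PowerSeries ℚ) ^ ((2 * r + 1) * i)) * (1 - X ^ ((2 * r + 1) * i))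
      = 1 - X ^ ((4 * r + 2) * i) := by
    have hy : ((X : PowerSeries ℚ) ^ ((2 * r + 1) * i)) ^ 2 = X ^ ((4 * r + 2) * i) := by
      rw [← pow_mul]; congr 1; ring
    rw [← hy]; ring
  rw [h1, h2]

section Quot
variable (n : ℕ)

def II (n : ℕ) : Ideal (PowerSeries ℚ) := Ideal.span {X ^ (n + 1)}

def pi (n : ℕ) : PowerSeries ℚ →+* (PowerSeries ℚ ⧸ II n) := Ideal.Quotient.mk (II n)

theorem pi_X_pow {k : ℕ} (h : n < k) : pi n ((X : PowerSeries ℚ) ^ k) = 0 := by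
  rw [pi, Ideal.Quotient.eq_zero_iff_mem, II, Ideal.mem_span_singleton]
  exact pow_dvd_pow X (by omega)

theorem pi_one_sub {k : ℕ} (h : n < k) : pi n (1 - (X : PowerSeries ℚ) ^ k) = 1 := by
  rw [map_sub, map_one, pi_X_pow n h, sub_zero]

theorem pi_unit {k : ℕ} (hk : 0 < k) :
    pi n (1 - (X : PowerSeries ℚ) ^ k) * pi n (indicatorSeries ℚ {m | k ∣ m}) = 1 := by
  rw [← map_mul, num_series k hk, map_one]

def s0 (n : ℕ) : Finset ℕ := (range (n + 1)).erase 0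

def Sa (n a : ℕ) : Finset ℕ := (s0 n).filter (a ∣ ·)

theorem mem_s0 {i : ℕ} : i ∈ s0 n ↔ 0 < i ∧ i ≤ n := by
  simp only [s0, Finset.mem_erase, Finset.mem_range]; omega

theorem mem_Sa {a i : ℕ} : i ∈ Sa n a ↔ (0 < i ∧ i ≤ n) ∧ a ∣ i := by
  simp only [Sa, Finset.mem_filter, mem_s0]

theorem prod_reindex (a : ℕ) (ha : 0 < a) :
    ∏ i ∈ s0 n, pi n (1 - (X : PowerSeries ℚ) ^ (a * i))
      = ∏ k ∈ Sa n a, pi n (1 - (X : PowerSeries ℚ) ^ k) := by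
  rw [← Finset.prod_filter_mul_prod_filter_not (s0 n) (fun i => a * i ≤ n)]
  have h2 : ∏ i ∈ (s0 n).filter (fun i => ¬ a * i ≤ n), pi n (1 - (X : PowerSeries ℚ) ^ (a * i))
      = 1 := Finset.prod_eq_one (fun i hi => by
        simp only [Finset.mem_filter] at hi
        exact pi_one_sub n (by omega))
  rw [h2, mul_one]
  refine Finset.prod_bij' (fun i _ => a * i) (fun k _ => k / a) ?_ ?_ ?_ ?_ ?_
  · intro i hi
    simp only [Finset.mem_filter, mem_s0] at hi
    exact mem_Sa n |>.2 ⟨⟨Nat.mul_pos ha hi.1.1, hi.2⟩, dvd_mul_right a i⟩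
  · intro k hk
    obtain ⟨⟨hk0, hkn⟩, hdvd⟩ := mem_Sa n |>.1 hk
    simp only [Finset.mem_filter, mem_s0]
    have hka : a ≤ k := Nat.le_of_dvd hk0 hdvd
    refine ⟨⟨Nat.div_pos hka ha, le_trans (Nat.div_le_self _ _) hkn⟩, ?_⟩
    rw [Nat.mul_div_cancel' hdvd]; exact hkn
  · intro i hi
    exact Nat.mul_div_cancel_left i ha
  · intro k hk
    obtain ⟨⟨hk0, hkn⟩, hdvd⟩ := mem_Sa n |>.1 hk
    exact Nat.mul_div_cancel' hdvd
  · intro i hi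
    rfl

end Quot

theorem coeff_eq_of_pi_eq (n : ℕ) {F G : PowerSeries ℚ} (h : pi n F = pi n G) :
    coeff (R := ℚ) n F = coeff (R := ℚ) n G := by
  have hmem : F - G ∈ II n := Ideal.Quotient.eq.1 h
  rw [II, Ideal.mem_span_singleton] at hmem
  have h2 := (X_pow_dvd_iff.1 hmem) n (by omega)
  rw [map_sub] at h2
  exact sub_eq_zero.1 h2

theorem isUnit_P (n : ℕ) (s : Finset ℕ) (hs : ∀ k ∈ s, 0 < k) :
    IsUnit (∏ k ∈ s, pi n (1 - (X : PowerSeries ℚ) ^ k)) :=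
  IsUnit.of_mul_eq_one (∏ k ∈ s, pi n (indicatorSeries ℚ {m | k ∣ m})) (by
    rw [← Finset.prod_mul_distrib]
    exact Finset.prod_eq_one fun k hk => pi_unit n (hs k hk))

theorem key (l r n : ℕ) (hl : 1 < l) :
    coeff (R := ℚ) n (∏ i ∈ s0 n,
        indicatorSeries ℚ ((· * i) '' {x | ∃ a < l, ∃ j < 2, x = 2 * a + j * (2 * r + 1)}))
      = coeff (R := ℚ) n (∏ b ∈ (s0 n).filter
            (fun b => (2 ∣ b ∧ ¬ (2 * l) ∣ b) ∨ ((2 * r + 1) ∣ b ∧ ¬ (4 * r + 2) ∣ b)),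
          indicatorSeries ℚ {m | b ∣ m}) := by
  set F := ∏ i ∈ s0 n,
    indicatorSeries ℚ ((· * i) '' {x | ∃ a < l, ∃ j < 2, x = 2 * a + j * (2 * r + 1)}) with hF
  set T := (s0 n).filter
    (fun b => (2 ∣ b ∧ ¬ (2 * l) ∣ b) ∨ ((2 * r + 1) ∣ b ∧ ¬ (4 * r + 2) ∣ b)) with hT
  set G := ∏ b ∈ T, indicatorSeries ℚ {m | b ∣ m} with hG
  -- step 1
  have h1 : pi n F * ((∏ k ∈ Sa n (2), pi n (1 - (X : PowerSeries ℚ) ^ k)) * (∏ k ∈ Sa n (2 * r + 1), pi n (1 - (X : PowerSeries ℚ) ^ k)))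
      = (∏ k ∈ Sa n (2 * l), pi n (1 - (X : PowerSeries ℚ) ^ k)) * (∏ k ∈ Sa n (4 * r + 2), pi n (1 - (X : PowerSeries ℚ) ^ k)) := by
    rw [hF, map_prod]
    rw [← prod_reindex n 2 (by omega), ← prod_reindex n (2 * r + 1) (by omega),
      ← prod_reindex n (2 * l) (by omega), ← prod_reindex n (4 * r + 2) (by omega)]
    rw [← Finset.prod_mul_distrib, ← Finset.prod_mul_distrib, ← Finset.prod_mul_distrib]
    refine Finset.prod_congr rfl fun i hi => ?_
    have hi0 : 0 < i := ((mem_s0 n).1 hi).1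
    rw [← map_mul, ← map_mul, ← map_mul]
    rw [show indicatorSeries ℚ ((· * i) '' {x | ∃ a < l, ∃ j < 2, x = 2 * a + j * (2 * r + 1)})
        * ((1 - (X : PowerSeries ℚ) ^ (2 * i)) * (1 - X ^ ((2 * r + 1) * i)))
        = (1 - X ^ (2 * l * i)) * (1 - X ^ ((4 * r + 2) * i)) from indA_mul l r i hi0]
  -- step 2
  have h2 : pi n G * (∏ b ∈ T, pi n (1 - (X : PowerSeries ℚ) ^ b)) = 1 := by
    rw [hG, map_prod, ← Finset.prod_mul_distrib]
    refine Finset.prod_eq_one fun b hb => ?_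
    have hb0 : 0 < b := ((mem_s0 n).1 (Finset.mem_filter.1 hb).1).1
    rw [mul_comm]
    exact pi_unit n hb0
  -- step 3
  have hTset : T = (Sa n 2 \ Sa n (2 * l)) ∪ (Sa n (2 * r + 1) \ Sa n (4 * r + 2)) := by
    ext k
    simp only [hT, Finset.mem_union, Finset.mem_sdiff, mem_Sa, Finset.mem_filter, mem_s0]
    tauto
  have hsub1 : Sa n (2 * l) ⊆ Sa n 2 := fun k hk => by
    obtain ⟨hk1, hk2⟩ := (mem_Sa n).1 hk
    exact (mem_Sa n).2 ⟨hk1, dvd_trans (Dvd.intro l rfl) hk2⟩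
  have hsub2 : Sa n (4 * r + 2) ⊆ Sa n (2 * r + 1) := fun k hk => by
    obtain ⟨hk1, hk2⟩ := (mem_Sa n).1 hk
    exact (mem_Sa n).2 ⟨hk1, dvd_trans ⟨2, by ring⟩ hk2⟩
  have hdisj : Disjoint (Sa n 2 \ Sa n (2 * l)) (Sa n (2 * r + 1) \ Sa n (4 * r + 2)) := by
    rw [Finset.disjoint_left]
    rintro k hk1 hk2
    obtain ⟨hka, hkb⟩ := Finset.mem_sdiff.1 hk1
    obtain ⟨hkc, hkd⟩ := Finset.mem_sdiff.1 hk2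
    obtain ⟨hk1', h2dvd⟩ := (mem_Sa n).1 hka
    obtain ⟨_, hodvd⟩ := (mem_Sa n).1 hkc
    apply hkd
    refine (mem_Sa n).2 ⟨hk1', ?_⟩
    have hcop : Nat.Coprime 2 (2 * r + 1) := by
      rw [Nat.coprime_two_left]
      exact ⟨r, by ring⟩
    have h6 := Nat.Coprime.mul_dvd_of_dvd_of_dvd hcop h2dvd hodvd
    rwa [show 2 * (2 * r + 1) = 4 * r + 2 by ring] at h6
  have h3 : (∏ b ∈ T, pi n (1 - (X : PowerSeries ℚ) ^ b))
        * ((∏ k ∈ Sa n (2 * l), pi n (1 - (X : PowerSeries ℚ) ^ k)) * (∏ k ∈ Sa n (4 * r + 2), pi n (1 - (X : PowerSeries ℚ) ^ k)))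
      = (∏ k ∈ Sa n (2), pi n (1 - (X : PowerSeries ℚ) ^ k)) * (∏ k ∈ Sa n (2 * r + 1), pi n (1 - (X : PowerSeries ℚ) ^ k)) := by
    rw [hTset, Finset.prod_union hdisj, mul_mul_mul_comm]
    rw [Finset.prod_sdiff hsub1, Finset.prod_sdiff hsub2]
  -- units
  have hsT : ∀ k ∈ T, 0 < k := fun k hk => ((mem_s0 n).1 (Finset.mem_filter.1 hk).1).1
  have hsSa : ∀ a : ℕ, ∀ k ∈ Sa n a, 0 < k := fun a k hk => ((mem_Sa n).1 hk).1.1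
  have hU : IsUnit ((∏ k ∈ Sa n (2), pi n (1 - (X : PowerSeries ℚ) ^ k)) * (∏ k ∈ Sa n (2 * r + 1), pi n (1 - (X : PowerSeries ℚ) ^ k))
      * (∏ b ∈ T, pi n (1 - (X : PowerSeries ℚ) ^ b))) :=
    ((isUnit_P n _ (hsSa 2)).mul (isUnit_P n _ (hsSa (2 * r + 1)))).mul (isUnit_P n T hsT)
  -- cancel
  have eF : pi n F * ((∏ k ∈ Sa n (2), pi n (1 - (X : PowerSeries ℚ) ^ k)) * (∏ k ∈ Sa n (2 * r + 1), pi n (1 - (X : PowerSeries ℚ) ^ k))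
        * (∏ b ∈ T, pi n (1 - (X : PowerSeries ℚ) ^ b)))
      = (∏ k ∈ Sa n (2), pi n (1 - (X : PowerSeries ℚ) ^ k)) * (∏ k ∈ Sa n (2 * r + 1), pi n (1 - (X : PowerSeries ℚ) ^ k)) := by
    linear_combination (∏ b ∈ T, pi n (1 - (X : PowerSeries ℚ) ^ b)) * h1 + h3
  have eG : pi n G * ((∏ k ∈ Sa n (2), pi n (1 - (X : PowerSeries ℚ) ^ k)) * (∏ k ∈ Sa n (2 * r + 1), pi n (1 - (X : PowerSeries ℚ) ^ k))
        * (∏ b ∈ T, pi n (1 - (X : PowerSeries ℚ) ^ b)))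
      = (∏ k ∈ Sa n (2), pi n (1 - (X : PowerSeries ℚ) ^ k)) * (∏ k ∈ Sa n (2 * r + 1), pi n (1 - (X : PowerSeries ℚ) ^ k)) := by
    linear_combination ((∏ k ∈ Sa n (2), pi n (1 - (X : PowerSeries ℚ) ^ k)) * (∏ k ∈ Sa n (2 * r + 1), pi n (1 - (X : PowerSeries ℚ) ^ k))) * h2
  exact coeff_eq_of_pi_eq n (hU.mul_left_cancel (by linear_combination eF - eG))

end
end SubbaraoAux


open Finset PowerSeries SubbaraoAux in
/-- Subbarao's theorem. -/
theorem subbarao (l r n : ℕ) (hl : 1 < l) :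
    partP {x | ∃ i < l, ∃ j < 2, x = 2 * i + j * (2 * r + 1)} n
      = partQ {b | (2 ∣ b ∧ ¬ (2 * l) ∣ b) ∨ ((2 * r + 1) ∣ b ∧ ¬ (4 * r + 2) ∣ b)} n := by
  set A : Set ℕ := {x | ∃ i < l, ∃ j < 2, x = 2 * i + j * (2 * r + 1)} with hA
  set B : Set ℕ := {b | (2 ∣ b ∧ ¬ (2 * l) ∣ b) ∨ ((2 * r + 1) ∣ b ∧ ¬ (4 * r + 2) ∣ b)} with hB
  have h0A : (0 : ℕ) ∈ A := ⟨0, by omega, 0, by omega, by simp⟩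
  have hbound : ∀ (p : Nat.Partition n), ∀ j ∈ p.parts, j ∈ s0 n := by
    intro p j hj
    rw [mem_s0]
    refine ⟨p.parts_pos hj, ?_⟩
    simpa [p.parts_sum] using Multiset.single_le_sum (fun _ _ => Nat.zero_le _) _ hj
  set T := (s0 n).filter
    (fun b => (2 ∣ b ∧ ¬ (2 * l) ∣ b) ∨ ((2 * r + 1) ∣ b ∧ ¬ (4 * r + 2) ∣ b)) with hTd
  -- left side
  have hL := partialGF_prop ℚ n (s0 n) (fun i hi => ((mem_s0 n).1 hi).1) (fun _ => A)
    (fun i _ => h0A)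
  have hLcard : partP A n
      = #{p : n.Partition | (∀ j, p.parts.count j ∈ A) ∧ ∀ j ∈ p.parts, j ∈ s0 n} := by
    rw [partP]
    congr 1
    ext p
    simp only [Finset.mem_filter, Finset.mem_univ, true_and]
    constructor
    · intro h
      refine ⟨fun j => ?_, hbound p⟩
      by_cases hj : j ∈ p.parts
      · exact h j hj
      · rw [Multiset.count_eq_zero_of_notMem hj]
        exact h0A
    · exact fun h i hi => h.1 i
  have step1 : (partP A n : ℚ) = coeff (R := ℚ) n (∏ i ∈ s0 n, indicatorSeries ℚ ((· * i) '' A)) := by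
    rw [hLcard]; exact hL
  -- right side
  have hR := partialGF_prop ℚ n T (fun i hi => ((mem_s0 n).1 (Finset.mem_filter.1 hi).1).1)
    (fun _ => Set.univ) (fun _ _ => trivial)
  have hind : ∀ b : ℕ, indicatorSeries ℚ ((· * b) '' (Set.univ : Set ℕ))
      = indicatorSeries ℚ {m | b ∣ m} := by
    intro b
    have hset : ((· * b) '' (Set.univ : Set ℕ)) = {m | b ∣ m} := by
      ext m
      constructor
      · rintro ⟨x, -, rfl⟩
        exact Dvd.intro_left x rfl
      · rintro ⟨c, rfl⟩
        exact ⟨c, trivial, mul_comm c b⟩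
    rw [hset]
  simp_rw [hind] at hR
  have hRcard : partQ B n
      = #{p : n.Partition | (∀ j, p.parts.count j ∈ (Set.univ : Set ℕ)) ∧
          ∀ j ∈ p.parts, j ∈ T} := by
    rw [partQ]
    congr 1
    ext p
    simp only [Finset.mem_filter, Finset.mem_univ, true_and]
    constructor
    · intro h
      exact ⟨fun _ => trivial, fun j hj => Finset.mem_filter.2 ⟨hbound p j hj, h j hj⟩⟩
    · intro h i hi
      exact (Finset.mem_filter.1 (h.2 i hi)).2
  have step3 : (partQ B n : ℚ)
      = coeff (R := ℚ) n (∏ b ∈ T, indicatorSeries ℚ {m | b ∣ m}) := by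
    rw [hRcard]; exact hR
  -- combine
  have hkey := key l r n hl
  rw [← hA] at hkey
  rw [← hTd] at hkey
  have : (partP A n : ℚ) = (partQ B n : ℚ) := by rw [step1, step3]; exact hkey
  exact_mod_cast this
end

section
/- Let l, r, a, p be positive integers with gcd(a, p) = 1. Then for all n, the number of partitions of n whose part multiplicities all lie in {pi + j(pr+a) : 0 ≤ i ≤ l−1, 0 ≤ j ≤ p−1} equals the number of partitions of n into parts lying in (pℕ \ lpℕ) ∪ ((pr+a)ℕ \ p(pr+a)ℕ). -/
open scoped Classical



namespace NM
open Finsupp Finset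

noncomputable def w (f : ℕ →₀ ℕ) : ℕ := f.sum fun k m => k * m

lemma w_single (a n : ℕ) : w (Finsupp.single a n) = a * n :=
  Finsupp.sum_single_index (by simp)

lemma w_add (f g : ℕ →₀ ℕ) : w (f + g) = w f + w g :=
  Finsupp.sum_add_index' (by simp) (fun a b c => mul_add a b c)

noncomputable def wHom : (ℕ →₀ ℕ) →+ ℕ where
  toFun := w
  map_zero' := Finsupp.sum_zero_index
  map_add' := w_add

lemma w_sum_subset {f : ℕ →₀ ℕ} {s : Finset ℕ} (h : f.support ⊆ s) :
    w f = ∑ k ∈ s, k * f k :=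
  Finset.sum_subset h (fun x _ hx => by
    simp [Finsupp.notMem_support_iff.mp hx])

lemma w_toFinsupp (s : Multiset ℕ) : w s.toFinsupp = s.sum := by
  induction s using Multiset.induction with
  | empty => simp [w]
  | cons a s ih =>
    rw [← Multiset.singleton_add, Multiset.toFinsupp_add, w_add, ih,
      Multiset.toFinsupp_singleton, w_single, Multiset.sum_add, Multiset.sum_singleton]
    ring

noncomputable def partEquiv (n : ℕ) (P : ℕ → ℕ → Prop) :
    {pt : Nat.Partition n // ∀ i ∈ pt.parts, P i (pt.parts.count i)} ≃
      {f : ℕ →₀ ℕ // f 0 = 0 ∧ w f = n ∧ ∀ k, f k ≠ 0 → P k (f k)} where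
  toFun pt := ⟨pt.1.parts.toFinsupp, by
    refine ⟨?_, ?_, ?_⟩
    · rw [Multiset.toFinsupp_apply, Multiset.count_eq_zero]
      intro h
      exact absurd (pt.1.parts_pos h) (lt_irrefl 0)
    · rw [w_toFinsupp, pt.1.parts_sum]
    · intro k hk
      rw [Multiset.toFinsupp_apply] at hk ⊢
      exact pt.2 k (Multiset.count_pos.mp (Nat.pos_of_ne_zero hk))⟩
  invFun f := ⟨⟨f.1.toMultiset, by
      intro i hi
      rw [Finsupp.mem_toMultiset, Finsupp.mem_support_iff] at hi
      rcases Nat.eq_zero_or_pos i with h | h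
      · exact absurd (h ▸ f.2.1) hi
      · exact h, by
      rw [← w_toFinsupp, Finsupp.toMultiset_toFinsupp]; exact f.2.2.1⟩, by
    intro i hi
    rw [Finsupp.count_toMultiset]
    rw [Finsupp.mem_toMultiset, Finsupp.mem_support_iff] at hi
    exact f.2.2.2 i hi⟩
  left_inv pt := by
    apply Subtype.ext
    cases pt with
    | mk pt h =>
      cases pt with
      | mk parts h1 h2 => simp [Multiset.toFinsupp_toMultiset]
  right_inv f := by
    apply Subtype.ext
    simp [Finsupp.toMultiset_toFinsupp]

lemma partP_eq (A : Set ℕ) (n : ℕ) :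
    partP A n = Nat.card {f : ℕ →₀ ℕ // f 0 = 0 ∧ w f = n ∧ ∀ k, f k ≠ 0 → f k ∈ A} := by
  rw [partP, ← Fintype.card_subtype, ← Nat.card_eq_fintype_card]
  exact Nat.card_congr (partEquiv n (fun _ m => m ∈ A))

lemma partQ_eq (B : Set ℕ) (n : ℕ) :
    partQ B n = Nat.card {f : ℕ →₀ ℕ // f 0 = 0 ∧ w f = n ∧ ∀ k, f k ≠ 0 → k ∈ B} := by
  rw [partQ, ← Fintype.card_subtype, ← Nat.card_eq_fintype_card]
  exact Nat.card_congr (partEquiv n (fun k _ => k ∈ B))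

end NM

namespace NM
open Finsupp Finset

noncomputable def cor (b k : ℕ) : ℕ := k / b ^ (Nat.maxPowDiv b k)
noncomputable def exv (b k : ℕ) : ℕ := Nat.maxPowDiv b k

lemma pow_exv_mul_cor (b k : ℕ) : b ^ exv b k * cor b k = k :=
  Nat.mul_div_cancel' (Nat.maxPowDiv.pow_dvd (p := b) (n := k))

lemma cor_ne_zero {b k : ℕ} (hk : k ≠ 0) : cor b k ≠ 0 := by
  intro h
  apply hk
  rw [← pow_exv_mul_cor b k, h, mul_zero]

lemma maxPowDiv_eq_zero {b k : ℕ} (h : ¬ b ∣ k) : Nat.maxPowDiv b k = 0 := by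
  by_contra hne
  exact h (dvd_trans (dvd_pow_self b hne) (Nat.maxPowDiv.pow_dvd (p := b) (n := k)))

lemma not_dvd_cor {b k : ℕ} (hb : 2 ≤ b) (hk : k ≠ 0) : ¬ b ∣ cor b k := by
  intro ⟨c, hc⟩
  have hkk := pow_exv_mul_cor b k
  rw [hc] at hkk
  have h2 : b ^ (exv b k + 1) * c = k := by rw [pow_succ, mul_assoc]; exact hkk
  have h1 : b ^ (exv b k + 1) ∣ k := ⟨c, h2.symm⟩
  have : exv b k + 1 ≤ exv b k := (Nat.pow_dvd_iff_le_padicValNat (by omega : b ≠ 1) hk).mp h1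
  simp [exv] at this

lemma exv_pow_mul {b k : ℕ} (hb : 2 ≤ b) (hk : k ≠ 0) (h : ¬ b ∣ k) (e : ℕ) :
    exv b (b ^ e * k) = e := by
  rw [exv]
  show padicValNat b (b ^ e * k) = e
  rw [Nat.maxPowDiv.base_pow_mul hb hk,
    show padicValNat b k = 0 from maxPowDiv_eq_zero h, zero_add]

lemma cor_pow_mul {b k : ℕ} (hb : 2 ≤ b) (hk : k ≠ 0) (h : ¬ b ∣ k) (e : ℕ) :
    cor b (b ^ e * k) = k := by
  have he : Nat.maxPowDiv b (b ^ e * k) = e := exv_pow_mul hb hk h e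
  rw [cor, he]
  exact Nat.mul_div_cancel_left k (by positivity)

noncomputable def dig (b m e : ℕ) : ℕ := m / b ^ e % b

lemma dig_lt {b : ℕ} (hb : 2 ≤ b) (m e : ℕ) : dig b m e < b :=
  Nat.mod_lt _ (by omega)

lemma dig_eq_zero_of_lt {b m e : ℕ} (h : m < b ^ e) : dig b m e = 0 := by
  rw [dig, Nat.div_eq_of_lt h, Nat.zero_mod]

lemma lt_pow_of_le {b m e : ℕ} (hb : 2 ≤ b) (h : m < e) : m < b ^ e := by
  calc m < e := h
  _ < 2 ^ e := Nat.lt_two_pow_self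
  _ ≤ b ^ e := Nat.pow_le_pow_left hb e

lemma sum_dig_mul {b : ℕ} (hb : 2 ≤ b) (m T : ℕ) :
    ∑ e ∈ Finset.range T, dig b m e * b ^ e = m % b ^ T := by
  induction T with
  | zero => simp [Nat.mod_one]
  | succ T ih =>
    rw [Finset.sum_range_succ, ih, pow_succ, Nat.mod_mul, dig]
    ring

lemma sum_lt_pow {b : ℕ} (hb : 2 ≤ b) {c : ℕ → ℕ} (hc : ∀ e, c e < b) (T : ℕ) :
    ∑ e ∈ Finset.range T, c e * b ^ e < b ^ T := by
  induction T with
  | zero => simp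
  | succ T ih =>
    rw [Finset.sum_range_succ, pow_succ]
    have h1 : c T + 1 ≤ b := hc T
    calc ∑ e ∈ Finset.range T, c e * b ^ e + c T * b ^ T
        < b ^ T + c T * b ^ T := Nat.add_lt_add_right ih _
      _ = (c T + 1) * b ^ T := by ring
      _ ≤ b * b ^ T := Nat.mul_le_mul_right _ h1
      _ = b ^ T * b := mul_comm _ _

lemma dig_sum {b : ℕ} (hb : 2 ≤ b) {c : ℕ → ℕ} (hc : ∀ e, c e < b) (T i : ℕ) :
    dig b (∑ e ∈ Finset.range T, c e * b ^ e) i = if i < T then c i else 0 := by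
  split_ifs with h
  · -- i < T
    have hsplit : Finset.range T = Finset.range (i + 1) ∪ Finset.Ico (i + 1) T := by
      rw [Finset.range_eq_Ico, Finset.range_eq_Ico]
      exact (Finset.Ico_union_Ico_eq_Ico (a := 0) (b := i + 1) (c := T) (by omega) (by omega)).symm
    have hdisj : Disjoint (Finset.range (i + 1)) (Finset.Ico (i + 1) T) := by
      simp [Finset.disjoint_left, Finset.mem_Ico]
      omega
    rw [hsplit, Finset.sum_union hdisj, Finset.sum_range_succ]
    have hre : ∑ e ∈ Finset.Ico (i + 1) T, c e * b ^ e
        = b ^ (i + 1) * ∑ e ∈ Finset.range (T - (i + 1)), c (i + 1 + e) * b ^ e := by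
      rw [Finset.sum_Ico_eq_sum_range, Finset.mul_sum]
      apply Finset.sum_congr rfl
      intro e _
      rw [pow_add]
      ring
    rw [hre]
    set A := ∑ e ∈ Finset.range i, c e * b ^ e with hA
    set D := ∑ e ∈ Finset.range (T - (i + 1)), c (i + 1 + e) * b ^ e with hD
    have hAlt : A < b ^ i := sum_lt_pow hb hc i
    have hbi : 0 < b ^ i := by positivity
    have hform : A + c i * b ^ i + b ^ (i + 1) * D = A + b ^ i * (c i + b * D) := by
      rw [pow_succ]; ring
    rw [dig, hform, Nat.add_mul_div_left _ _ hbi, Nat.div_eq_of_lt hAlt, zero_add,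
      Nat.add_mul_mod_self_left, Nat.mod_eq_of_lt (hc i)]
  · -- i ≥ T
    apply dig_eq_zero_of_lt
    calc ∑ e ∈ Finset.range T, c e * b ^ e < b ^ T := sum_lt_pow hb hc T
    _ ≤ b ^ i := Nat.pow_le_pow_right (by omega) (by omega)

end NM

namespace NM
open Finsupp Finset

lemma w_def (f : ℕ →₀ ℕ) : w f = ∑ k ∈ f.support, k * f k := rfl

noncomputable def Fm (b : ℕ) (f : ℕ →₀ ℕ) : ℕ →₀ ℕ :=
  f.sum fun k m => Finsupp.single (cor b k) (m * b ^ exv b k)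

noncomputable def Gm (b : ℕ) (g : ℕ →₀ ℕ) : ℕ →₀ ℕ :=
  g.sum fun k m => ∑ e ∈ Finset.range (m + 1), Finsupp.single (b ^ e * k) (dig b m e)

lemma Fm_zero (b : ℕ) : Fm b 0 = 0 := Finsupp.sum_zero_index
lemma Gm_zero (b : ℕ) : Gm b 0 = 0 := Finsupp.sum_zero_index

lemma Fm_apply (b : ℕ) (f : ℕ →₀ ℕ) (x : ℕ) :
    Fm b f x = ∑ k ∈ f.support, if cor b k = x then f k * b ^ exv b k else 0 := by
  rw [Fm, Finsupp.sum_apply, Finsupp.sum]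
  exact Finset.sum_congr rfl fun k _ => Finsupp.single_apply

lemma Fm_good {b : ℕ} (hb : 2 ≤ b) {f : ℕ →₀ ℕ} (hf0 : f 0 = 0) {x : ℕ}
    (hx : Fm b f x ≠ 0) : ¬ b ∣ x ∧ x ≠ 0 := by
  rw [Fm_apply] at hx
  obtain ⟨k, hk, hne⟩ := Finset.exists_ne_zero_of_sum_ne_zero hx
  have hkx : cor b k = x := by
    by_contra h
    rw [if_neg h] at hne
    exact hne rfl
  have hk0 : k ≠ 0 := fun h => (Finsupp.mem_support_iff.mp hk) (h ▸ hf0)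
  exact ⟨hkx ▸ not_dvd_cor hb hk0, hkx ▸ cor_ne_zero hk0⟩

lemma Fm_apply_eq {b : ℕ} (hb : 2 ≤ b) {f : ℕ →₀ ℕ} {x : ℕ} (hx : x ≠ 0)
    (hbx : ¬ b ∣ x) {T : ℕ} (hT : ∀ e, T ≤ e → f (b ^ e * x) = 0) :
    Fm b f x = ∑ e ∈ Finset.range T, f (b ^ e * x) * b ^ e := by
  rw [Fm_apply, ← Finset.sum_filter]
  rw [← Finset.sum_filter_of_ne (s := Finset.range T)
      (f := fun e => f (b ^ e * x) * b ^ e) (p := fun e => f (b ^ e * x) ≠ 0)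
      (fun e _ h hf => h (by simp [hf]))]
  refine Finset.sum_nbij' (fun k => exv b k) (fun e => b ^ e * x) ?_ ?_ ?_ ?_ ?_
  · intro k hk
    rw [Finset.mem_filter] at hk ⊢
    obtain ⟨hks, hkc⟩ := hk
    have hfk : f k ≠ 0 := Finsupp.mem_support_iff.mp hks
    have hkeq : b ^ exv b k * x = k := by rw [← hkc]; exact pow_exv_mul_cor b k
    constructor
    · rw [Finset.mem_range]
      by_contra h
      exact hfk (by rw [← hkeq]; exact hT _ (by omega))
    · rw [hkeq]; exact hfk
  · intro e he
    rw [Finset.mem_filter] at he ⊢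
    exact ⟨Finsupp.mem_support_iff.mpr he.2, cor_pow_mul hb hx hbx e⟩
  · intro k hk
    rw [Finset.mem_filter] at hk
    rw [← hk.2]; exact pow_exv_mul_cor b k
  · intro e _
    exact exv_pow_mul hb hx hbx e
  · intro k hk
    rw [Finset.mem_filter] at hk
    have hkeq : b ^ exv b k * x = k := by rw [← hk.2]; exact pow_exv_mul_cor b k
    rw [hkeq]

lemma w_Fm (b : ℕ) (f : ℕ →₀ ℕ) : w (Fm b f) = w f := by
  have h1 : w (Fm b f) = ∑ k ∈ f.support, cor b k * (f k * b ^ exv b k) := by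
    rw [Fm]
    rw [show w (f.sum fun k m => Finsupp.single (cor b k) (m * b ^ exv b k))
        = wHom (f.sum fun k m => Finsupp.single (cor b k) (m * b ^ exv b k)) from rfl]
    rw [map_finsuppSum, Finsupp.sum]
    exact Finset.sum_congr rfl fun k _ => w_single _ _
  rw [h1, w_def]
  apply Finset.sum_congr rfl
  intro k _
  have h := pow_exv_mul_cor b k
  set c := cor b k
  set E := exv b k
  rw [← h]
  ring

lemma Gm_apply_ne {b : ℕ} (hb : 2 ≤ b) {g : ℕ →₀ ℕ} (hg : ∀ k, g k ≠ 0 → ¬ b ∣ k)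
    {x : ℕ} (hx : x ≠ 0) : Gm b g x = dig b (g (cor b x)) (exv b x) := by
  have hsupp : ∀ k, k ∈ g.support → (¬ b ∣ k ∧ k ≠ 0) := by
    intro k hk
    have := hg k (Finsupp.mem_support_iff.mp hk)
    exact ⟨this, fun h => this (h ▸ dvd_zero b)⟩
  have h1 : Gm b g x = ∑ k ∈ g.support, ∑ e ∈ Finset.range (g k + 1),
      (if b ^ e * k = x then dig b (g k) e else 0) := by
    rw [Gm, Finsupp.sum_apply, Finsupp.sum]
    refine Finset.sum_congr rfl fun k _ => ?_
    rw [Finsupp.finset_sum_apply]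
    exact Finset.sum_congr rfl fun e _ => Finsupp.single_apply
  rw [h1]
  rw [Finset.sum_eq_single (cor b x)]
  · by_cases hmem : cor b x ∈ g.support
    · obtain ⟨hnd, hn0⟩ := hsupp _ hmem
      have hcond : ∀ e, (b ^ e * cor b x = x) ↔ (e = exv b x) := by
        intro e
        constructor
        · intro h
          rw [← h, exv_pow_mul hb hn0 hnd]
        · intro h
          rw [h]; exact pow_exv_mul_cor b x
      rw [Finset.sum_congr rfl (fun e _ => by rw [if_congr (hcond e) rfl rfl])]
      rw [Finset.sum_ite_eq' (Finset.range (g (cor b x) + 1)) (exv b x)]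
      split_ifs with h
      · rfl
      · rw [Finset.mem_range] at h
        exact (dig_eq_zero_of_lt (lt_pow_of_le hb (by omega))).symm
    · have hg0 : g (cor b x) = 0 := Finsupp.notMem_support_iff.mp hmem
      rw [hg0]
      simp [dig]
  · intro k hk hkne
    apply Finset.sum_eq_zero
    intro e _
    obtain ⟨hnd, hn0⟩ := hsupp _ hk
    rw [if_neg]
    intro h
    exact hkne (by rw [← h, cor_pow_mul hb hn0 hnd])
  · intro hmem
    have hg0 : g (cor b x) = 0 := Finsupp.notMem_support_iff.mp hmem
    rw [hg0]
    simp [dig]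

lemma Gm_apply_zero {b : ℕ} (hb : 2 ≤ b) {g : ℕ →₀ ℕ} (hg : ∀ k, g k ≠ 0 → ¬ b ∣ k) :
    Gm b g 0 = 0 := by
  have h1 : Gm b g 0 = ∑ k ∈ g.support, ∑ e ∈ Finset.range (g k + 1),
      (if b ^ e * k = 0 then dig b (g k) e else 0) := by
    rw [Gm, Finsupp.sum_apply, Finsupp.sum]
    refine Finset.sum_congr rfl fun k _ => ?_
    rw [Finsupp.finset_sum_apply]
    exact Finset.sum_congr rfl fun e _ => Finsupp.single_apply
  rw [h1]
  apply Finset.sum_eq_zero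
  intro k hk
  apply Finset.sum_eq_zero
  intro e _
  have hgk := hg k (Finsupp.mem_support_iff.mp hk)
  have hk0 : k ≠ 0 := fun h => hgk (h ▸ dvd_zero b)
  rw [if_neg]
  positivity

lemma Gm_lt {b : ℕ} (hb : 2 ≤ b) {g : ℕ →₀ ℕ} (hg : ∀ k, g k ≠ 0 → ¬ b ∣ k) (x : ℕ) :
    Gm b g x < b := by
  rcases Nat.eq_zero_or_pos x with hx | hx
  · rw [hx, Gm_apply_zero hb hg]; omega
  · rw [Gm_apply_ne hb hg (by omega)]
    exact dig_lt hb _ _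

lemma w_Gm {b : ℕ} (hb : 2 ≤ b) (g : ℕ →₀ ℕ) : w (Gm b g) = w g := by
  have h1 : w (Gm b g) = ∑ k ∈ g.support, ∑ e ∈ Finset.range (g k + 1),
      (b ^ e * k) * dig b (g k) e := by
    rw [Gm]
    rw [show w (g.sum fun k m => ∑ e ∈ Finset.range (m + 1),
        Finsupp.single (b ^ e * k) (dig b m e))
        = wHom (g.sum fun k m => ∑ e ∈ Finset.range (m + 1),
        Finsupp.single (b ^ e * k) (dig b m e)) from rfl]
    rw [map_finsuppSum, Finsupp.sum]
    refine Finset.sum_congr rfl fun k _ => ?_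
    rw [map_sum]
    exact Finset.sum_congr rfl fun e _ => w_single _ _
  rw [h1, w_def]
  apply Finset.sum_congr rfl
  intro k _
  have h2 : ∑ e ∈ Finset.range (g k + 1), (b ^ e * k) * dig b (g k) e
      = k * ∑ e ∈ Finset.range (g k + 1), dig b (g k) e * b ^ e := by
    rw [Finset.mul_sum]
    exact Finset.sum_congr rfl fun e _ => by ring
  rw [h2, sum_dig_mul hb, Nat.mod_eq_of_lt (lt_pow_of_le hb (by omega))]

lemma Gm_Fm {b : ℕ} (hb : 2 ≤ b) {f : ℕ →₀ ℕ} (hf0 : f 0 = 0) (hf : ∀ k, f k < b) :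
    Gm b (Fm b f) = f := by
  have hgood : ∀ k, Fm b f k ≠ 0 → ¬ b ∣ k := fun k hk => (Fm_good hb hf0 hk).1
  set T := (f.support.sup id) + 1 with hT
  have hout : ∀ y : ℕ, f.support.sup id < y → f y = 0 := by
    intro y hy
    by_contra hne
    have := Finset.le_sup (f := id) (Finsupp.mem_support_iff.mpr hne)
    simp at this
    omega
  ext x
  rcases Nat.eq_zero_or_pos x with hx | hx
  · rw [hx, Gm_apply_zero hb hgood, hf0]
  have hx0 : x ≠ 0 := by omega
  rw [Gm_apply_ne hb hgood hx0]
  have hcne : cor b x ≠ 0 := cor_ne_zero hx0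
  have hcnd : ¬ b ∣ cor b x := not_dvd_cor hb hx0
  have h2e : ∀ e, T ≤ e → f (b ^ e * cor b x) = 0 := by
    intro e he
    apply hout
    have h4 : e < 2 ^ e := Nat.lt_two_pow_self
    have h5 : 2 ^ e ≤ b ^ e := Nat.pow_le_pow_left hb e
    have h6 : b ^ e ≤ b ^ e * cor b x :=
      Nat.le_mul_of_pos_right _ (Nat.pos_of_ne_zero hcne)
    omega
  rw [Fm_apply_eq hb hcne hcnd h2e]
  rw [dig_sum hb (fun e => hf _)]
  split_ifs with h
  · rw [pow_exv_mul_cor]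
  · -- exv b x ≥ T, so x is huge, f x = 0
    have hxeq : b ^ exv b x * cor b x = x := pow_exv_mul_cor b x
    have h4 : exv b x < 2 ^ exv b x := Nat.lt_two_pow_self
    have h5 : (2:ℕ) ^ exv b x ≤ b ^ exv b x := Nat.pow_le_pow_left hb _
    have h6 : b ^ exv b x ≤ b ^ exv b x * cor b x :=
      Nat.le_mul_of_pos_right _ (Nat.pos_of_ne_zero hcne)
    exact (hout x (by omega)).symm

lemma Fm_Gm {b : ℕ} (hb : 2 ≤ b) {g : ℕ →₀ ℕ} (hg : ∀ k, g k ≠ 0 → ¬ b ∣ k) :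
    Fm b (Gm b g) = g := by
  have hGm0 : Gm b g 0 = 0 := Gm_apply_zero hb hg
  ext x
  by_cases hx : x = 0
  · have h0 : g 0 = 0 := by
      by_contra hg0
      exact hg 0 hg0 (dvd_zero b)
    rw [hx, h0]
    by_contra hne
    exact (Fm_good hb hGm0 hne).2 rfl
  by_cases hbx : b ∣ x
  · have h1 : Fm b (Gm b g) x = 0 := by
      by_contra hne
      exact (Fm_good hb hGm0 hne).1 hbx
    have h2 : g x = 0 := by
      by_contra hne
      exact hg x hne hbx
    rw [h1, h2]
  · have hT : ∀ e, g x + 1 ≤ e → Gm b g (b ^ e * x) = 0 := by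
      intro e he
      have hne : b ^ e * x ≠ 0 := by positivity
      rw [Gm_apply_ne hb hg hne, cor_pow_mul hb hx hbx, exv_pow_mul hb hx hbx]
      exact dig_eq_zero_of_lt (lt_pow_of_le hb (by omega))
    rw [Fm_apply_eq hb hx hbx hT]
    have h3 : ∀ e ∈ Finset.range (g x + 1), Gm b g (b ^ e * x) * b ^ e
        = dig b (g x) e * b ^ e := by
      intro e _
      have hne : b ^ e * x ≠ 0 := by positivity
      rw [Gm_apply_ne hb hg hne, cor_pow_mul hb hx hbx, exv_pow_mul hb hx hbx]
    rw [Finset.sum_congr rfl h3, sum_dig_mul hb,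
      Nat.mod_eq_of_lt (lt_pow_of_le hb (by omega))]

end NM

namespace NM
open Finsupp Finset

lemma eq_zero_of_lt_one {f : ℕ →₀ ℕ} (hf : ∀ k, f k < 1) : f = 0 := by
  ext k
  have := hf k
  simp at this ⊢
  exact this

lemma eq_zero_of_good_one {g : ℕ →₀ ℕ} (hg : ∀ k, g k ≠ 0 → ¬ (1:ℕ) ∣ k) : g = 0 := by
  ext k
  by_contra h
  exact hg k h (one_dvd k)

noncomputable def glaisherEquiv (b : ℕ) (hb : 0 < b) :
    {f : ℕ →₀ ℕ // f 0 = 0 ∧ ∀ k, f k < b} ≃ {g : ℕ →₀ ℕ // ∀ k, g k ≠ 0 → ¬ b ∣ k} where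
  toFun f := ⟨Fm b f.1, by
    rcases Nat.lt_or_ge b 2 with h2 | h2
    · have hb1 : b = 1 := by omega
      subst hb1
      intro k hk
      rw [eq_zero_of_lt_one f.2.2, Fm_zero] at hk
      exact absurd rfl hk
    · exact fun k hk => (Fm_good h2 f.2.1 hk).1⟩
  invFun g := ⟨Gm b g.1, by
    rcases Nat.lt_or_ge b 2 with h2 | h2
    · have hb1 : b = 1 := by omega
      subst hb1
      rw [eq_zero_of_good_one g.2, Gm_zero]
      exact ⟨rfl, fun k => Nat.one_pos⟩
    · exact ⟨Gm_apply_zero h2 g.2, fun k => Gm_lt h2 g.2 k⟩⟩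
  left_inv f := by
    apply Subtype.ext
    rcases Nat.lt_or_ge b 2 with h2 | h2
    · have hb1 : b = 1 := by omega
      subst hb1
      have hf0 : f.1 = 0 := eq_zero_of_lt_one f.2.2
      show Gm 1 (Fm 1 f.1) = f.1
      rw [hf0, Fm_zero, Gm_zero]
    · exact Gm_Fm h2 f.2.1 f.2.2
  right_inv g := by
    apply Subtype.ext
    rcases Nat.lt_or_ge b 2 with h2 | h2
    · have hb1 : b = 1 := by omega
      subst hb1
      have hg0 : g.1 = 0 := eq_zero_of_good_one g.2
      show Fm 1 (Gm 1 g.1) = g.1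
      rw [hg0, Gm_zero, Fm_zero]
    · exact Fm_Gm h2 g.2

lemma w_glaisherEquiv (b : ℕ) (hb : 0 < b) (f : {f : ℕ →₀ ℕ // f 0 = 0 ∧ ∀ k, f k < b}) :
    w ((glaisherEquiv b hb f).1) = w f.1 := by
  show w (Fm b f.1) = w f.1
  exact w_Fm b f.1

lemma w_glaisherEquiv_symm (b : ℕ) (hb : 0 < b)
    (g : {g : ℕ →₀ ℕ // ∀ k, g k ≠ 0 → ¬ b ∣ k}) :
    w (((glaisherEquiv b hb).symm g).1) = w g.1 := by
  conv_rhs => rw [← (glaisherEquiv b hb).apply_symm_apply g]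
  rw [w_glaisherEquiv]

/-! ### Scaling -/

noncomputable def Sc (d : ℕ) (f : ℕ →₀ ℕ) : ℕ →₀ ℕ := Finsupp.mapDomain (d * ·) f

noncomputable def Un (d : ℕ) (g : ℕ →₀ ℕ) : ℕ →₀ ℕ := Finsupp.mapDomain (· / d) g

lemma Sc_apply_mul {d : ℕ} (hd : d ≠ 0) (f : ℕ →₀ ℕ) (x : ℕ) : Sc d f (d * x) = f x :=
  Finsupp.mapDomain_apply (fun _ _ h => Nat.eq_of_mul_eq_mul_left (Nat.pos_of_ne_zero hd) h) f x

lemma Sc_apply_not_dvd {d : ℕ} (f : ℕ →₀ ℕ) {x : ℕ} (h : ¬ d ∣ x) : Sc d f x = 0 :=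
  Finsupp.mapDomain_notin_range f x (by
    rintro ⟨y, hy⟩
    exact h ⟨y, hy.symm⟩)

lemma Sc_ne_zero {d : ℕ} (hd : d ≠ 0) {f : ℕ →₀ ℕ} {x : ℕ} (h : Sc d f x ≠ 0) :
    ∃ k, x = d * k ∧ f k ≠ 0 := by
  by_cases hdvd : d ∣ x
  · obtain ⟨k, hk⟩ := hdvd
    refine ⟨k, hk, ?_⟩
    rw [hk, Sc_apply_mul hd] at h
    exact h
  · exact absurd (Sc_apply_not_dvd f hdvd) h

lemma w_Sc (d : ℕ) (f : ℕ →₀ ℕ) : w (Sc d f) = d * w f := by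
  rw [Sc]
  rw [show w (Finsupp.mapDomain (d * ·) f) = wHom (Finsupp.mapDomain (d * ·) f) from rfl]
  rw [Finsupp.mapDomain, map_finsuppSum]
  rw [w, Finsupp.sum, Finsupp.sum, Finset.mul_sum]
  refine Finset.sum_congr rfl fun k _ => ?_
  rw [show wHom (Finsupp.single (d * k) (f k)) = w (Finsupp.single (d * k) (f k)) from rfl,
    w_single]
  ring

lemma Un_Sc {d : ℕ} (hd : d ≠ 0) (f : ℕ →₀ ℕ) : Un d (Sc d f) = f := by
  rw [Sc, Un, ← Finsupp.mapDomain_comp]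
  rw [show ((· / d) ∘ (d * ·)) = id from funext fun k => by
    simp [Nat.mul_div_cancel_left k (Nat.pos_of_ne_zero hd)]]
  exact Finsupp.mapDomain_id

lemma Sc_Un {d : ℕ} (hd : d ≠ 0) {g : ℕ →₀ ℕ} (hg : ∀ x, g x ≠ 0 → d ∣ x) :
    Sc d (Un d g) = g := by
  rw [Sc, Un, ← Finsupp.mapDomain_comp]
  rw [Finsupp.mapDomain_congr (g := id)]
  · exact Finsupp.mapDomain_id
  · intro x hx
    have := hg x (Finsupp.mem_support_iff.mp hx)
    simp only [Function.comp_apply, id_eq]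
    exact Nat.mul_div_cancel' this

lemma Un_ne_zero {d : ℕ} {g : ℕ →₀ ℕ} {k : ℕ} (h : Un d g k ≠ 0) :
    ∃ x, x ∈ g.support ∧ x / d = k := by
  have hsupp := Finsupp.mapDomain_support (f := (· / d)) (s := g)
  have hk : k ∈ (Un d g).support := Finsupp.mem_support_iff.mpr h
  have := hsupp hk
  rw [Finset.mem_image] at this
  obtain ⟨x, hx, hxk⟩ := this
  exact ⟨x, hx, hxk⟩

end NM

namespace NM
open Finsupp Finset

noncomputable def jofF (p a' x : ℕ) : ℕ := x * a' % p
noncomputable def iofF (p q a' x : ℕ) : ℕ := (x - jofF p a' x * q) / p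

section Split

variable {l p q a' : ℕ}

lemma jof_zero : jofF p a' 0 = 0 := by simp [jofF]
lemma iof_zero : iofF p q a' 0 = 0 := by simp [iofF, jofF]
lemma jof_lt (hp : 0 < p) (x : ℕ) : jofF p a' x < p := Nat.mod_lt _ hp

lemma dec_i (hp : 0 < p) (hdecj : ∀ i j : ℕ, j < p → jofF p a' (p * i + j * q) = j)
    {i j : ℕ} (hj : j < p) : iofF p q a' (p * i + j * q) = i := by
  rw [iofF, hdecj i j hj, Nat.add_sub_cancel, Nat.mul_div_cancel_left i hp]

lemma recomp (hp : 0 < p) (hdecj : ∀ i j : ℕ, j < p → jofF p a' (p * i + j * q) = j)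
    {x : ℕ} (hx : ∃ i < l, ∃ j < p, x = p * i + j * q) :
    p * iofF p q a' x + jofF p a' x * q = x := by
  obtain ⟨i, _, j, hj, rfl⟩ := hx
  rw [hdecj i j hj, dec_i hp hdecj hj]

lemma bound_i (hp : 0 < p) (hdecj : ∀ i j : ℕ, j < p → jofF p a' (p * i + j * q) = j)
    {x : ℕ} (hx : ∃ i < l, ∃ j < p, x = p * i + j * q) :
    iofF p q a' x < l := by
  obtain ⟨i, hi, j, hj, rfl⟩ := hx
  rw [dec_i hp hdecj hj]
  exact hi

lemma w_onFinset {s : Finset ℕ} {F : ℕ → ℕ} (hf : ∀ a, F a ≠ 0 → a ∈ s) :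
    w (Finsupp.onFinset s F hf) = ∑ k ∈ s, k * F k := by
  rw [w_sum_subset Finsupp.support_onFinset_subset]
  exact Finset.sum_congr rfl fun k _ => by rw [Finsupp.onFinset_apply]

noncomputable def splitEquiv (hl : 0 < l) (hp : 0 < p)
    (hdecj : ∀ i j : ℕ, j < p → jofF p a' (p * i + j * q) = j) (n : ℕ) :
    {f : ℕ →₀ ℕ // f 0 = 0 ∧ w f = n ∧
        ∀ k, f k ≠ 0 → ∃ i < l, ∃ j < p, f k = p * i + j * q} ≃
      {fp : (ℕ →₀ ℕ) × (ℕ →₀ ℕ) //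
        (fp.1 0 = 0 ∧ ∀ k, fp.1 k < l) ∧ (fp.2 0 = 0 ∧ ∀ k, fp.2 k < p) ∧
          p * w fp.1 + q * w fp.2 = n} where
  toFun f := ⟨(Finsupp.onFinset f.1.support (fun k => iofF p q a' (f.1 k))
      (fun k hk => Finsupp.mem_support_iff.mpr
        (fun h0 => hk (by show iofF p q a' (f.1 k) = 0; rw [h0, iof_zero]))),
      Finsupp.onFinset f.1.support (fun k => jofF p a' (f.1 k))
      (fun k hk => Finsupp.mem_support_iff.mpr
        (fun h0 => hk (by show jofF p a' (f.1 k) = 0; rw [h0, jof_zero])))), by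
    obtain ⟨hf0, hfw, hfc⟩ := f.2
    refine ⟨⟨?_, ?_⟩, ⟨?_, ?_⟩, ?_⟩
    · show iofF p q a' (f.1 0) = 0
      rw [hf0, iof_zero]
    · intro k
      show iofF p q a' (f.1 k) < l
      by_cases hne : f.1 k = 0
      · rw [hne, iof_zero]; exact hl
      · exact bound_i hp hdecj (hfc k hne)
    · show jofF p a' (f.1 0) = 0
      rw [hf0, jof_zero]
    · intro k
      exact jof_lt hp _
    · show p * w _ + q * w _ = n
      rw [w_onFinset, w_onFinset]
      have key : p * ∑ k ∈ f.1.support, k * iofF p q a' (f.1 k)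
          + q * ∑ k ∈ f.1.support, k * jofF p a' (f.1 k) = w f.1 := by
        rw [w_def, Finset.mul_sum, Finset.mul_sum, ← Finset.sum_add_distrib]
        refine Finset.sum_congr rfl fun k hk => ?_
        have hfk := hfc k (Finsupp.mem_support_iff.mp hk)
        have hrec := recomp hp hdecj hfk
        calc p * (k * iofF p q a' (f.1 k)) + q * (k * jofF p a' (f.1 k))
            = k * (p * iofF p q a' (f.1 k) + jofF p a' (f.1 k) * q) := by ring
          _ = k * f.1 k := by rw [hrec]
      rw [key, hfw]⟩
  invFun fp := ⟨Finsupp.onFinset (fp.1.1.support ∪ fp.1.2.support)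
      (fun k => p * fp.1.1 k + fp.1.2 k * q)
      (fun k hk => by
        rw [Finset.mem_union, Finsupp.mem_support_iff, Finsupp.mem_support_iff]
        by_contra h
        push_neg at h
        rw [h.1, h.2] at hk
        simp at hk), by
    obtain ⟨⟨h10, h1l⟩, ⟨h20, h2p⟩, hw⟩ := fp.2
    refine ⟨?_, ?_, ?_⟩
    · show p * fp.1.1 0 + fp.1.2 0 * q = 0
      rw [h10, h20]; ring
    · have h1 : w fp.1.1 = ∑ k ∈ fp.1.1.support ∪ fp.1.2.support, k * fp.1.1 k :=
        w_sum_subset Finset.subset_union_left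
      have h2 : w fp.1.2 = ∑ k ∈ fp.1.1.support ∪ fp.1.2.support, k * fp.1.2 k :=
        w_sum_subset Finset.subset_union_right
      rw [w_onFinset]
      have key : ∑ k ∈ fp.1.1.support ∪ fp.1.2.support,
          k * (p * fp.1.1 k + fp.1.2 k * q) = p * w fp.1.1 + q * w fp.1.2 := by
        rw [h1, h2, Finset.mul_sum, Finset.mul_sum, ← Finset.sum_add_distrib]
        refine Finset.sum_congr rfl fun k _ => ?_
        ring
      rw [key, hw]
    · intro k hk
      rw [Finsupp.onFinset_apply] at hk ⊢
      exact ⟨fp.1.1 k, h1l k, fp.1.2 k, h2p k, rfl⟩⟩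
  left_inv f := by
    apply Subtype.ext
    ext k
    show p * iofF p q a' (f.1 k) + jofF p a' (f.1 k) * q = f.1 k
    by_cases hne : f.1 k = 0
    · rw [hne, iof_zero, jof_zero]; ring
    · exact recomp hp hdecj (f.2.2.2 k hne)
  right_inv fp := by
    apply Subtype.ext
    obtain ⟨⟨h10, h1l⟩, ⟨h20, h2p⟩, hw⟩ := fp.2
    apply Prod.ext
    · ext k
      show iofF p q a' (p * fp.1.1 k + fp.1.2 k * q) = fp.1.1 k
      exact dec_i hp hdecj (h2p k)
    · ext k
      show jofF p a' (p * fp.1.1 k + fp.1.2 k * q) = fp.1.2 k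
      exact hdecj _ _ (h2p k)

end Split

end NM

namespace NM
open Finsupp Finset

section PairMerge

variable {l p q : ℕ}

noncomputable def pairEquiv (hl : 0 < l) (hp : 0 < p) (q n : ℕ) :
    {fp : (ℕ →₀ ℕ) × (ℕ →₀ ℕ) //
        (fp.1 0 = 0 ∧ ∀ k, fp.1 k < l) ∧ (fp.2 0 = 0 ∧ ∀ k, fp.2 k < p) ∧
          p * w fp.1 + q * w fp.2 = n} ≃
      {gp : (ℕ →₀ ℕ) × (ℕ →₀ ℕ) //
        (∀ k, gp.1 k ≠ 0 → ¬ l ∣ k) ∧ (∀ k, gp.2 k ≠ 0 → ¬ p ∣ k) ∧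
          p * w gp.1 + q * w gp.2 = n} where
  toFun fp := ⟨((glaisherEquiv l hl ⟨fp.1.1, fp.2.1⟩).1,
      (glaisherEquiv p hp ⟨fp.1.2, fp.2.2.1⟩).1),
      (glaisherEquiv l hl ⟨fp.1.1, fp.2.1⟩).2,
      (glaisherEquiv p hp ⟨fp.1.2, fp.2.2.1⟩).2, by
        rw [w_glaisherEquiv, w_glaisherEquiv]
        exact fp.2.2.2⟩
  invFun gp := ⟨(((glaisherEquiv l hl).symm ⟨gp.1.1, gp.2.1⟩).1,
      ((glaisherEquiv p hp).symm ⟨gp.1.2, gp.2.2.1⟩).1),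
      ((glaisherEquiv l hl).symm ⟨gp.1.1, gp.2.1⟩).2,
      ((glaisherEquiv p hp).symm ⟨gp.1.2, gp.2.2.1⟩).2, by
        rw [w_glaisherEquiv_symm, w_glaisherEquiv_symm]
        exact gp.2.2.2⟩
  left_inv fp := by
    apply Subtype.ext
    apply Prod.ext
    · exact congrArg Subtype.val ((glaisherEquiv l hl).symm_apply_apply ⟨fp.1.1, fp.2.1⟩)
    · exact congrArg Subtype.val ((glaisherEquiv p hp).symm_apply_apply ⟨fp.1.2, fp.2.2.1⟩)
  right_inv gp := by
    apply Subtype.ext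
    apply Prod.ext
    · exact congrArg Subtype.val ((glaisherEquiv l hl).apply_symm_apply ⟨gp.1.1, gp.2.1⟩)
    · exact congrArg Subtype.val ((glaisherEquiv p hp).apply_symm_apply ⟨gp.1.2, gp.2.2.1⟩)

lemma filter_add_filter_eq {P1 P2 : ℕ → Prop} [DecidablePred P1] [DecidablePred P2] {g : ℕ →₀ ℕ}
    (hg : ∀ x, g x ≠ 0 → P1 x ∨ P2 x) (hdisj : ∀ x, g x ≠ 0 → ¬(P1 x ∧ P2 x)) :
    g.filter P1 + g.filter P2 = g := by
  ext x
  rw [Finsupp.add_apply, Finsupp.filter_apply, Finsupp.filter_apply]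
  by_cases hx : g x = 0
  · split_ifs <;> simp [hx]
  · rcases hg x hx with h1 | h2
    · rw [if_pos h1, if_neg (fun h2 => hdisj x hx ⟨h1, h2⟩), add_zero]
    · rw [if_neg (fun h1 => hdisj x hx ⟨h1, h2⟩), if_pos h2, zero_add]

lemma Sc_p_mem (hl : 0 < l) (hp : 0 < p) {g1 : ℕ →₀ ℕ}
    (hg1 : ∀ k, g1 k ≠ 0 → ¬ l ∣ k) {x : ℕ} (h : Sc p g1 x ≠ 0) :
    p ∣ x ∧ ¬ (l * p) ∣ x := by
  obtain ⟨k, rfl, hk⟩ := Sc_ne_zero (by omega) h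
  refine ⟨Dvd.intro k rfl, fun hdvd => hg1 k hk ?_⟩
  have h2 : p * l ∣ p * k := by rwa [show p * l = l * p by ring]
  exact (Nat.mul_dvd_mul_iff_left hp).mp h2

lemma Sc_q_mem (hp : 0 < p) (hq : 0 < q) {g2 : ℕ →₀ ℕ}
    (hg2 : ∀ k, g2 k ≠ 0 → ¬ p ∣ k) {x : ℕ} (h : Sc q g2 x ≠ 0) :
    q ∣ x ∧ ¬ (p * q) ∣ x := by
  obtain ⟨k, rfl, hk⟩ := Sc_ne_zero (by omega) h
  refine ⟨Dvd.intro k rfl, fun hdvd => hg2 k hk ?_⟩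
  have h2 : q * p ∣ q * k := by rwa [show q * p = p * q by ring]
  exact (Nat.mul_dvd_mul_iff_left hq).mp h2

lemma filter_dvd_p {g : ℕ →₀ ℕ} :
    ∀ x, (g.filter (fun x => p ∣ x ∧ ¬ (l * p) ∣ x)) x ≠ 0 → p ∣ x := by
  intro x hx
  rw [Finsupp.filter_apply] at hx
  by_cases hP : p ∣ x ∧ ¬ (l * p) ∣ x
  · exact hP.1
  · rw [if_neg hP] at hx
    exact absurd rfl hx

lemma filter_dvd_q {g : ℕ →₀ ℕ} :
    ∀ x, (g.filter (fun x => q ∣ x ∧ ¬ (p * q) ∣ x)) x ≠ 0 → q ∣ x := by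
  intro x hx
  rw [Finsupp.filter_apply] at hx
  by_cases hP : q ∣ x ∧ ¬ (p * q) ∣ x
  · exact hP.1
  · rw [if_neg hP] at hx
    exact absurd rfl hx

noncomputable def mergeEquiv (hl : 0 < l) (hp : 0 < p) (hq : 0 < q)
    (hpq : Nat.Coprime p q) (n : ℕ) :
    {gp : (ℕ →₀ ℕ) × (ℕ →₀ ℕ) //
        (∀ k, gp.1 k ≠ 0 → ¬ l ∣ k) ∧ (∀ k, gp.2 k ≠ 0 → ¬ p ∣ k) ∧
          p * w gp.1 + q * w gp.2 = n} ≃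
      {g : ℕ →₀ ℕ // g 0 = 0 ∧ w g = n ∧
        ∀ x, g x ≠ 0 → (p ∣ x ∧ ¬ (l * p) ∣ x) ∨ (q ∣ x ∧ ¬ (p * q) ∣ x)} where
  toFun gp := ⟨Sc p gp.1.1 + Sc q gp.1.2, by
      have h10 : gp.1.1 0 = 0 := by
        by_contra h
        exact gp.2.1 0 h (dvd_zero l)
      have h20 : gp.1.2 0 = 0 := by
        by_contra h
        exact gp.2.2.1 0 h (dvd_zero p)
      have e1 : Sc p gp.1.1 0 = 0 := by
        have := Sc_apply_mul (show p ≠ 0 by omega) gp.1.1 0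
        rw [mul_zero] at this
        rw [this, h10]
      have e2 : Sc q gp.1.2 0 = 0 := by
        have := Sc_apply_mul (show q ≠ 0 by omega) gp.1.2 0
        rw [mul_zero] at this
        rw [this, h20]
      rw [Finsupp.add_apply, e1, e2], by
      rw [w_add, w_Sc, w_Sc]
      exact gp.2.2.2, by
      intro x hx
      rw [Finsupp.add_apply] at hx
      have hor : Sc p gp.1.1 x ≠ 0 ∨ Sc q gp.1.2 x ≠ 0 := by
        by_contra h
        push_neg at h
        rw [h.1, h.2] at hx
        exact hx rfl
      rcases hor with h | h
      · exact Or.inl (Sc_p_mem hl hp gp.2.1 h)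
      · exact Or.inr (Sc_q_mem hp hq gp.2.2.1 h)⟩
  invFun g := ⟨(Un p (g.1.filter (fun x => p ∣ x ∧ ¬ (l * p) ∣ x)),
      Un q (g.1.filter (fun x => q ∣ x ∧ ¬ (p * q) ∣ x))), by
      intro k hk
      obtain ⟨x, hxs, hxk⟩ := Un_ne_zero hk
      rw [Finsupp.support_filter, Finset.mem_filter] at hxs
      obtain ⟨hxg, hpx, hlpx⟩ := hxs
      intro hlk
      apply hlpx
      obtain ⟨c, rfl⟩ := hpx
      rw [Nat.mul_div_cancel_left c hp] at hxk
      subst hxk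
      obtain ⟨d, rfl⟩ := hlk
      exact ⟨d, by ring⟩, by
      intro k hk
      obtain ⟨x, hxs, hxk⟩ := Un_ne_zero hk
      rw [Finsupp.support_filter, Finset.mem_filter] at hxs
      obtain ⟨hxg, hqx, hpqx⟩ := hxs
      intro hpk
      apply hpqx
      obtain ⟨c, rfl⟩ := hqx
      rw [Nat.mul_div_cancel_left c hq] at hxk
      subst hxk
      obtain ⟨d, rfl⟩ := hpk
      exact ⟨d, by ring⟩, by
      have e1 : Sc p (Un p (g.1.filter (fun x => p ∣ x ∧ ¬ (l * p) ∣ x)))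
          = g.1.filter (fun x => p ∣ x ∧ ¬ (l * p) ∣ x) :=
        Sc_Un (by omega) filter_dvd_p
      have e2 : Sc q (Un q (g.1.filter (fun x => q ∣ x ∧ ¬ (p * q) ∣ x)))
          = g.1.filter (fun x => q ∣ x ∧ ¬ (p * q) ∣ x) :=
        Sc_Un (by omega) filter_dvd_q
      have w1 : p * w (Un p (g.1.filter (fun x => p ∣ x ∧ ¬ (l * p) ∣ x)))
          = w (g.1.filter (fun x => p ∣ x ∧ ¬ (l * p) ∣ x)) := by
        rw [← w_Sc, e1]
      have w2 : q * w (Un q (g.1.filter (fun x => q ∣ x ∧ ¬ (p * q) ∣ x)))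
          = w (g.1.filter (fun x => q ∣ x ∧ ¬ (p * q) ∣ x)) := by
        rw [← w_Sc, e2]
      show p * w _ + q * w _ = n
      rw [w1, w2, ← w_add, filter_add_filter_eq g.2.2.2
        (fun x hx ⟨h1, h2⟩ => h2.2 (hpq.mul_dvd_of_dvd_of_dvd h1.1 h2.1)), g.2.2.1]⟩
  left_inv gp := by
    apply Subtype.ext
    have key1 : (Sc p gp.1.1 + Sc q gp.1.2).filter (fun x => p ∣ x ∧ ¬ (l * p) ∣ x)
        = Sc p gp.1.1 := by
      ext x
      rw [Finsupp.filter_apply, Finsupp.add_apply]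
      by_cases hP : p ∣ x ∧ ¬ (l * p) ∣ x
      · rw [if_pos hP]
        have h2 : Sc q gp.1.2 x = 0 := by
          by_contra h
          have hS2 := Sc_q_mem hp hq gp.2.2.1 h
          exact hS2.2 (hpq.mul_dvd_of_dvd_of_dvd hP.1 hS2.1)
        rw [h2, add_zero]
      · rw [if_neg hP]
        by_contra h
        exact hP (Sc_p_mem hl hp gp.2.1 (fun h0 => h (h0.symm)))
    have key2 : (Sc p gp.1.1 + Sc q gp.1.2).filter (fun x => q ∣ x ∧ ¬ (p * q) ∣ x)
        = Sc q gp.1.2 := by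
      ext x
      rw [Finsupp.filter_apply, Finsupp.add_apply]
      by_cases hP : q ∣ x ∧ ¬ (p * q) ∣ x
      · rw [if_pos hP]
        have h1 : Sc p gp.1.1 x = 0 := by
          by_contra h
          have hS1 := Sc_p_mem hl hp gp.2.1 h
          exact hP.2 (hpq.mul_dvd_of_dvd_of_dvd hS1.1 hP.1)
        rw [h1, zero_add]
      · rw [if_neg hP]
        by_contra h
        exact hP (Sc_q_mem hp hq gp.2.2.1 (fun h0 => h (h0.symm)))
    apply Prod.ext
    · show Un p ((Sc p gp.1.1 + Sc q gp.1.2).filter _) = gp.1.1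
      rw [key1, Un_Sc (show p ≠ 0 by omega)]
    · show Un q ((Sc p gp.1.1 + Sc q gp.1.2).filter _) = gp.1.2
      rw [key2, Un_Sc (show q ≠ 0 by omega)]
  right_inv g := by
    apply Subtype.ext
    show Sc p (Un p (g.1.filter _)) + Sc q (Un q (g.1.filter _)) = g.1
    rw [Sc_Un (show p ≠ 0 by omega) filter_dvd_p,
      Sc_Un (show q ≠ 0 by omega) filter_dvd_q,
      filter_add_filter_eq g.2.2.2
        (fun x hx ⟨h1, h2⟩ => h2.2 (hpq.mul_dvd_of_dvd_of_dvd h1.1 h2.1))]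

end PairMerge
end NM

/-- Nyirenda–Mugwangwavari's theorem. -/
theorem nyirenda_mugwangwavari (l r a p n : ℕ) (hl : 0 < l) (hr : 0 < r)
    (ha : 0 < a) (hp : 0 < p) (hap : Nat.Coprime a p) :
    partP {x | ∃ i < l, ∃ j < p, x = p * i + j * (p * r + a)} n
      = partQ {b | (p ∣ b ∧ ¬ (l * p) ∣ b) ∨
          ((p * r + a) ∣ b ∧ ¬ (p * (p * r + a)) ∣ b)} n := by
  rw [NM.partP_eq, NM.partQ_eq]
  have hq : 0 < p * r + a := by omega
  have hpq : Nat.Coprime p (p * r + a) := by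
    have h := (Nat.coprime_add_mul_left_right p a r).mpr hap.symm
    rwa [Nat.add_comm] at h
  obtain ⟨a', hdecj⟩ : ∃ a', ∀ i j : ℕ, j < p →
      NM.jofF p a' (p * i + j * (p * r + a)) = j := by
    rcases Nat.lt_or_ge p 2 with h2 | h2
    · refine ⟨0, fun i j hj => ?_⟩
      have hj0 : j = 0 := by omega
      subst hj0
      show (p * i + 0 * (p * r + a)) * 0 % p = 0
      simp
    · obtain ⟨a', -, ha'⟩ := Nat.exists_mul_mod_eq_one_of_coprime hap h2
      refine ⟨a', fun i j hj => ?_⟩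
      have hexp : (p * i + j * (p * r + a)) * a' = p * (i * a' + j * r * a') + a * a' * j := by
        ring
      rw [NM.jofF, hexp, Nat.mul_add_mod, ← Nat.mod_mul_mod, ha', one_mul,
        Nat.mod_eq_of_lt hj]
  exact Nat.card_congr (((NM.splitEquiv hl hp hdecj n).trans
    (NM.pairEquiv hl hp (p * r + a) n)).trans (NM.mergeEquiv hl hp hq hpq n))
end

section
/- Let A ⊆ ℕ and let B ⊆ ℕ be finite, with positive integers δ_b for each b ∈ B. Suppose the formal power series identity 1 + Σ_{a∈A} x^a = Π_{b∈B} (1 − x^{bδ_b})/(1 − x^b) holds, and suppose the sets bℕ \ bδ_bℕ for b ∈ B are pairwise disjoint. Then for all n, P(A; n) = Q(B; n), where B := ∪_{b∈B} (bℕ \ bδ_bℕ). -/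
open scoped Classical

namespace PartitionAux

open PowerSeries Finset

noncomputable section

variable {α : Type*}

/-- A convenience constructor for the power series whose coefficients indicate a subset. -/
def indicatorSeries (α : Type*) [Semiring α] (s : Set ℕ) : PowerSeries α :=
  PowerSeries.mk fun n => if n ∈ s then 1 else 0

theorem coeff_indicator (s : Set ℕ) [Semiring α] (n : ℕ) :
    coeff n (indicatorSeries α s) = if n ∈ s then 1 else 0 :=
  coeff_mk _ _

theorem constantCoeff_indicator (s : Set ℕ) [Semiring α] :
    constantCoeff (indicatorSeries α s) = if 0 ∈ s then 1 else 0 :=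
  rfl

theorem num_series' [Field α] (i : ℕ) :
    (1 - (X : PowerSeries α) ^ (i + 1))⁻¹ = indicatorSeries α {k | i + 1 ∣ k} := by
  rw [PowerSeries.inv_eq_iff_mul_eq_one]
  · ext n
    cases n with
    | zero => simp [mul_sub, zero_pow, constantCoeff_indicator]
    | succ n =>
      simp only [coeff_one, if_false, mul_sub, mul_one, coeff_indicator,
        LinearMap.map_sub, reduceCtorEq]
      simp_rw [coeff_mul, coeff_X_pow, coeff_indicator, @boole_mul _ _ _ _]
      erw [@sum_ite _ _ _ _ _ (fun _ => Classical.propDecidable _), sum_ite]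
      simp_rw [@filter_filter _ _ _ _ _, sum_const_zero, add_zero, sum_const, nsmul_eq_mul, mul_one,
        sub_eq_iff_eq_add, zero_add]
      symm
      split_ifs with h
      · suffices #{a ∈ antidiagonal (n + 1) | i + 1 ∣ a.fst ∧ a.snd = i + 1} = 1 by
          simp only [Set.mem_setOf_eq]; convert congr_arg ((↑) : ℕ → α) this; norm_cast
        rw [card_eq_one]
        cases' h with p hp
        refine ⟨((i + 1) * (p - 1), i + 1), ?_⟩
        ext ⟨a₁, a₂⟩
        simp only [mem_filter, Prod.mk.injEq, HasAntidiagonal.mem_antidiagonal, mem_singleton]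
        constructor
        · rintro ⟨a_left, ⟨a, rfl⟩, rfl⟩
          refine ⟨?_, rfl⟩
          rw [Nat.mul_sub_left_distrib, ← hp, ← a_left, mul_one, Nat.add_sub_cancel]
        · rintro ⟨rfl, rfl⟩
          match p with
          | 0 => rw [mul_zero] at hp; cases hp
          | p + 1 => rw [hp]; simp [mul_add]
      · suffices #{a ∈ antidiagonal (n + 1) | i + 1 ∣ a.fst ∧ a.snd = i + 1} = 0 by
          simp only [Set.mem_setOf_eq]; convert congr_arg ((↑) : ℕ → α) this; norm_cast
        rw [card_eq_zero]
        apply eq_empty_of_forall_notMem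
        simp only [Prod.forall, mem_filter, not_and, HasAntidiagonal.mem_antidiagonal]
        rintro _ h₁ h₂ ⟨a, rfl⟩ rfl
        apply h
        simp [← h₂]
  · simp [zero_pow]

-- The main workhorse of the partition theorem proof.
theorem partialGF_prop (α : Type*) [CommSemiring α] (n : ℕ) (s : Finset ℕ) (hs : ∀ i ∈ s, 0 < i)
    (c : ℕ → Set ℕ) (hc : ∀ i, i ∉ s → 0 ∈ c i) :
    #{p : n.Partition | (∀ j, p.parts.count j ∈ c j) ∧ ∀ j ∈ p.parts, j ∈ s} =
      coeff n (∏ i ∈ s, indicatorSeries α ((· * i) '' c i)) := by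
  simp_rw [coeff_prod, coeff_indicator, prod_boole, sum_boole]
  apply congr_arg
  simp only [mem_univ, forall_true_left, not_and, not_forall, exists_prop,
    Set.mem_image, not_exists]
  set φ : (a : Nat.Partition n) →
    a ∈ filter (fun p ↦ (∀ (j : ℕ), Multiset.count j p.parts ∈ c j) ∧ ∀ j ∈ p.parts, j ∈ s) univ →
    ℕ →₀ ℕ := fun p _ => {
      toFun := fun i => Multiset.count i p.parts • i
      support := Finset.filter (fun i => i ≠ 0) p.parts.toFinset
      mem_support_toFun := fun a => by
        simp only [smul_eq_mul, ne_eq, mul_eq_zero, Multiset.count_eq_zero]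
        rw [not_or, not_not]
        simp only [Multiset.mem_toFinset, not_not, mem_filter] }
  refine Finset.card_bij φ ?_ ?_ ?_
  · intro a ha
    simp only [φ, not_forall, not_exists, not_and, exists_prop, mem_filter]
    rw [mem_finsuppAntidiag]
    dsimp only [ne_eq, smul_eq_mul, id_eq, eq_mpr_eq_cast, le_eq_subset, Finsupp.coe_mk]
    simp only [mem_univ, forall_true_left, not_and, not_forall, exists_prop,
      mem_filter, true_and] at ha
    refine ⟨⟨?_, fun i ↦ ?_⟩, fun i _ ↦ ⟨a.parts.count i, ha.1 i, rfl⟩⟩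
    · conv_rhs => simp [← a.parts_sum]
      rw [sum_multiset_count_of_subset _ s]
      · simp only [smul_eq_mul]
      · intro i
        simp only [Multiset.mem_toFinset, not_not, mem_filter]
        apply ha.2
    · simp only [ne_eq, Multiset.mem_toFinset, not_not, mem_filter, and_imp]
      exact fun hi _ ↦ ha.2 i hi
  · intro p₁ hp₁ p₂ hp₂ h
    apply Nat.Partition.ext
    simp only [true_and, mem_univ, mem_filter] at hp₁ hp₂
    ext i
    simp only [φ, ne_eq, Multiset.mem_toFinset, not_not, smul_eq_mul, Finsupp.mk.injEq] at h
    by_cases hi : i = 0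
    · rw [hi]
      rw [Multiset.count_eq_zero_of_notMem]
      · rw [Multiset.count_eq_zero_of_notMem]
        intro a; exact Nat.lt_irrefl 0 (hs 0 (hp₂.2 0 a))
      intro a; exact Nat.lt_irrefl 0 (hs 0 (hp₁.2 0 a))
    · rw [← mul_left_inj' hi]
      rw [funext_iff] at h
      exact h.2 i
  · simp only [φ, mem_filter, mem_finsuppAntidiag, mem_univ, exists_prop, true_and, and_assoc]
    rintro f ⟨hf, hf₃, hf₄⟩
    have hf' : f ∈ finsuppAntidiag s n := mem_finsuppAntidiag.mpr ⟨hf, hf₃⟩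
    simp only [mem_finsuppAntidiag] at hf'
    refine ⟨⟨∑ i ∈ s, Multiset.replicate (f i / i) i, ?_, ?_⟩, ?_, ?_, ?_⟩
    · intro i hi
      simp only [exists_prop, Multiset.mem_sum, mem_map, Function.Embedding.coeFn_mk] at hi
      rcases hi with ⟨t, ht, z⟩
      apply hs
      rwa [Multiset.eq_of_mem_replicate z]
    · simp_rw [Multiset.sum_sum, Multiset.sum_replicate, Nat.nsmul_eq_mul]
      rw [← hf'.1]
      refine sum_congr rfl fun i hi => Nat.div_mul_cancel ?_
      rcases hf₄ i hi with ⟨w, _, hw₂⟩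
      rw [← hw₂]
      exact dvd_mul_left _ _
    · intro i
      simp_rw [Multiset.count_sum', Multiset.count_replicate, sum_ite_eq']
      split_ifs with h
      · rcases hf₄ i h with ⟨w, hw₁, hw₂⟩
        rwa [← hw₂, Nat.mul_div_cancel _ (hs i h)]
      · exact hc _ h
    · intro i hi
      rw [Multiset.mem_sum] at hi
      rcases hi with ⟨j, hj₁, hj₂⟩
      rwa [Multiset.eq_of_mem_replicate hj₂]
    · ext i
      simp_rw [Multiset.count_sum', Multiset.count_replicate, sum_ite_eq']
      simp only [ne_eq, Multiset.mem_toFinset, not_not, smul_eq_mul, ite_mul,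
        zero_mul, Finsupp.coe_mk]
      split_ifs with h
      · apply Nat.div_mul_cancel
        rcases hf₄ i h with ⟨w, _, hw₂⟩
        apply Dvd.intro_left _ hw₂
      · apply symm
        rw [← Finsupp.notMem_support_iff]
        exact notMem_mono hf'.2 h

/-- Substitution of `X^i` for `X` in a power series. -/
def expand (i : ℕ) (f : PowerSeries ℚ) : PowerSeries ℚ :=
  PowerSeries.mk fun m => if i ∣ m then coeff (m / i) f else 0

theorem coeff_expand (i m : ℕ) (f : PowerSeries ℚ) :
    coeff m (expand i f) = if i ∣ m then coeff (m / i) f else 0 :=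
  coeff_mk _ _

theorem expand_one {i : ℕ} (hi : 0 < i) : expand i 1 = 1 := by
  ext m
  rw [coeff_expand, coeff_one]
  rcases Nat.eq_zero_or_pos m with rfl | hm
  · simp
  · rw [coeff_one, if_neg hm.ne']
    split_ifs with h h2
    · exact absurd h2 (Nat.div_pos (Nat.le_of_dvd hm h) hi).ne'
    · rfl
    · rfl

theorem expand_mul {i : ℕ} (hi : 0 < i) (f g : PowerSeries ℚ) :
    expand i (f * g) = expand i f * expand i g := by
  ext m
  rw [coeff_expand]
  conv_rhs => rw [coeff_mul]
  simp_rw [coeff_expand]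
  by_cases hd : i ∣ m
  · obtain ⟨k, rfl⟩ := hd
    rw [if_pos (dvd_mul_right i k), Nat.mul_div_cancel_left k hi, coeff_mul]
    have hsub : (Finset.HasAntidiagonal.antidiagonal k).map
        ⟨fun y : ℕ × ℕ => (i * y.1, i * y.2), by
          refine id (fun a b hab => ?_ : Function.Injective _)
          simp only [Prod.mk.injEq] at hab
          exact Prod.ext (Nat.eq_of_mul_eq_mul_left hi hab.1)
            (Nat.eq_of_mul_eq_mul_left hi hab.2)⟩ ⊆ Finset.HasAntidiagonal.antidiagonal (i * k) := by
      intro x hx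
      simp only [Finset.mem_map, Finset.HasAntidiagonal.mem_antidiagonal, Function.Embedding.coeFn_mk] at hx
      obtain ⟨y, hy, rfl⟩ := hx
      simp [Finset.HasAntidiagonal.mem_antidiagonal, ← Nat.mul_add, hy, Function.Embedding.coeFn_mk]
    rw [← Finset.sum_subset hsub, Finset.sum_map]
    · apply Finset.sum_congr rfl
      intro y _
      simp [Nat.mul_div_cancel_left _ hi, dvd_mul_right, Function.Embedding.coeFn_mk]
    · intro x hx hx'
      rw [Finset.HasAntidiagonal.mem_antidiagonal] at hx
      by_cases h1 : i ∣ x.1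
      · by_cases h2 : i ∣ x.2
        · exfalso
          apply hx'
          obtain ⟨u, hu⟩ := h1
          obtain ⟨v, hv⟩ := h2
          simp only [Finset.mem_map, Function.Embedding.coeFn_mk]
          refine ⟨(u, v), ?_, ?_⟩
          · rw [Finset.HasAntidiagonal.mem_antidiagonal]
            have : i * (u + v) = i * k := by rw [Nat.mul_add, ← hu, ← hv, hx]
            exact Nat.eq_of_mul_eq_mul_left hi this
          · simp [← hu, ← hv, Function.Embedding.coeFn_mk]
        · rw [if_neg h2, mul_zero]
      · rw [if_neg h1, zero_mul]
  · rw [if_neg hd]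
    symm
    apply Finset.sum_eq_zero
    intro x hx
    rw [Finset.HasAntidiagonal.mem_antidiagonal] at hx
    by_cases h1 : i ∣ x.1
    · by_cases h2 : i ∣ x.2
      · exact absurd (hx ▸ Nat.dvd_add h1 h2) hd
      · rw [if_neg h2, mul_zero]
    · rw [if_neg h1, zero_mul]

theorem expand_prod {i : ℕ} (hi : 0 < i) {β : Type*} (s : Finset β) (f : β → PowerSeries ℚ) :
    expand i (∏ b ∈ s, f b) = ∏ b ∈ s, expand i (f b) := by
  induction s using Finset.induction_on with
  | empty => simp only [Finset.prod_empty]; exact expand_one hi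
  | @insert a s h ih => rw [Finset.prod_insert h, Finset.prod_insert h, expand_mul hi, ih]

theorem expand_sub (i : ℕ) (f g : PowerSeries ℚ) :
    expand i (f - g) = expand i f - expand i g := by
  ext m
  simp only [coeff_expand, map_sub]
  split_ifs <;> simp

theorem expand_X_pow {i : ℕ} (hi : 0 < i) (k : ℕ) :
    expand i ((X : PowerSeries ℚ) ^ k) = X ^ (i * k) := by
  ext m
  rw [coeff_expand, coeff_X_pow, coeff_X_pow]
  by_cases hm : m = i * k
  · subst hm
    rw [if_pos (dvd_mul_right i k), Nat.mul_div_cancel_left k hi, if_pos rfl, if_pos rfl]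
  · rw [if_neg hm]
    split_ifs with h1 h2
    · exact absurd (Nat.eq_mul_of_div_eq_right h1 h2) hm
    · rfl
    · rfl
theorem expand_one_sub_X_pow {i : ℕ} (hi : 0 < i) (k : ℕ) :
    expand i (1 - (X : PowerSeries ℚ) ^ k) = 1 - X ^ (i * k) := by
  rw [expand_sub, expand_one hi, expand_X_pow hi]

/-- Two power series agree in coefficients up to `n`. -/
def EqUpTo (n : ℕ) (f g : PowerSeries ℚ) : Prop :=
  ∀ m ≤ n, coeff m f = coeff m g

theorem EqUpTo.refl (n : ℕ) (f : PowerSeries ℚ) : EqUpTo n f f := fun _ _ => rfl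

theorem EqUpTo.trans {n : ℕ} {f g h : PowerSeries ℚ} (h1 : EqUpTo n f g) (h2 : EqUpTo n g h) :
    EqUpTo n f h := fun m hm => (h1 m hm).trans (h2 m hm)

theorem EqUpTo.mul {n : ℕ} {f f' g g' : PowerSeries ℚ} (h1 : EqUpTo n f f')
    (h2 : EqUpTo n g g') : EqUpTo n (f * g) (f' * g') := by
  intro m hm
  rw [coeff_mul, coeff_mul]
  apply Finset.sum_congr rfl
  intro x hx
  rw [Finset.HasAntidiagonal.mem_antidiagonal] at hx
  rw [h1 x.1 (le_trans (hx ▸ Nat.le_add_right _ _) hm),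
    h2 x.2 (le_trans (hx ▸ Nat.le_add_left _ _) hm)]

theorem EqUpTo.prod {n : ℕ} {β : Type*} (s : Finset β) (f g : β → PowerSeries ℚ)
    (h : ∀ b ∈ s, EqUpTo n (f b) (g b)) : EqUpTo n (∏ b ∈ s, f b) (∏ b ∈ s, g b) := by
  induction s using Finset.induction_on with
  | empty => simpa using EqUpTo.refl n 1
  | @insert a s ha ih =>
    rw [Finset.prod_insert ha, Finset.prod_insert ha]
    exact (h a (Finset.mem_insert_self a s)).mul
      (ih fun b hb => h b (Finset.mem_insert_of_mem hb))

theorem eqUpTo_one_sub_X_pow {n m : ℕ} (h : n < m) :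
    EqUpTo n (1 - (X : PowerSeries ℚ) ^ m) 1 := by
  intro k hk
  rw [map_sub, coeff_X_pow, if_neg (by omega), sub_zero]

theorem eqUpTo_inv_one_sub_X_pow {n m : ℕ} (hm : 0 < m) (h : n < m) :
    EqUpTo n (1 - (X : PowerSeries ℚ) ^ m)⁻¹ 1 := by
  intro k hk
  obtain ⟨m, rfl⟩ := Nat.exists_eq_add_of_lt hm
  rw [zero_add] at *
  rw [num_series', indicatorSeries, coeff_mk, coeff_one]
  rcases Nat.eq_zero_or_pos k with rfl | hk0
  · simp
  · rw [if_neg hk0.ne', if_neg]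
    intro hdvd
    exact absurd (Nat.le_of_dvd hk0 hdvd) (by omega)

theorem prod_eqUpTo_one {n : ℕ} {β : Type*} (s : Finset β) (f : β → PowerSeries ℚ)
    (h : ∀ b ∈ s, EqUpTo n (f b) 1) : EqUpTo n (∏ b ∈ s, f b) 1 := by
  have := EqUpTo.prod s f (fun _ => 1) h
  rwa [Finset.prod_const_one] at this

theorem mem_image_mul {n e m : ℕ} (he : 0 < e) (h1 : 0 < m) (h2 : m ≤ n) (hd : e ∣ m) :
    m ∈ (Finset.Icc 1 n).image (· * e) := by
  refine Finset.mem_image.2 ⟨m / e, ?_, Nat.div_mul_cancel hd⟩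
  rw [Finset.mem_Icc]
  exact ⟨(Nat.one_le_div_iff he).2 (Nat.le_of_dvd h1 hd),
    le_trans (Nat.div_le_self _ _) h2⟩

theorem of_mem_image_mul {n e m : ℕ} (he : 0 < e)
    (h : m ∈ (Finset.Icc 1 n).image (· * e)) : e ∣ m ∧ 0 < m := by
  obtain ⟨i, hi, rfl⟩ := Finset.mem_image.1 h
  rw [Finset.mem_Icc] at hi
  exact ⟨dvd_mul_left e i, Nat.mul_pos hi.1 he⟩

theorem stepC (n b d : ℕ) (hb : 0 < b) (hd : 0 < d) :
    EqUpTo n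
      (∏ i ∈ Finset.Icc 1 n,
        ((1 - (X : PowerSeries ℚ) ^ (i * (b * d))) * (1 - (X : PowerSeries ℚ) ^ (i * b))⁻¹))
      (∏ m ∈ (Finset.Icc 1 n).filter (fun m => b ∣ m ∧ ¬ (b * d) ∣ m),
        (1 - (X : PowerSeries ℚ) ^ m)⁻¹) := by
  set c := b * d with hc
  have hcpos : 0 < c := Nat.mul_pos hb hd
  have hbc : b ≤ c := Nat.le_mul_of_pos_right b hd
  set Mb := (Finset.Icc 1 n).image (· * b) with hMb
  set Mc := (Finset.Icc 1 n).image (· * c) with hMc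
  have injb : ∀ x ∈ Finset.Icc 1 n, ∀ y ∈ Finset.Icc 1 n, x * b = y * b → x = y :=
    fun x _ y _ h => Nat.eq_of_mul_eq_mul_right hb h
  have injc : ∀ x ∈ Finset.Icc 1 n, ∀ y ∈ Finset.Icc 1 n, x * c = y * c → x = y :=
    fun x _ y _ h => Nat.eq_of_mul_eq_mul_right hcpos h
  have ea : ∏ m ∈ Mc, (1 - (X : PowerSeries ℚ) ^ m) =
      ∏ i ∈ Finset.Icc 1 n, (1 - (X : PowerSeries ℚ) ^ (i * c)) := Finset.prod_image injc
  have eb : ∏ m ∈ Mb, (1 - (X : PowerSeries ℚ) ^ m)⁻¹ =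
      ∏ i ∈ Finset.Icc 1 n, (1 - (X : PowerSeries ℚ) ^ (i * b))⁻¹ := Finset.prod_image injb
  rw [Finset.prod_mul_distrib, ← ea, ← eb]
  -- split off the common part
  rw [← Finset.prod_filter_mul_prod_filter_not Mc (· ∈ Mb),
    ← Finset.prod_filter_mul_prod_filter_not Mb (· ∈ Mc)]
  have hcommon : Mc.filter (· ∈ Mb) = Mb.filter (· ∈ Mc) := by
    ext m; simp only [Finset.mem_filter]; tauto
  rw [hcommon, mul_mul_mul_comm, ← Finset.prod_mul_distrib]
  have hcancel : ∏ m ∈ Mb.filter (· ∈ Mc),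
      ((1 - (X : PowerSeries ℚ) ^ m) * (1 - (X : PowerSeries ℚ) ^ m)⁻¹) = 1 := by
    apply Finset.prod_eq_one
    intro m hm
    have hmpos : 0 < m := (of_mem_image_mul hb (Finset.mem_filter.1 hm).1).2
    apply PowerSeries.mul_inv_cancel
    simp [zero_pow hmpos.ne']
  rw [hcancel, one_mul]
  -- the Mc \ Mb part is ≈ 1
  have hMcBig : ∀ m ∈ Mc.filter (· ∉ Mb), n < m := by
    intro m hm
    obtain ⟨hmMc, hmnMb⟩ := Finset.mem_filter.1 hm
    obtain ⟨hdvd, hpos⟩ := of_mem_image_mul hcpos hmMc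
    by_contra hle
    exact hmnMb (mem_image_mul hb hpos (Nat.le_of_not_lt hle)
      (dvd_trans (dvd_mul_right b d) hdvd))
  have h1 : EqUpTo n (∏ m ∈ Mc.filter (· ∉ Mb), (1 - (X : PowerSeries ℚ) ^ m)) 1 :=
    prod_eqUpTo_one _ _ fun m hm => eqUpTo_one_sub_X_pow (hMcBig m hm)
  -- the Mb \ Mc part : split by ≤ n
  rw [← Finset.prod_filter_mul_prod_filter_not (Mb.filter (· ∉ Mc)) (· ≤ n)]
  have hsmall : (Mb.filter (· ∉ Mc)).filter (· ≤ n)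
      = (Finset.Icc 1 n).filter (fun m => b ∣ m ∧ ¬ c ∣ m) := by
    ext m
    simp only [Finset.mem_filter, Finset.mem_Icc]
    constructor
    · rintro ⟨⟨hmMb, hmnMc⟩, hle⟩
      obtain ⟨hdvd, hpos⟩ := of_mem_image_mul hb hmMb
      refine ⟨⟨hpos, hle⟩, hdvd, fun hcd => hmnMc (mem_image_mul hcpos hpos hle hcd)⟩
    · rintro ⟨⟨h1m, h2m⟩, hdvd, hnd⟩
      refine ⟨⟨mem_image_mul hb h1m h2m hdvd, fun hmMc => ?_⟩, h2m⟩
      exact hnd (of_mem_image_mul hcpos hmMc).1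
  have h2 : EqUpTo n (∏ m ∈ (Mb.filter (· ∉ Mc)).filter (· ∉ ({m | m ≤ n} : Set ℕ)),
      (1 - (X : PowerSeries ℚ) ^ m)⁻¹) 1 := by
    apply prod_eqUpTo_one
    intro m hm
    simp only [Finset.mem_filter, Set.mem_setOf_eq] at hm
    have hmpos : 0 < m := (of_mem_image_mul hb hm.1.1).2
    exact eqUpTo_inv_one_sub_X_pow hmpos (Nat.lt_of_not_le hm.2)
  have h2' : EqUpTo n (∏ m ∈ (Mb.filter (· ∉ Mc)).filter (¬ · ≤ n),
      (1 - (X : PowerSeries ℚ) ^ m)⁻¹) 1 := by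
    convert h2 using 2
    ext x; simp
  calc EqUpTo n _ (1 * ((∏ m ∈ (Finset.Icc 1 n).filter (fun m => b ∣ m ∧ ¬ c ∣ m),
      (1 - (X : PowerSeries ℚ) ^ m)⁻¹) * 1)) := by
        refine h1.mul (EqUpTo.mul ?_ h2')
        rw [hsmall]
        exact EqUpTo.refl _ _
    _ = _ := by rw [one_mul, mul_one]


theorem image_mul_univ (m : ℕ) (hm : 0 < m) : (· * m) '' Set.univ = {k | m ∣ k} := by
  ext k
  constructor
  · rintro ⟨w, -, rfl⟩
    exact dvd_mul_left m w
  · intro h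
    exact ⟨k / m, trivial, Nat.div_mul_cancel h⟩

theorem expand_indicator {i : ℕ} (hi : 0 < i) {A : Set ℕ} (hA : (0 : ℕ) ∉ A) :
    expand i (1 + PowerSeries.mk fun a => if a ∈ A then (1 : ℚ) else 0)
      = indicatorSeries ℚ ((· * i) '' (A ∪ {0})) := by
  ext m
  rw [coeff_expand, coeff_indicator]
  by_cases hd : i ∣ m
  · rw [if_pos hd, map_add, coeff_mk, coeff_one]
    rcases Nat.eq_zero_or_pos m with rfl | hm
    · rw [Nat.zero_div, if_pos rfl, if_neg hA, add_zero,
        if_pos ⟨0, Or.inr rfl, zero_mul i⟩]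
    · have hq : m / i ≠ 0 := (Nat.div_pos (Nat.le_of_dvd hm hd) hi).ne'
      rw [if_neg hq, zero_add]
      have hiff : m ∈ (· * i) '' (A ∪ {0}) ↔ m / i ∈ A := by
        constructor
        · rintro ⟨a, ha, rfl⟩
          rcases ha with ha | ha
          · rwa [Nat.mul_div_cancel a hi]
          · rw [Set.mem_singleton_iff] at ha
            subst ha
            simp at hm
        · intro h
          exact ⟨m / i, Or.inl h, Nat.div_mul_cancel hd⟩
      exact if_congr hiff.symm rfl rfl
  · rw [if_neg hd, if_neg]
    rintro ⟨a, -, rfl⟩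
    exact hd (dvd_mul_left i a)

theorem countP (A : Set ℕ) (hA : ∀ a ∈ A, 0 < a) (n : ℕ) :
    ((partP A n : ℚ)) =
      coeff n (∏ i ∈ Finset.Icc 1 n, indicatorSeries ℚ ((· * i) '' (A ∪ {0}))) := by
  have hs : ∀ i ∈ Finset.Icc 1 n, 0 < i := fun i hi => (Finset.mem_Icc.1 hi).1
  rw [← partialGF_prop ℚ n (Finset.Icc 1 n) hs (fun _ => A ∪ {0}) (fun _ _ => Or.inr rfl)]
  rw [partP]
  congr 2
  apply Finset.filter_congr
  intro p _
  constructor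
  · intro h
    constructor
    · intro j
      by_cases hj : j ∈ p.parts
      · exact Or.inl (h j hj)
      · exact Or.inr (Multiset.count_eq_zero_of_notMem hj)
    · intro j hj
      rw [Finset.mem_Icc]
      refine ⟨p.parts_pos hj, ?_⟩
      have := Multiset.single_le_sum (fun _ _ => Nat.zero_le _) j hj
      rwa [p.parts_sum] at this
  · rintro ⟨h1, -⟩ i hi
    rcases h1 i with h | h
    · exact h
    · exact absurd (Multiset.count_eq_zero.1 h) (not_not.2 hi)

theorem countQ (S : Set ℕ) (n : ℕ) :
    ((partQ S n : ℚ)) =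
      coeff n (∏ m ∈ (Finset.Icc 1 n).filter (· ∈ S), (1 - (X : PowerSeries ℚ) ^ m)⁻¹) := by
  have hs : ∀ i ∈ (Finset.Icc 1 n).filter (· ∈ S), 0 < i :=
    fun i hi => (Finset.mem_Icc.1 (Finset.mem_filter.1 hi).1).1
  have hprod : ∏ m ∈ (Finset.Icc 1 n).filter (· ∈ S), (1 - (X : PowerSeries ℚ) ^ m)⁻¹
      = ∏ m ∈ (Finset.Icc 1 n).filter (· ∈ S),
          indicatorSeries ℚ ((· * m) '' Set.univ) := by
    apply Finset.prod_congr rfl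
    intro m hm
    have hmpos : 0 < m := hs m hm
    rw [image_mul_univ m hmpos]
    obtain ⟨m', rfl⟩ := Nat.exists_eq_succ_of_ne_zero hmpos.ne'
    rw [num_series']
  rw [hprod, ← partialGF_prop ℚ n ((Finset.Icc 1 n).filter (· ∈ S)) hs (fun _ => Set.univ)
    (fun _ _ => trivial)]
  rw [partQ]
  congr 2
  apply Finset.filter_congr
  intro p _
  constructor
  · intro h
    refine ⟨fun _ => trivial, fun j hj => ?_⟩
    rw [Finset.mem_filter, Finset.mem_Icc]
    refine ⟨⟨p.parts_pos hj, ?_⟩, h j hj⟩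
    have := Multiset.single_le_sum (fun _ _ => Nat.zero_le _) j hj
    rwa [p.parts_sum] at this
  · rintro ⟨-, h2⟩ i hi
    exact (Finset.mem_filter.1 (h2 i hi)).2

end
end PartitionAux
open PowerSeries in
/-- Key lemma: a geometric-series identity yields a partition identity. -/
theorem series_identity_to_partition_identity (A : Set ℕ) (hA : ∀ a ∈ A, 0 < a)
    (B : Finset ℕ) (hB : ∀ b ∈ B, 0 < b) (δ : ℕ → ℕ) (hδ : ∀ b ∈ B, 0 < δ b)
    (hid : (1 + PowerSeries.mk (fun a => if a ∈ A then (1 : ℤ) else 0)) *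
        ∏ b ∈ B, (1 - (PowerSeries.X : PowerSeries ℤ) ^ b)
      = ∏ b ∈ B, (1 - (PowerSeries.X : PowerSeries ℤ) ^ (b * δ b)))
    (hdisj : ∀ b ∈ B, ∀ b' ∈ B, b ≠ b' →
      {x : ℕ | 0 < x ∧ b ∣ x ∧ ¬ (b * δ b) ∣ x} ∩
        {x : ℕ | 0 < x ∧ b' ∣ x ∧ ¬ (b' * δ b') ∣ x} = ∅)
    (n : ℕ) :
    partP A n = partQ (⋃ b ∈ B, {x : ℕ | 0 < x ∧ b ∣ x ∧ ¬ (b * δ b) ∣ x}) n := by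
  classical
  set S : Set ℕ := ⋃ b ∈ B, {x : ℕ | 0 < x ∧ b ∣ x ∧ ¬ (b * δ b) ∣ x} with hS
  suffices h : (partP A n : ℚ) = (partQ S n : ℚ) by exact_mod_cast h
  have h0A : (0 : ℕ) ∉ A := fun h => lt_irrefl 0 (hA 0 h)
  -- move the identity to ℚ
  have hQ : (1 + PowerSeries.mk (fun a => if a ∈ A then (1 : ℚ) else 0)) *
      ∏ b ∈ B, (1 - (PowerSeries.X : PowerSeries ℚ) ^ b)
      = ∏ b ∈ B, (1 - (PowerSeries.X : PowerSeries ℚ) ^ (b * δ b)) := by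
    have h := congrArg (PowerSeries.map (Int.castRingHom ℚ)) hid
    have hmk : PowerSeries.map (Int.castRingHom ℚ)
        (PowerSeries.mk (fun a => if a ∈ A then (1 : ℤ) else 0))
        = PowerSeries.mk (fun a => if a ∈ A then (1 : ℚ) else 0) := by
      ext m
      rw [PowerSeries.coeff_map, PowerSeries.coeff_mk, PowerSeries.coeff_mk]
      split_ifs <;> simp
    simpa only [map_mul, map_add, map_one, map_prod, map_sub, map_pow,
      PowerSeries.map_X, hmk] using h
  set F : ℕ → PowerSeries ℚ :=
    fun i => PartitionAux.indicatorSeries ℚ ((· * i) '' (A ∪ {0})) with hF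
  have hFi : ∀ i ∈ Finset.Icc 1 n, F i = ∏ b ∈ B,
      ((1 - (PowerSeries.X : PowerSeries ℚ) ^ (i * (b * δ b))) *
        (1 - (PowerSeries.X : PowerSeries ℚ) ^ (i * b))⁻¹) := by
    intro i hi
    have hi0 : 0 < i := (Finset.mem_Icc.1 hi).1
    have he := congrArg (PartitionAux.expand i) hQ
    rw [PartitionAux.expand_mul hi0, PartitionAux.expand_prod hi0,
      PartitionAux.expand_prod hi0, PartitionAux.expand_indicator hi0 h0A] at he
    simp only [PartitionAux.expand_one_sub_X_pow hi0] at he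
    have hP : (∏ b ∈ B, (1 - (PowerSeries.X : PowerSeries ℚ) ^ (i * b))) *
        (∏ b ∈ B, (1 - (PowerSeries.X : PowerSeries ℚ) ^ (i * b))⁻¹) = 1 := by
      rw [← Finset.prod_mul_distrib]
      apply Finset.prod_eq_one
      intro b hb
      apply PowerSeries.mul_inv_cancel
      simp [zero_pow (Nat.mul_pos hi0 (hB b hb)).ne']
    rw [Finset.prod_mul_distrib, ← he, mul_assoc, hP, mul_one]
  have hprod : ∏ i ∈ Finset.Icc 1 n, F i = ∏ b ∈ B, ∏ i ∈ Finset.Icc 1 n,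
      ((1 - (PowerSeries.X : PowerSeries ℚ) ^ (i * (b * δ b))) *
        (1 - (PowerSeries.X : PowerSeries ℚ) ^ (i * b))⁻¹) := by
    rw [Finset.prod_congr rfl hFi, Finset.prod_comm]
  have happrox : PartitionAux.EqUpTo n (∏ i ∈ Finset.Icc 1 n, F i)
      (∏ b ∈ B, ∏ m ∈ (Finset.Icc 1 n).filter (fun m => b ∣ m ∧ ¬ (b * δ b) ∣ m),
        (1 - (PowerSeries.X : PowerSeries ℚ) ^ m)⁻¹) := by
    rw [hprod]
    exact PartitionAux.EqUpTo.prod _ _ _ fun b hb =>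
      PartitionAux.stepC n b (δ b) (hB b hb) (hδ b hb)
  have hdisj' : (↑B : Set ℕ).PairwiseDisjoint
      (fun b => (Finset.Icc 1 n).filter (fun m => b ∣ m ∧ ¬ (b * δ b) ∣ m)) := by
    intro b hb b' hb' hne
    rw [Function.onFun, Finset.disjoint_left]
    intro m hm hm'
    rw [Finset.mem_filter, Finset.mem_Icc] at hm hm'
    have hmem : m ∈ ({x : ℕ | 0 < x ∧ b ∣ x ∧ ¬ (b * δ b) ∣ x} ∩
        {x : ℕ | 0 < x ∧ b' ∣ x ∧ ¬ (b' * δ b') ∣ x}) :=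
      ⟨⟨hm.1.1, hm.2⟩, ⟨hm.1.1, hm'.2⟩⟩
    rw [hdisj b (Finset.mem_coe.1 hb) b' (Finset.mem_coe.1 hb') hne] at hmem
    exact hmem
  have hbiU : B.biUnion (fun b => (Finset.Icc 1 n).filter
        (fun m => b ∣ m ∧ ¬ (b * δ b) ∣ m))
      = (Finset.Icc 1 n).filter (· ∈ S) := by
    ext m
    simp only [Finset.mem_biUnion, Finset.mem_filter, Finset.mem_Icc, hS,
      Set.mem_iUnion, Set.mem_setOf_eq]
    constructor
    · rintro ⟨b, hbB, ⟨h1, h2⟩, hd1, hd2⟩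
      exact ⟨⟨h1, h2⟩, b, hbB, h1, hd1, hd2⟩
    · rintro ⟨⟨h1, h2⟩, b, hbB, -, hd1, hd2⟩
      exact ⟨b, hbB, ⟨h1, h2⟩, hd1, hd2⟩
  rw [PartitionAux.countP A hA n, PartitionAux.countQ S n, ← hF]
  rw [← hbiU, Finset.prod_biUnion hdisj']
  exact happrox n le_rfl
end

section
/- Let k, l, s be positive integers, m_1,...,m_s pairwise coprime positive integers, a_i coprime to m_i, m = m_1···m_s, M_i = m/m_i, and let r_i be positive integers with r_i ≡ a_i M_i \bar{M}_i (mod m) where \bar{M}_i M_i ≡ 1 (mod m_i). Define A = {r_1 j_1 + ... + r_s j_s + mk j_{s+1} : 0 ≤ j_i ≤ m_i − 1, 0 ≤ j_{s+1} ≤ l − 1} and B = (mkℕ \ mklℕ) ∪ ∪_{i=1}^s (r_iℕ \ r_i m_iℕ). Then for all n, the number of partitions of n with all multiplicities in A equals the number of partitions of n with all parts in B. -/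
open scoped Classical
open PowerSeries Finset
namespace CRTPart


noncomputable section

/-- indicator power series (copied from Archive). -/
def indicatorSeries (α : Type*) [Semiring α] (s : Set ℕ) : PowerSeries α :=
  PowerSeries.mk fun n => if n ∈ s then 1 else 0

variable {α : Type*}

theorem coeff_indicator (s : Set ℕ) [Semiring α] (n : ℕ) :
    coeff n (indicatorSeries α s) = if n ∈ s then 1 else 0 :=
  coeff_mk _ _

-- The main workhorse (copied from Archive/Wiedijk100Theorems/Partition.lean).
theorem partialGF_prop (α : Type*) [CommSemiring α] (n : ℕ) (s : Finset ℕ) (hs : ∀ i ∈ s, 0 < i)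
    (c : ℕ → Set ℕ) (hc : ∀ i, i ∉ s → 0 ∈ c i) :
    #{p : n.Partition | (∀ j, p.parts.count j ∈ c j) ∧ ∀ j ∈ p.parts, j ∈ s} =
      coeff n (∏ i ∈ s, indicatorSeries α ((· * i) '' c i)) := by
  simp_rw [coeff_prod, coeff_indicator, prod_boole, sum_boole]
  apply congr_arg
  simp only [mem_univ, forall_true_left, not_and, not_forall, exists_prop,
    Set.mem_image, not_exists]
  set φ : (a : Nat.Partition n) →
    a ∈ filter (fun p ↦ (∀ (j : ℕ), Multiset.count j p.parts ∈ c j) ∧ ∀ j ∈ p.parts, j ∈ s) univ →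
    ℕ →₀ ℕ := fun p _ => {
      toFun := fun i => Multiset.count i p.parts • i
      support := Finset.filter (fun i => i ≠ 0) p.parts.toFinset
      mem_support_toFun := fun a => by
        simp only [smul_eq_mul, ne_eq, mul_eq_zero, Multiset.count_eq_zero]
        rw [not_or, not_not]
        simp only [Multiset.mem_toFinset, not_not, mem_filter] }
  refine Finset.card_bij φ ?_ ?_ ?_
  · intro a ha
    simp only [φ, not_forall, not_exists, not_and, exists_prop, mem_filter]
    rw [mem_finsuppAntidiag]
    dsimp only [ne_eq, smul_eq_mul, id_eq, eq_mpr_eq_cast, le_eq_subset, Finsupp.coe_mk]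
    simp only [mem_univ, forall_true_left, not_and, not_forall, exists_prop,
      mem_filter, true_and] at ha
    refine ⟨⟨?_, fun i ↦ ?_⟩, fun i _ ↦ ⟨a.parts.count i, ha.1 i, rfl⟩⟩
    · conv_rhs => simp [← a.parts_sum]
      rw [sum_multiset_count_of_subset _ s]
      · simp only [smul_eq_mul]
      · intro i
        simp only [Multiset.mem_toFinset, not_not, mem_filter]
        apply ha.2
    · simp only [ne_eq, Multiset.mem_toFinset, not_not, mem_filter, and_imp]
      exact fun hi _ ↦ ha.2 i hi
  · intro p₁ hp₁ p₂ hp₂ h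
    apply Nat.Partition.ext
    simp only [true_and, mem_univ, mem_filter] at hp₁ hp₂
    ext i
    simp only [φ, ne_eq, Multiset.mem_toFinset, not_not, smul_eq_mul, Finsupp.mk.injEq] at h
    by_cases hi : i = 0
    · rw [hi]
      rw [Multiset.count_eq_zero_of_notMem]
      · rw [Multiset.count_eq_zero_of_notMem]
        intro a; exact Nat.lt_irrefl 0 (hs 0 (hp₂.2 0 a))
      intro a; exact Nat.lt_irrefl 0 (hs 0 (hp₁.2 0 a))
    · rw [← mul_left_inj' hi]
      rw [funext_iff] at h
      exact h.2 i
  · simp only [φ, mem_filter, mem_finsuppAntidiag, mem_univ, exists_prop, true_and, and_assoc]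
    rintro f ⟨hf, hf₃, hf₄⟩
    have hf' : f ∈ finsuppAntidiag s n := mem_finsuppAntidiag.mpr ⟨hf, hf₃⟩
    simp only [mem_finsuppAntidiag] at hf'
    refine ⟨⟨∑ i ∈ s, Multiset.replicate (f i / i) i, ?_, ?_⟩, ?_, ?_, ?_⟩
    · intro i hi
      simp only [exists_prop, Multiset.mem_sum, mem_map, Function.Embedding.coeFn_mk] at hi
      rcases hi with ⟨t, ht, z⟩
      apply hs
      rwa [Multiset.eq_of_mem_replicate z]
    · simp_rw [Multiset.sum_sum, Multiset.sum_replicate, Nat.nsmul_eq_mul]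
      rw [← hf'.1]
      refine sum_congr rfl fun i hi => Nat.div_mul_cancel ?_
      rcases hf₄ i hi with ⟨w, _, hw₂⟩
      rw [← hw₂]
      exact dvd_mul_left _ _
    · intro i
      simp_rw [Multiset.count_sum', Multiset.count_replicate, sum_ite_eq']
      split_ifs with h
      · rcases hf₄ i h with ⟨w, hw₁, hw₂⟩
        rwa [← hw₂, Nat.mul_div_cancel _ (hs i h)]
      · exact hc _ h
    · intro i hi
      rw [Multiset.mem_sum] at hi
      rcases hi with ⟨j, hj₁, hj₂⟩
      rwa [Multiset.eq_of_mem_replicate hj₂]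
    · ext i
      simp_rw [Multiset.count_sum', Multiset.count_replicate, sum_ite_eq']
      simp only [ne_eq, Multiset.mem_toFinset, not_not, smul_eq_mul, ite_mul,
        zero_mul, Finsupp.coe_mk]
      split_ifs with h
      · apply Nat.div_mul_cancel
        rcases hf₄ i h with ⟨w, _, hw₂⟩
        apply Dvd.intro_left _ hw₂
      · apply symm
        rw [← Finsupp.notMem_support_iff]
        exact notMem_mono hf'.2 h

end


noncomputable section

/-- equality of coefficients up to degree `n`. -/
def TEq (n : ℕ) (f g : PowerSeries ℤ) : Prop := ∀ i ≤ n, coeff i f = coeff i g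

theorem TEq.refl {n f} : TEq n f f := fun _ _ => rfl

theorem TEq.symm {n f g} (h : TEq n f g) : TEq n g f := fun i hi => (h i hi).symm

theorem TEq.trans {n f g h} (h1 : TEq n f g) (h2 : TEq n g h) : TEq n f h :=
  fun i hi => (h1 i hi).trans (h2 i hi)

theorem TEq.mul {n f f' g g'} (h1 : TEq n f f') (h2 : TEq n g g') :
    TEq n (f * g) (f' * g') := by
  intro i hi
  rw [coeff_mul, coeff_mul]
  refine Finset.sum_congr rfl fun p hp => ?_
  rw [HasAntidiagonal.mem_antidiagonal] at hp
  rw [h1 p.1 (by omega), h2 p.2 (by omega)]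

theorem TEq.prod {n : ℕ} {ι : Type*} (u : Finset ι) (f g : ι → PowerSeries ℤ)
    (h : ∀ i ∈ u, TEq n (f i) (g i)) : TEq n (∏ i ∈ u, f i) (∏ i ∈ u, g i) := by
  classical
  induction u using Finset.induction with
  | empty => simp [TEq.refl]
  | @insert x u' hx ih =>
    rw [Finset.prod_insert hx, Finset.prod_insert hx]
    exact (h x (mem_insert_self _ _)).mul (ih fun i hi => h i (mem_insert_of_mem hi))

theorem TEq_one_sub_pow {n e : ℕ} (h : n < e) : TEq n (1 - X ^ e) 1 := by
  intro i hi
  rw [map_sub, coeff_X_pow, if_neg (by omega), sub_zero]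

theorem TEq.cancel {n : ℕ} {f g u : PowerSeries ℤ} (hu : constantCoeff u = 1)
    (h : TEq n (f * u) (g * u)) : TEq n f g := by
  intro i hi
  induction i using Nat.strong_induction_on with
  | _ i ih =>
    have hh := h i hi
    rw [coeff_mul, coeff_mul] at hh
    have hmem : ((i, 0) : ℕ × ℕ) ∈ HasAntidiagonal.antidiagonal i := by simp
    rw [← Finset.sum_erase_add _ _ hmem, ← Finset.sum_erase_add _ _ hmem] at hh
    have heq : ∑ p ∈ (HasAntidiagonal.antidiagonal i).erase (i, 0), coeff p.1 f * coeff p.2 u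
        = ∑ p ∈ (HasAntidiagonal.antidiagonal i).erase (i, 0), coeff p.1 g * coeff p.2 u := by
      refine Finset.sum_congr rfl fun p hp => ?_
      have h1 := Finset.mem_of_mem_erase hp
      rw [HasAntidiagonal.mem_antidiagonal] at h1
      have h2 : p ≠ (i, 0) := Finset.ne_of_mem_erase hp
      have h3 : p.1 < i := by
        rcases Nat.lt_or_ge p.1 i with h | h
        · exact h
        · exfalso; apply h2
          have : p.1 = i := by omega
          have : p.2 = 0 := by omega
          exact Prod.ext (by omega) this
      rw [ih p.1 h3 (by omega)]
    have hc0 : (coeff 0) u = 1 := by rw [← hu, PowerSeries.coeff_zero_eq_constantCoeff]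
    simp only [hc0, mul_one] at hh
    omega

/-- geometric partial sum -/
def G (d c : ℕ) : PowerSeries ℤ := ∑ j ∈ Finset.range c, X ^ (d * j)

theorem G_mul (d c : ℕ) : G d c * (1 - X ^ d) = 1 - X ^ (d * c) := by
  induction c with
  | zero => simp [G]
  | succ c ih =>
    rw [G, Finset.sum_range_succ, ← G, add_mul, ih, Nat.mul_succ, pow_add]
    ring

theorem G_eq_ind (d c : ℕ) (hd : 0 < d) :
    G d c = indicatorSeries ℤ {x | ∃ j < c, x = d * j} := by
  ext e
  rw [coeff_indicator, G, map_sum]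
  simp_rw [coeff_X_pow]
  rw [Finset.sum_boole]
  simp only [Set.mem_setOf_eq]
  by_cases h : ∃ j < c, e = d * j
  · rw [if_pos h]
    obtain ⟨j0, hj0, rfl⟩ := h
    have : Finset.filter (fun x => d * j0 = d * x) (Finset.range c) = {j0} := by
      ext j
      simp only [Finset.mem_filter, Finset.mem_range, Finset.mem_singleton]
      constructor
      · rintro ⟨-, hj⟩
        exact (Nat.eq_of_mul_eq_mul_left hd hj).symm
      · rintro rfl; exact ⟨hj0, rfl⟩
    rw [this]
    simp
  · rw [if_neg h]
    have : Finset.filter (fun x => e = d * x) (Finset.range c) = ∅ := by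
      ext j
      simp only [Finset.mem_filter, Finset.mem_range, Finset.notMem_empty, iff_false, not_and]
      intro hj hj2
      exact h ⟨j, hj, hj2⟩
    rw [this]
    simp

end

section IND
theorem ind_mul (S T : Set ℕ)
    (h : ∀ a ∈ S, ∀ b ∈ T, ∀ a' ∈ S, ∀ b' ∈ T, a + b = a' + b' → a = a' ∧ b = b') :
    indicatorSeries ℤ S * indicatorSeries ℤ T
      = indicatorSeries ℤ {x | ∃ a ∈ S, ∃ b ∈ T, x = a + b} := by
  ext j
  rw [coeff_mul, coeff_indicator]
  have step : ∀ p : ℕ × ℕ,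
      coeff p.1 (indicatorSeries ℤ S) * coeff p.2 (indicatorSeries ℤ T)
        = if p.1 ∈ S ∧ p.2 ∈ T then 1 else 0 := by
    intro p
    rw [coeff_indicator, coeff_indicator]
    by_cases h1 : p.1 ∈ S <;> by_cases h2 : p.2 ∈ T <;> simp [h1, h2]
  rw [Finset.sum_congr rfl fun p _ => step p, Finset.sum_boole]
  simp only [Set.mem_setOf_eq]
  by_cases hj : ∃ a ∈ S, ∃ b ∈ T, j = a + b
  · rw [if_pos hj]
    obtain ⟨a, ha, b, hb, rfl⟩ := hj
    have : Finset.filter (fun p : ℕ × ℕ => p.1 ∈ S ∧ p.2 ∈ T)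
        (HasAntidiagonal.antidiagonal (a + b)) = {(a, b)} := by
      ext ⟨x, y⟩
      simp only [Finset.mem_filter, HasAntidiagonal.mem_antidiagonal, Finset.mem_singleton,
        Prod.mk.injEq]
      constructor
      · rintro ⟨hxy, hx, hy⟩
        exact h x hx y hy a ha b hb hxy
      · rintro ⟨rfl, rfl⟩
        exact ⟨rfl, ha, hb⟩
    rw [this]; simp
  · rw [if_neg hj]
    have : Finset.filter (fun p : ℕ × ℕ => p.1 ∈ S ∧ p.2 ∈ T)
        (HasAntidiagonal.antidiagonal j) = ∅ := by
      ext ⟨x, y⟩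
      simp only [Finset.mem_filter, HasAntidiagonal.mem_antidiagonal, Finset.notMem_empty, iff_false,
        not_and]
      intro hxy hx hy
      exact hj ⟨x, hx, y, hy, hxy.symm⟩
    rw [this]; simp

theorem ind_prod {ι : Type*} [Fintype ι] (S : ι → Set ℕ) (h0 : ∀ t, 0 ∈ S t)
    (huniq : ∀ x y : ι → ℕ, (∀ t, x t ∈ S t) → (∀ t, y t ∈ S t) →
      (∑ t, x t) = ∑ t, y t → ∀ t, x t = y t) :
    (∏ t, indicatorSeries ℤ (S t))
      = indicatorSeries ℤ {x | ∃ c : ι → ℕ, (∀ t, c t ∈ S t) ∧ x = ∑ t, c t} := by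
  classical
  -- generalize over subsets
  suffices H : ∀ u : Finset ι, (∏ t ∈ u, indicatorSeries ℤ (S t))
      = indicatorSeries ℤ {x | ∃ c : ι → ℕ, (∀ t, c t ∈ S t) ∧ (∀ t ∉ u, c t = 0)
          ∧ x = ∑ t ∈ u, c t} by
    rw [H Finset.univ]
    apply congrArg (indicatorSeries ℤ)
    ext x
    simp only [Set.mem_setOf_eq, Finset.mem_univ, not_true_eq_false, false_implies,
      implies_true, true_and, and_true]
  intro u
  induction u using Finset.induction with
  | empty =>
    simp only [Finset.prod_empty, Finset.sum_empty]
    ext j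
    rw [coeff_indicator, PowerSeries.coeff_one]
    congr 1
    simp only [Set.mem_setOf_eq, eq_iff_iff]
    constructor
    · rintro rfl
      exact ⟨fun _ => 0, fun t => h0 t, fun _ _ => rfl, rfl⟩
    · rintro ⟨c, -, -, rfl⟩; rfl
  | @insert t u ht ih =>
    rw [Finset.prod_insert ht, ih, ind_mul]
    · apply congrArg (indicatorSeries ℤ)
      ext x
      simp only [Set.mem_setOf_eq]
      constructor
      · rintro ⟨a, ha, b, ⟨c, hc1, hc2, rfl⟩, rfl⟩
        refine ⟨fun w => if w = t then a else c w, ?_, ?_, ?_⟩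
        · intro w; by_cases hw : w = t
          · subst hw; simpa using ha
          · simpa [hw] using hc1 w
        · intro w hw
          have hw1 : w ≠ t := fun e => hw (e ▸ Finset.mem_insert_self t u)
          have hw2 : w ∉ u := fun e => hw (Finset.mem_insert_of_mem e)
          simp [hw1, hc2 w hw2]
        · rw [Finset.sum_insert ht]
          simp only [if_pos rfl]
          congr 1
          refine Finset.sum_congr rfl fun w hw => ?_
          have : w ≠ t := fun e => ht (e ▸ hw)
          simp [this]
      · rintro ⟨c, hc1, hc2, rfl⟩
        refine ⟨c t, hc1 t, ∑ w ∈ u, c w, ⟨fun w => if w ∈ u then c w else 0, ?_, ?_, ?_⟩,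
          by rw [Finset.sum_insert ht]⟩
        · intro w; by_cases hw : w ∈ u <;> simp [hw, hc1 w, h0 w]
        · intro w hw; simp [hw]
        · refine Finset.sum_congr rfl fun w hw => ?_; simp [hw]
    · -- uniqueness for the pair
      rintro a ha b ⟨c, hc1, hc2, rfl⟩ a' ha' b' ⟨c', hc1', hc2', rfl⟩ heq
      -- build total functions
      set x : ι → ℕ := fun w => if w = t then a else c w with hx
      set y : ι → ℕ := fun w => if w = t then a' else c' w with hy
      have hxm : ∀ w, x w ∈ S w := by
        intro w; by_cases hw : w = t
        · subst hw; simpa [hx] using ha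
        · simpa [hx, hw] using hc1 w
      have hym : ∀ w, y w ∈ S w := by
        intro w; by_cases hw : w = t
        · subst hw; simpa [hy] using ha'
        · simpa [hy, hw] using hc1' w
      have hsum : (∑ w, x w) = ∑ w, y w := by
        have hxs : (∑ w, x w) = a + ∑ w ∈ u, c w := by
          rw [← Finset.sum_subset (Finset.subset_univ (insert t u))]
          · rw [Finset.sum_insert ht]
            simp only [hx, if_pos rfl]
            congr 1
            refine Finset.sum_congr rfl fun w hw => ?_
            have : w ≠ t := fun e => ht (e ▸ hw)
            simp [this]
          · intro w _ hw
            have hw1 : w ≠ t := fun e => hw (e ▸ Finset.mem_insert_self t u)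
            have hw2 : w ∉ u := fun e => hw (Finset.mem_insert_of_mem e)
            simp [hx, hw1, hc2 w hw2]
        have hys : (∑ w, y w) = a' + ∑ w ∈ u, c' w := by
          rw [← Finset.sum_subset (Finset.subset_univ (insert t u))]
          · rw [Finset.sum_insert ht]
            simp only [hy, if_pos rfl]
            congr 1
            refine Finset.sum_congr rfl fun w hw => ?_
            have : w ≠ t := fun e => ht (e ▸ hw)
            simp [this]
          · intro w _ hw
            have hw1 : w ≠ t := fun e => hw (e ▸ Finset.mem_insert_self t u)
            have hw2 : w ∉ u := fun e => hw (Finset.mem_insert_of_mem e)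
            simp [hy, hw1, hc2' w hw2]
        rw [hxs, hys, heq]
      have := huniq x y hxm hym hsum
      constructor
      · have := this t; simpa [hx, hy] using this
      · refine Finset.sum_congr rfl fun w hw => ?_
        have hwt : w ≠ t := fun e => ht (e ▸ hw)
        have := this w
        simpa [hx, hy, hwt] using this

theorem ind_dvd_mul (d : ℕ) (hd : 0 < d) :
    indicatorSeries ℤ {x | d ∣ x} * (1 - X ^ d) = 1 := by
  ext e
  rw [mul_sub, mul_one, map_sub, coeff_indicator, PowerSeries.coeff_mul_X_pow',
    PowerSeries.coeff_one]
  simp only [coeff_indicator, Set.mem_setOf_eq]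
  by_cases he : e = 0
  · subst he
    rw [if_pos (dvd_zero d), if_neg (by omega)]
    simp
  · rw [if_neg he]
    by_cases hde : d ≤ e
    · rw [if_pos hde]
      by_cases hdvd : d ∣ e
      · rw [if_pos hdvd, if_pos (Nat.dvd_sub hdvd dvd_rfl)]; ring
      · rw [if_neg hdvd, if_neg ?_]
        · ring
        · intro hc
          exact hdvd (by
            have := Nat.dvd_add hc (dvd_refl d)
            rwa [Nat.sub_add_cancel hde] at this)
    · rw [if_neg hde, if_neg ?_]
      · ring
      · intro hdvd
        exact hde (Nat.le_of_dvd (Nat.pos_of_ne_zero he) hdvd)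

theorem ind_zero : indicatorSeries ℤ {0} = 1 := by
  ext e
  rw [coeff_indicator, PowerSeries.coeff_one]
  simp [eq_comm]


end IND
section BOOK
theorem TEq_prod_filter (n : ℕ) (u : Finset ℕ) (f : ℕ → ℕ) :
    TEq n (∏ i ∈ u, (1 - X ^ f i))
      (∏ i ∈ u.filter (fun i => f i ≤ n), (1 - X ^ f i)) := by
  rw [← Finset.prod_filter_mul_prod_filter_not u (fun i => f i ≤ n)]
  have h2 : TEq n (∏ i ∈ u.filter (fun i => ¬ f i ≤ n), (1 - (X : PowerSeries ℤ) ^ f i)) 1 := by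
    have := TEq.prod (u.filter (fun i => ¬ f i ≤ n)) (fun i => 1 - (X : PowerSeries ℤ) ^ f i)
      (fun _ => 1) (fun i hi => by
        rw [Finset.mem_filter] at hi
        exact TEq_one_sub_pow (show n < f i by omega))
    simpa using this
  have := (TEq.refl (n := n)
    (f := ∏ i ∈ u.filter (fun i => f i ≤ n), (1 - (X : PowerSeries ℤ) ^ f i))).mul h2
  rwa [mul_one] at this

theorem image_mul_div (n d : ℕ) (hd : 0 < d) :
    ((Finset.Icc 1 n).filter (fun i => d * i ≤ n)).image (fun i => d * i)
      = (Finset.Icc 1 n).filter (fun x => d ∣ x) := by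
  ext x
  simp only [Finset.mem_image, Finset.mem_filter, Finset.mem_Icc]
  constructor
  · rintro ⟨i, ⟨⟨hi1, hi2⟩, hdi⟩, rfl⟩
    exact ⟨⟨by nlinarith, hdi⟩, ⟨i, rfl⟩⟩
  · rintro ⟨⟨hx1, hx2⟩, c, rfl⟩
    refine ⟨c, ⟨⟨?_, ?_⟩, hx2⟩, rfl⟩
    · rcases Nat.eq_zero_or_pos c with rfl | hc
      · omega
      · omega
    · calc c ≤ d * c := Nat.le_mul_of_pos_left c hd
        _ ≤ n := hx2

theorem TEq_prod_D (n d : ℕ) (hd : 0 < d) :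
    TEq n (∏ i ∈ Finset.Icc 1 n, (1 - X ^ (d * i)))
      (∏ x ∈ (Finset.Icc 1 n).filter (fun x => d ∣ x), (1 - X ^ x)) := by
  refine (TEq_prod_filter n _ (fun i => d * i)).trans ?_
  rw [← image_mul_div n d hd, Finset.prod_image ?_]
  · exact TEq.refl
  · intro x _ y _ h
    exact Nat.eq_of_mul_eq_mul_left hd h

theorem constantCoeff_one_sub_pow {e : ℕ} (he : 0 < e) :
    constantCoeff (1 - X ^ e : PowerSeries ℤ) = 1 := by
  rw [map_sub, map_one, map_pow, constantCoeff_X, zero_pow he.ne', sub_zero]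
end BOOK

section NT4

section NT
variable {s : ℕ} {m a r Mbar : Fin s → ℕ}
variable (hm : ∀ i, 0 < m i) (hacop : ∀ i, Nat.Coprime (a i) (m i))
variable (hcop : ∀ i j, i ≠ j → Nat.Coprime (m i) (m j))
variable (hinv : ∀ i, Mbar i * ((∏ t, m t) / m i) ≡ 1 [MOD m i])
variable (hri : ∀ i, r i ≡ a i * ((∏ t, m t) / m i) * Mbar i [MOD (∏ t, m t)])

theorem dvdP (t : Fin s) : m t ∣ ∏ u, m u := Finset.dvd_prod_of_mem _ (Finset.mem_univ t)

include hinv hri in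
theorem r_self (t : Fin s) : r t ≡ a t [MOD m t] := by
  have h1 : r t ≡ a t * ((∏ u, m u) / m t) * Mbar t [MOD m t] :=
    (hri t).of_dvd (dvdP t)
  have h2 : a t * ((∏ u, m u) / m t) * Mbar t = a t * (Mbar t * ((∏ u, m u) / m t)) := by ring
  have h3 : a t * (Mbar t * ((∏ u, m u) / m t)) ≡ a t * 1 [MOD m t] :=
    (hinv t).mul_left (a t)
  rw [h2] at h1
  simpa using h1.trans h3

include hcop hri in
theorem r_other {t u : Fin s} (htu : t ≠ u) : m u ∣ r t := by
  have hcu : Nat.Coprime (m u) (m t) := hcop u t (Ne.symm htu)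
  have h2 : m u ∣ (∏ w, m w) / m t := by
    apply hcu.dvd_of_dvd_mul_left
    rw [Nat.mul_div_cancel' (dvdP t)]
    exact dvdP u
  have h3 : m u ∣ a t * ((∏ w, m w) / m t) * Mbar t := ((h2.mul_left (a t)).mul_right (Mbar t))
  have h4 : r t ≡ a t * ((∏ w, m w) / m t) * Mbar t [MOD m u] :=
    (hri t).of_dvd (dvdP u)
  have h5 : a t * ((∏ w, m w) / m t) * Mbar t ≡ 0 [MOD m u] :=
    (Nat.modEq_zero_iff_dvd).2 h3
  exact (Nat.modEq_zero_iff_dvd).1 (h4.trans h5)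

include hm hacop hcop hinv hri in
theorem uniq_rep {k l : ℕ} (hk : 0 < k)
    (j j' : Fin s → ℕ) (js js' : ℕ) (hj : ∀ t, j t < m t) (hj' : ∀ t, j' t < m t)
    (heq : (∑ t, r t * j t) + ((∏ t, m t) * k) * js
         = (∑ t, r t * j' t) + ((∏ t, m t) * k) * js') :
    (∀ t, j t = j' t) ∧ js = js' := by
  have hP : 0 < ∏ t, m t := Finset.prod_pos fun t _ => hm t
  set P := ∏ t, m t with hPdef
  have hjeq : ∀ u, j u = j' u := by
    intro u
    haveI : NeZero (m u) := ⟨(hm u).ne'⟩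
    have hcast : ((∑ t, r t * j t) + ((∏ t, m t) * k) * js : ℕ)
        = (((∑ t, r t * j' t) + ((∏ t, m t) * k) * js' : ℕ) : ZMod (m u)) := by
      exact_mod_cast congrArg (Nat.cast : ℕ → ZMod (m u)) heq
    push_cast at hcast
    have hP0 : ((∏ t, m t : ℕ) : ZMod (m u)) = 0 :=
      (ZMod.natCast_eq_zero_iff _ _).2 (dvdP u)
    have hsum : ∀ jj : Fin s → ℕ, (∑ t, ((r t : ZMod (m u)) * (jj t : ZMod (m u))))
        = (a u : ZMod (m u)) * (jj u : ZMod (m u)) := by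
      intro jj
      rw [Finset.sum_eq_single u]
      · congr 1
        exact (ZMod.natCast_eq_natCast_iff _ _ _).2 (r_self hinv hri u)
      · intro t _ htu
        have : ((r t : ℕ) : ZMod (m u)) = 0 :=
          (ZMod.natCast_eq_zero_iff _ _).2 (r_other hcop hri htu)
        rw [this, zero_mul]
      · intro h; exact absurd (Finset.mem_univ u) h
    rw [← Nat.cast_prod, hP0] at hcast
    simp only [zero_mul, add_zero] at hcast
    rw [hsum j, hsum j'] at hcast
    have hu : IsUnit ((a u : ℕ) : ZMod (m u)) := (ZMod.isUnit_iff_coprime _ _).2 (hacop u)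
    have := hu.mul_left_cancel hcast
    have hmod : j u ≡ j' u [MOD m u] := (ZMod.natCast_eq_natCast_iff _ _ _).1 this
    have := hmod
    unfold Nat.ModEq at this
    rwa [Nat.mod_eq_of_lt (hj u), Nat.mod_eq_of_lt (hj' u)] at this
  refine ⟨hjeq, ?_⟩
  have hsums : (∑ t, r t * j t) = ∑ t, r t * j' t :=
    Finset.sum_congr rfl fun t _ => by rw [hjeq t]
  rw [hsums] at heq
  have := Nat.add_left_cancel heq
  exact Nat.eq_of_mul_eq_mul_left (by positivity) this

-- membership facts about the pieces of B
include hm hacop hinv hri in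
theorem piece_not_dvd {t : Fin s} {x : ℕ}
    (h1 : r t ∣ x) (h2 : ¬ r t * m t ∣ x) : ¬ m t ∣ x := by
  intro hmx
  obtain ⟨c, rfl⟩ := h1
  haveI : NeZero (m t) := ⟨(hm t).ne'⟩
  have hc : ((r t * c : ℕ) : ZMod (m t)) = 0 := (ZMod.natCast_eq_zero_iff _ _).2 hmx
  push_cast at hc
  have hra : ((r t : ℕ) : ZMod (m t)) = ((a t : ℕ) : ZMod (m t)) :=
    (ZMod.natCast_eq_natCast_iff _ _ _).2 (r_self hinv hri t)
  rw [hra] at hc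
  have hu : IsUnit ((a t : ℕ) : ZMod (m t)) := (ZMod.isUnit_iff_coprime _ _).2 (hacop t)
  have hc0 : ((c : ℕ) : ZMod (m t)) = 0 := by
    have := hu.mul_left_cancel (hc.trans (mul_zero _).symm)
    simpa using this
  have : m t ∣ c := (ZMod.natCast_eq_zero_iff _ _).1 hc0
  exact h2 (mul_dvd_mul_left (r t) this)
end NT

end NT4

section
section NT
variable {s : ℕ} {m a r Mbar : Fin s → ℕ} {k l : ℕ}
variable (hm : ∀ i, 0 < m i) (hacop : ∀ i, Nat.Coprime (a i) (m i))
variable (hcop : ∀ i j, i ≠ j → Nat.Coprime (m i) (m j))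
variable (hinv : ∀ i, Mbar i * ((∏ t, m t) / m i) ≡ 1 [MOD m i])
variable (hri : ∀ i, r i ≡ a i * ((∏ t, m t) / m i) * Mbar i [MOD (∏ t, m t)])

-- uniqueness hypotheses assumed abstractly here; supplied by part4 lemmas later
include hm in
theorem per_i (hk : 0 < k) (hl : 0 < l) (hr : ∀ t, 0 < r t)
    (huniq : ∀ (j j' : Fin s → ℕ) (js js' : ℕ), (∀ t, j t < m t) → (∀ t, j' t < m t) →
      (∑ t, r t * j t) + ((∏ t, m t) * k) * js
        = (∑ t, r t * j' t) + ((∏ t, m t) * k) * js' →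
      (∀ t, j t = j' t) ∧ js = js')
    (i : ℕ) (hi : 0 < i) :
    indicatorSeries ℤ ((· * i) '' {x | ∃ j : Fin s → ℕ, ∃ js : ℕ,
        (∀ t, j t ≤ m t - 1) ∧ js ≤ l - 1 ∧
        x = (∑ t, r t * j t) + (∏ t, m t) * k * js})
      * ((∏ t, (1 - X ^ (r t * i))) * (1 - X ^ ((∏ t, m t) * k * i)))
    = (∏ t, (1 - X ^ (r t * m t * i))) * (1 - X ^ ((∏ t, m t) * k * l * i)) := by
  set P := ∏ t, m t with hPdef
  set S : Option (Fin s) → Set ℕ := fun w => match w with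
    | none => {x | ∃ j < l, x = P * k * i * j}
    | some t => {x | ∃ j < m t, x = r t * i * j} with hS
  have h0 : ∀ w, 0 ∈ S w := by
    rintro (_ | t)
    · exact ⟨0, hl, by simp⟩
    · exact ⟨0, hm t, by simp⟩
  -- key arithmetic identity
  have harith : ∀ (j : Fin s → ℕ) (js : ℕ),
      ((∑ t, r t * j t) + P * k * js) * i = P * k * i * js + ∑ t, r t * i * j t := by
    intro j js
    have h1 : ∑ t, r t * j t * i = ∑ t, r t * i * j t :=
      Finset.sum_congr rfl fun t _ => by ring
    rw [add_mul, Finset.sum_mul, h1]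
    ring
  have huniqS : ∀ x y : Option (Fin s) → ℕ, (∀ w, x w ∈ S w) → (∀ w, y w ∈ S w) →
      (∑ w, x w) = ∑ w, y w → ∀ w, x w = y w := by
    intro x y hx hy hsum
    have jx : ∀ t, ∃ j < m t, x (some t) = r t * i * j := fun t => hx (some t)
    have jy : ∀ t, ∃ j < m t, y (some t) = r t * i * j := fun t => hy (some t)
    obtain ⟨jsx, hjsx, hxn⟩ := hx none
    obtain ⟨jsy, hjsy, hyn⟩ := hy none
    set fx : Fin s → ℕ := fun t => Classical.choose (jx t) with hfx
    set fy : Fin s → ℕ := fun t => Classical.choose (jy t) with hfy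
    have hfx1 : ∀ t, fx t < m t := fun t => (Classical.choose_spec (jx t)).1
    have hfx2 : ∀ t, x (some t) = r t * i * fx t := fun t => (Classical.choose_spec (jx t)).2
    have hfy1 : ∀ t, fy t < m t := fun t => (Classical.choose_spec (jy t)).1
    have hfy2 : ∀ t, y (some t) = r t * i * fy t := fun t => (Classical.choose_spec (jy t)).2
    rw [Fintype.sum_option, hxn, Fintype.sum_option, hyn] at hsum
    rw [Finset.sum_congr rfl fun t _ => hfx2 t] at hsum
    rw [Finset.sum_congr rfl fun t _ => hfy2 t] at hsum
    rw [← harith fx jsx, ← harith fy jsy] at hsum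
    have heq := Nat.eq_of_mul_eq_mul_right hi hsum
    obtain ⟨hje, hjse⟩ := huniq fx fy jsx jsy hfx1 hfy1 heq
    rintro (_ | t)
    · rw [hxn, hyn, hjse]
    · rw [hfx2 t, hfy2 t, hje t]
  have hprod := ind_prod S h0 huniqS
  -- identify the sumset with the image
  have himg : {x | ∃ c : Option (Fin s) → ℕ, (∀ w, c w ∈ S w) ∧ x = ∑ w, c w}
      = (· * i) '' {x | ∃ j : Fin s → ℕ, ∃ js : ℕ,
        (∀ t, j t ≤ m t - 1) ∧ js ≤ l - 1 ∧
        x = (∑ t, r t * j t) + P * k * js} := by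
    ext x
    simp only [Set.mem_setOf_eq, Set.mem_image]
    constructor
    · rintro ⟨c, hc, rfl⟩
      obtain ⟨js, hjs, hcn⟩ := hc none
      have jc : ∀ t, ∃ j < m t, c (some t) = r t * i * j := fun t => hc (some t)
      set f : Fin s → ℕ := fun t => Classical.choose (jc t) with hf
      have hf1 : ∀ t, f t < m t := fun t => (Classical.choose_spec (jc t)).1
      have hf2 : ∀ t, c (some t) = r t * i * f t := fun t => (Classical.choose_spec (jc t)).2
      refine ⟨(∑ t, r t * f t) + P * k * js, ⟨f, js, fun t => by have := hf1 t; omega,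
        by omega, rfl⟩, ?_⟩
      rw [harith f js, Fintype.sum_option, hcn,
        Finset.sum_congr rfl fun t _ => hf2 t]
    · rintro ⟨y, ⟨j, js, hj, hjs, rfl⟩, rfl⟩
      refine ⟨fun w => match w with
        | none => P * k * i * js
        | some t => r t * i * j t, ?_, ?_⟩
      · rintro (_ | t)
        · exact ⟨js, by have := hl; omega, rfl⟩
        · exact ⟨j t, by have := hm t; have := hj t; omega, rfl⟩
      · rw [harith j js, Fintype.sum_option]
  -- turn indicators into G's
  have hGE : ∀ t : Fin s, indicatorSeries ℤ (S (some t)) = G (r t * i) (m t) := by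
    intro t
    rw [G_eq_ind _ _ (Nat.mul_pos (hr t) hi)]
  have hGF : indicatorSeries ℤ (S none) = G (P * k * i) l := by
    have hP : 0 < P := Finset.prod_pos fun t _ => hm t
    rw [G_eq_ind _ _ (Nat.mul_pos (Nat.mul_pos hP hk) hi)]
  rw [← himg, ← hprod, Fintype.prod_option, hGF,
    Finset.prod_congr rfl fun t _ => hGE t]
  -- now pure algebra with G_mul
  have key : ∀ t : Fin s, G (r t * i) (m t) * (1 - X ^ (r t * i)) = 1 - X ^ (r t * m t * i) := by
    intro t
    rw [G_mul]
    congr 2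
    ring
  have keyF : G (P * k * i) l * (1 - X ^ (P * k * i)) = 1 - X ^ (P * k * l * i) := by
    rw [G_mul]
    congr 2
    ring
  calc G (P * k * i) l * (∏ t, G (r t * i) (m t))
        * ((∏ t, (1 - X ^ (r t * i))) * (1 - X ^ (P * k * i)))
      = (∏ t, G (r t * i) (m t) * (1 - X ^ (r t * i)))
        * (G (P * k * i) l * (1 - X ^ (P * k * i))) := by
        rw [Finset.prod_mul_distrib]; ring
    _ = (∏ t, (1 - X ^ (r t * m t * i))) * (1 - X ^ (P * k * l * i)) := by
        rw [keyF, Finset.prod_congr rfl fun t _ => key t]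
end NT
end

end CRTPart

open scoped Classical

open PowerSeries CRTPart in
/-- Main theorem (CRT partition theorem). -/
theorem main_crt_partition (k l s : ℕ) (hk : 0 < k) (hl : 0 < l) (hs : 0 < s)
    (m a r Mbar : Fin s → ℕ)
    (hm : ∀ i, 0 < m i) (ha : ∀ i, 0 < a i) (hr : ∀ i, 0 < r i)
    (hMbar : ∀ i, 0 < Mbar i)
    (hcop : ∀ i j, i ≠ j → Nat.Coprime (m i) (m j))
    (hacop : ∀ i, Nat.Coprime (a i) (m i))
    (hinv : ∀ i, Mbar i * ((∏ t, m t) / m i) ≡ 1 [MOD m i])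
    (hri : ∀ i, r i ≡ a i * ((∏ t, m t) / m i) * Mbar i [MOD (∏ t, m t)]) (n : ℕ) :
    partP {x | ∃ j : Fin s → ℕ, ∃ js : ℕ,
        (∀ i, j i ≤ m i - 1) ∧ js ≤ l - 1 ∧
        x = (∑ i, r i * j i) + (∏ t, m t) * k * js} n
      = partQ ({x | 0 < x ∧ (∏ t, m t) * k ∣ x ∧ ¬ (∏ t, m t) * k * l ∣ x}
          ∪ ⋃ i, {x | 0 < x ∧ r i ∣ x ∧ ¬ r i * m i ∣ x}) n := by
  classical
  set P := ∏ t, m t with hPdef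
  have hP : 0 < P := Finset.prod_pos fun t _ => hm t
  set A : Set ℕ := {x | ∃ j : Fin s → ℕ, ∃ js : ℕ,
      (∀ i, j i ≤ m i - 1) ∧ js ≤ l - 1 ∧
      x = (∑ i, r i * j i) + P * k * js} with hAdef
  set B : Set ℕ := {x | 0 < x ∧ P * k ∣ x ∧ ¬P * k * l ∣ x}
      ∪ ⋃ i, {x | 0 < x ∧ r i ∣ x ∧ ¬r i * m i ∣ x} with hBdef
  have h0A : (0 : ℕ) ∈ A :=
    ⟨fun _ => 0, 0, fun i => Nat.zero_le _, Nat.zero_le _, by simp⟩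
  set s0 : Finset ℕ := Finset.Icc 1 n with hs0def
  have hs0pos : ∀ i ∈ s0, 0 < i := fun i hi => by
    rw [hs0def, Finset.mem_Icc] at hi; omega
  have hs0le : ∀ (p : Nat.Partition n), ∀ j ∈ p.parts, j ∈ s0 := by
    intro p j hj
    rw [hs0def, Finset.mem_Icc]
    exact ⟨p.parts_pos hj, (Multiset.le_sum_of_mem hj).trans_eq p.parts_sum⟩
  set cB : ℕ → Set ℕ := fun i => if i ∈ B then Set.univ else {0} with hcBdef
  have hcB0 : ∀ i, i ∉ s0 → 0 ∈ cB i := fun i _ => by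
    by_cases h : i ∈ B <;> simp [hcBdef, h]
  set LHSGF : PowerSeries ℤ := ∏ i ∈ s0, indicatorSeries ℤ ((· * i) '' A) with hLHSdef
  set RHSGF : PowerSeries ℤ := ∏ i ∈ s0, indicatorSeries ℤ ((· * i) '' cB i) with hRHSdef
  -- counts as coefficients
  have hL : (partP A n : ℤ) = coeff n LHSGF := by
    have hcard : partP A n = (Finset.univ.filter (fun p : Nat.Partition n =>
        (∀ j, Multiset.count j p.parts ∈ A) ∧ ∀ j ∈ p.parts, j ∈ s0)).card := by
      unfold partP
      congr 1
      ext p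
      simp only [Finset.mem_filter, Finset.mem_univ, true_and]
      constructor
      · intro h
        refine ⟨fun j => ?_, hs0le p⟩
        by_cases hj : j ∈ p.parts
        · exact h j hj
        · rw [Multiset.count_eq_zero_of_notMem hj]; exact h0A
      · rintro ⟨h1, -⟩ i _
        exact h1 i
    rw [hcard]
    exact_mod_cast CRTPart.partialGF_prop ℤ n s0 hs0pos (fun _ => A) (fun i _ => h0A)
  have hR : (partQ B n : ℤ) = coeff n RHSGF := by
    have hcard : partQ B n = (Finset.univ.filter (fun p : Nat.Partition n =>
        (∀ j, Multiset.count j p.parts ∈ cB j) ∧ ∀ j ∈ p.parts, j ∈ s0)).card := by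
      unfold partQ
      congr 1
      ext p
      simp only [Finset.mem_filter, Finset.mem_univ, true_and]
      constructor
      · intro h
        refine ⟨fun j => ?_, hs0le p⟩
        by_cases hj : j ∈ B
        · simp [hcBdef, hj]
        · have hjp : j ∉ p.parts := fun hc => hj (h j hc)
          rw [Multiset.count_eq_zero_of_notMem hjp]
          simp [hcBdef, hj]
      · rintro ⟨h1, -⟩ i hi
        by_contra hiB
        have := h1 i
        rw [hcBdef] at this
        simp only [if_neg hiB, Set.mem_singleton_iff] at this
        exact absurd this (Multiset.count_ne_zero.2 hi)
    rw [hcard]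
    exact_mod_cast CRTPart.partialGF_prop ℤ n s0 hs0pos cB hcB0
  -- uniqueness of representation
  have huniq := CRTPart.uniq_rep (m := m) (a := a) (r := r) (Mbar := Mbar)
      hm hacop hcop hinv hri (k := k) (l := l) hk
  -- the three products
  set P1 : PowerSeries ℤ :=
    ∏ i ∈ s0, ((∏ t, (1 - X ^ (r t * i))) * (1 - X ^ (P * k * i))) with hP1def
  set P2 : PowerSeries ℤ :=
    ∏ i ∈ s0, ((∏ t, (1 - X ^ (r t * m t * i))) * (1 - X ^ (P * k * l * i))) with hP2def
  set Q1 : PowerSeries ℤ := ∏ x ∈ s0.filter (fun x => x ∈ B), (1 - X ^ x) with hQ1def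
  -- exact identity 1 : LHSGF * P1 = P2
  have hexact1 : LHSGF * P1 = P2 := by
    rw [hLHSdef, hP1def, hP2def, ← Finset.prod_mul_distrib]
    refine Finset.prod_congr rfl fun i hi => ?_
    exact CRTPart.per_i hm hk hl hr huniq i (hs0pos i hi)
  -- exact identity 2 : RHSGF * Q1 = 1
  have hexact2 : RHSGF * Q1 = 1 := by
    rw [hRHSdef, hQ1def, Finset.prod_filter, ← Finset.prod_mul_distrib]
    refine Finset.prod_eq_one fun i hi => ?_
    by_cases hiB : i ∈ B
    · rw [if_pos hiB]
      have himg : (· * i) '' cB i = {x | i ∣ x} := by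
        rw [hcBdef]
        simp only [if_pos hiB, Set.image_univ]
        ext x
        simp only [Set.mem_range, Set.mem_setOf_eq]
        constructor
        · rintro ⟨y, rfl⟩; exact ⟨y, mul_comm y i⟩
        · rintro ⟨c, rfl⟩; exact ⟨c, mul_comm c i⟩
      rw [himg]
      exact CRTPart.ind_dvd_mul i (hs0pos i hi)
    · rw [if_neg hiB]
      have himg : (· * i) '' cB i = {0} := by
        rw [hcBdef]
        simp [if_neg hiB]
      rw [himg, CRTPart.ind_zero, mul_one]
  -- divisor finsets
  set Dd : ℕ → Finset ℕ := fun d => s0.filter (fun x => d ∣ x) with hDdef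
  have hDsub : ∀ d1 d2 : ℕ, d1 ∣ d2 → Dd d2 ⊆ Dd d1 := by
    intro d1 d2 hd x hx
    rw [hDdef] at hx ⊢
    rw [Finset.mem_filter] at hx ⊢
    exact ⟨hx.1, hd.trans hx.2⟩
  have hnotm : ∀ t : Fin s, ∀ x ∈ Dd (r t) \ Dd (r t * m t), ¬ m t ∣ x := by
    intro t x hx
    rw [Finset.mem_sdiff, hDdef, Finset.mem_filter, Finset.mem_filter] at hx
    obtain ⟨⟨hxs, hdv⟩, hnd⟩ := hx
    have hnd' : ¬ r t * m t ∣ x := fun hc => hnd ⟨hxs, hc⟩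
    exact CRTPart.piece_not_dvd hm hacop hinv hri hdv hnd'
  have hmkdvd : ∀ t : Fin s, ∀ x ∈ Dd (P * k) \ Dd (P * k * l), m t ∣ x := by
    intro t x hx
    rw [Finset.mem_sdiff, hDdef, Finset.mem_filter] at hx
    exact ((CRTPart.dvdP t).trans (dvd_mul_right P k)).trans hx.1.2
  have hcrossdvd : ∀ t u : Fin s, t ≠ u → ∀ x ∈ Dd (r u) \ Dd (r u * m u), m t ∣ x := by
    intro t u htu x hx
    rw [Finset.mem_sdiff, hDdef, Finset.mem_filter] at hx
    exact (CRTPart.r_other hcop hri (Ne.symm htu)).trans hx.1.2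
  have hd2 : (↑(Finset.univ : Finset (Fin s)) : Set (Fin s)).PairwiseDisjoint
      (fun t => Dd (r t) \ Dd (r t * m t)) := by
    intro t _ u _ htu
    refine Finset.disjoint_left.2 fun x hxt hxu => ?_
    exact hnotm t x hxt (hcrossdvd t u htu x hxu)
  have hd1 : Disjoint (Dd (P * k) \ Dd (P * k * l))
      ((Finset.univ : Finset (Fin s)).biUnion (fun t => Dd (r t) \ Dd (r t * m t))) := by
    rw [Finset.disjoint_left]
    intro x hx hxu
    rw [Finset.mem_biUnion] at hxu
    obtain ⟨t, -, hxt⟩ := hxu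
    exact hnotm t x hxt (hmkdvd t x hx)
  -- decomposition of B ∩ [1, n]
  have hBn : s0.filter (fun x => x ∈ B) = (Dd (P * k) \ Dd (P * k * l))
      ∪ (Finset.univ : Finset (Fin s)).biUnion (fun t => Dd (r t) \ Dd (r t * m t)) := by
    ext x
    by_cases hx : x ∈ s0
    · have hx0 : 0 < x := hs0pos x hx
      simp only [Finset.mem_filter, Finset.mem_union, Finset.mem_biUnion, Finset.mem_sdiff,
        hDdef, Finset.mem_univ, true_and, hx, hBdef, Set.mem_union, Set.mem_iUnion,
        Set.mem_setOf_eq, hx0]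
      try tauto
    · constructor
      · intro h; exact absurd (Finset.mem_filter.1 h).1 hx
      · intro h
        rcases Finset.mem_union.1 h with h | h
        · exact absurd (Finset.mem_filter.1 (Finset.mem_sdiff.1 h).1).1 hx
        · obtain ⟨t, -, ht⟩ := Finset.mem_biUnion.1 h
          exact absurd (Finset.mem_filter.1 (Finset.mem_sdiff.1 ht).1).1 hx
  -- truncated identities
  have hT1 : TEq n P1 ((∏ t, ∏ x ∈ Dd (r t), (1 - (X : PowerSeries ℤ) ^ x)) *
      ∏ x ∈ Dd (P * k), (1 - X ^ x)) := by
    have e1 : P1 = (∏ t, ∏ i ∈ s0, (1 - (X : PowerSeries ℤ) ^ (r t * i))) *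
        ∏ i ∈ s0, (1 - X ^ (P * k * i)) := by
      rw [hP1def, Finset.prod_mul_distrib, Finset.prod_comm]
    rw [e1]
    exact (TEq.prod _ _ _ fun t _ => TEq_prod_D n (r t) (hr t)).mul
      (TEq_prod_D n (P * k) (Nat.mul_pos hP hk))
  have hT2 : TEq n P2 ((∏ t, ∏ x ∈ Dd (r t * m t), (1 - (X : PowerSeries ℤ) ^ x)) *
      ∏ x ∈ Dd (P * k * l), (1 - X ^ x)) := by
    have e1 : P2 = (∏ t, ∏ i ∈ s0, (1 - (X : PowerSeries ℤ) ^ (r t * m t * i))) *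
        ∏ i ∈ s0, (1 - X ^ (P * k * l * i)) := by
      rw [hP2def, Finset.prod_mul_distrib, Finset.prod_comm]
    rw [e1]
    exact (TEq.prod _ _ _ fun t _ => TEq_prod_D n (r t * m t) (Nat.mul_pos (hr t) (hm t))).mul
      (TEq_prod_D n (P * k * l) (Nat.mul_pos (Nat.mul_pos hP hk) hl))
  have hQdecomp : Q1 = (∏ x ∈ Dd (P * k) \ Dd (P * k * l), (1 - (X : PowerSeries ℤ) ^ x)) *
      ∏ t, ∏ x ∈ Dd (r t) \ Dd (r t * m t), (1 - X ^ x) := by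
    rw [hQ1def, hBn, Finset.prod_union hd1, Finset.prod_biUnion hd2]
  have hA1 : ∀ t : Fin s, (∏ x ∈ Dd (r t * m t), (1 - (X : PowerSeries ℤ) ^ x)) *
      ∏ x ∈ Dd (r t) \ Dd (r t * m t), (1 - X ^ x) = ∏ x ∈ Dd (r t), (1 - X ^ x) := by
    intro t
    rw [mul_comm]
    exact Finset.prod_sdiff (hDsub _ _ (dvd_mul_right (r t) (m t)))
  have hA2 : (∏ x ∈ Dd (P * k * l), (1 - (X : PowerSeries ℤ) ^ x)) *
      ∏ x ∈ Dd (P * k) \ Dd (P * k * l), (1 - X ^ x) = ∏ x ∈ Dd (P * k), (1 - X ^ x) := by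
    rw [mul_comm]
    exact Finset.prod_sdiff (hDsub _ _ (dvd_mul_right _ l))
  have heqq : ((∏ t, ∏ x ∈ Dd (r t * m t), (1 - (X : PowerSeries ℤ) ^ x)) *
      ∏ x ∈ Dd (P * k * l), (1 - X ^ x)) * Q1
      = (∏ t, ∏ x ∈ Dd (r t), (1 - X ^ x)) * ∏ x ∈ Dd (P * k), (1 - X ^ x) := by
    rw [hQdecomp]
    calc ((∏ t, ∏ x ∈ Dd (r t * m t), (1 - (X : PowerSeries ℤ) ^ x)) *
        ∏ x ∈ Dd (P * k * l), (1 - X ^ x)) *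
        ((∏ x ∈ Dd (P * k) \ Dd (P * k * l), (1 - X ^ x)) *
          ∏ t, ∏ x ∈ Dd (r t) \ Dd (r t * m t), (1 - X ^ x))
        = ((∏ t, ∏ x ∈ Dd (r t * m t), (1 - X ^ x)) *
            ∏ t, ∏ x ∈ Dd (r t) \ Dd (r t * m t), (1 - X ^ x)) *
          ((∏ x ∈ Dd (P * k * l), (1 - X ^ x)) *
            ∏ x ∈ Dd (P * k) \ Dd (P * k * l), (1 - X ^ x)) := by ring
      _ = (∏ t, ((∏ x ∈ Dd (r t * m t), (1 - X ^ x)) *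
            ∏ x ∈ Dd (r t) \ Dd (r t * m t), (1 - X ^ x))) *
          ((∏ x ∈ Dd (P * k * l), (1 - X ^ x)) *
            ∏ x ∈ Dd (P * k) \ Dd (P * k * l), (1 - X ^ x)) := by
          rw [Finset.prod_mul_distrib]
      _ = (∏ t, ∏ x ∈ Dd (r t), (1 - X ^ x)) * ∏ x ∈ Dd (P * k), (1 - X ^ x) := by
          rw [hA2, Finset.prod_congr rfl fun t _ => hA1 t]
  have hTkey : TEq n (P2 * Q1) P1 := by
    refine ((hT2.mul (TEq.refl (n := n) (f := Q1))).trans ?_).trans hT1.symm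
    rw [heqq]
    exact TEq.refl
  have hcc : constantCoeff (P1 * Q1) = 1 := by
    have c1 : constantCoeff P1 = 1 := by
      rw [hP1def, map_prod]
      refine Finset.prod_eq_one fun i hi => ?_
      rw [map_mul, map_prod,
        Finset.prod_eq_one fun t _ =>
          constantCoeff_one_sub_pow (Nat.mul_pos (hr t) (hs0pos i hi)),
        constantCoeff_one_sub_pow (Nat.mul_pos (Nat.mul_pos hP hk) (hs0pos i hi)), mul_one]
    have c2 : constantCoeff Q1 = 1 := by
      rw [hQ1def, map_prod]
      refine Finset.prod_eq_one fun x hx => ?_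
      exact constantCoeff_one_sub_pow (hs0pos x (Finset.mem_filter.1 hx).1)
    rw [map_mul, c1, c2, mul_one]
  have hfin : TEq n (LHSGF * (P1 * Q1)) (RHSGF * (P1 * Q1)) := by
    rw [← mul_assoc, hexact1]
    have hr2 : RHSGF * (P1 * Q1) = P1 * (RHSGF * Q1) := by ring
    rw [hr2, hexact2, mul_one]
    exact hTkey
  have hco := (TEq.cancel hcc hfin) n le_rfl
  have hfinal : (partP A n : ℤ) = (partQ B n : ℤ) := by rw [hL, hR]; exact hco
  exact_mod_cast hfinal
end
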